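/- arXiv:1804.09091 — 7 statements merged into one kernel-verified Lean document; each statement's English description precedes it below -/
import Mathlib

section
/- For n ≥ 2 and d ≥ 1, a finite subset S of the positive integers is the β-set of an (n, dn-1)-core partition with distinct parts if and only if: (iv) S ⊆ {(i-1)n + j : 1 ≤ i ≤ d, 1 ≤ j ≤ n-2} ∪ {in - 1 : 1 ≤ i ≤ d-1}; (v) if in + j ∈ S with i ≥ 1 and 1 ≤ j ≤ n-1, then (i-1)n + j ∈ S; and (vi) if j ∈ S with 1 ≤ j ≤ n-2, then j+1 ∉ S. -/
def hook (Y : YoungDiagram) (i j : ℕ) : ℕ :=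
  (Y.rowLen i - j) + (Y.colLen j - i) - 1

def IsCore (Y : YoungDiagram) (t : ℕ) : Prop :=
  ∀ c ∈ Y.cells, ¬ (t ∣ hook Y c.1 c.2)

def DistinctParts (Y : YoungDiagram) : Prop :=
  ∀ i : ℕ, 0 < Y.rowLen (i + 1) → Y.rowLen (i + 1) < Y.rowLen i

def betaSet (Y : YoungDiagram) : Finset ℕ :=
  (Finset.range (Y.colLen 0)).image (fun i => Y.rowLen i + (Y.colLen 0 - 1 - i))

namespace BetaAux
variable {Y : YoungDiagram} {n d : ℕ} {S : Finset ℕ}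

lemma mem_betaSet {b : ℕ} :
    b ∈ betaSet Y ↔ ∃ i, i < Y.colLen 0 ∧ b = Y.rowLen i + (Y.colLen 0 - 1 - i) := by
  simp [betaSet, eq_comm]

lemma colLen_le (j : ℕ) : Y.colLen j ≤ Y.colLen 0 := Y.colLen_anti 0 j (Nat.zero_le _)

lemma xnotin (j : ℕ) : Y.colLen 0 - Y.colLen j + j ∉ betaSet Y := by
  rw [mem_betaSet]
  rintro ⟨k, hk, heq⟩
  have hcell : j < Y.rowLen k ↔ k < Y.colLen j := by
    rw [← YoungDiagram.mem_iff_lt_rowLen, YoungDiagram.mem_iff_lt_colLen]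
  have hc := colLen_le (Y := Y) j
  omega

lemma hook_eq {i j : ℕ} (hm : (i, j) ∈ Y) :
    hook Y i j = (Y.rowLen i + (Y.colLen 0 - 1 - i)) - (Y.colLen 0 - Y.colLen j + j) := by
  have h1 : j < Y.rowLen i := YoungDiagram.mem_iff_lt_rowLen.mp hm
  have h2 : i < Y.colLen j := YoungDiagram.mem_iff_lt_colLen.mp hm
  have hc := colLen_le (Y := Y) j
  unfold hook; omega

lemma surj {i x : ℕ} (hi : i < Y.colLen 0)
    (hx : x < Y.rowLen i + (Y.colLen 0 - 1 - i)) (hxb : x ∉ betaSet Y) :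
    ∃ j, j < Y.rowLen i ∧ x = Y.colLen 0 - Y.colLen j + j := by
  set L := Y.colLen 0 with hL
  set P : ℕ → Prop := fun j => L - Y.colLen j + j ≤ x with hP
  have hP0 : P 0 := by simp [hP]; omega
  set j := Nat.findGreatest P x with hj
  have hPj : P j := Nat.findGreatest_spec (Nat.zero_le x) hP0
  have hcj := colLen_le (Y := Y) j
  have hcj1 := colLen_le (Y := Y) (j + 1)
  -- maximality
  have hmax : x < L - Y.colLen (j + 1) + (j + 1) ∨ x = L - Y.colLen j + j := by
    by_cases hjx : j + 1 ≤ x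
    · left
      have := Nat.findGreatest_is_greatest (P := P) (n := x) (k := j + 1) (by omega) hjx
      simpa [hP] using this
    · right
      simp only [hP] at hPj
      have hjb : j ≤ x := Nat.findGreatest_le x
      omega
  -- key: j < rowLen i in the equality case
  have hjlt : x = L - Y.colLen j + j → j < Y.rowLen i := by
    intro hxe
    by_contra hge
    have : (i, j) ∉ Y := by
      rw [YoungDiagram.mem_iff_lt_rowLen]; omega
    rw [YoungDiagram.mem_iff_lt_colLen] at this
    omega
  rcases hmax with hlt | heq
  · -- x strictly between x_j and x_{j+1}: show x ∈ betaSet, contradiction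
    rcases Nat.eq_or_lt_of_le hPj with heq | hxlt
    · exact ⟨j, hjlt heq.symm, heq.symm⟩
    exfalso
    apply hxb
    rw [mem_betaSet]
    refine ⟨L + j - x, by omega, ?_⟩
    have hkc : L + j - x < Y.colLen j := by omega
    have hmem : (L + j - x, j) ∈ Y := YoungDiagram.mem_iff_lt_colLen.mpr hkc
    have hnmem : (L + j - x, j + 1) ∉ Y := by
      rw [YoungDiagram.mem_iff_lt_colLen]; omega
    have hr1 : j < Y.rowLen (L + j - x) := YoungDiagram.mem_iff_lt_rowLen.mp hmem
    have hr2 : ¬ (j + 1 < Y.rowLen (L + j - x)) := by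
      rw [← YoungDiagram.mem_iff_lt_rowLen]; exact hnmem
    omega
  · exact ⟨j, hjlt heq, heq⟩

lemma isCore_iff {t : ℕ} (ht : 0 < t) :
    IsCore Y t ↔ ∀ b ∈ betaSet Y, t ≤ b → b - t ∈ betaSet Y := by
  constructor
  · intro hcore b hb htb
    by_contra hnb
    rw [mem_betaSet] at hb
    obtain ⟨i, hi, rfl⟩ := hb
    obtain ⟨j, hj, hxe⟩ := surj hi (by omega) hnb
    have hmem : (i, j) ∈ Y := YoungDiagram.mem_iff_lt_rowLen.mpr hj
    apply hcore (i, j) ((YoungDiagram.mem_cells _).mpr hmem)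
    have := hook_eq hmem
    have hxle : Y.colLen 0 - Y.colLen j + j ≤ Y.rowLen i + (Y.colLen 0 - 1 - i) := by omega
    have : hook Y i j = t := by omega
    rw [this]
  · intro hcl c hc hdvd
    obtain ⟨i, j⟩ := c
    dsimp only at hdvd
    rw [YoungDiagram.mem_cells] at hc
    have h1 : j < Y.rowLen i := YoungDiagram.mem_iff_lt_rowLen.mp hc
    have h2 : i < Y.colLen j := YoungDiagram.mem_iff_lt_colLen.mp hc
    have hc0 := colLen_le (Y := Y) j
    have hhe := hook_eq hc
    have hpos : 0 < hook Y i j := by unfold hook; omega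
    obtain ⟨k, hk⟩ := hdvd
    have hk1 : 1 ≤ k := by
      rcases Nat.eq_zero_or_pos k with h | h
      · subst h; rw [Nat.mul_zero] at hk; omega
      · exact h
    have hxle : Y.colLen 0 - Y.colLen j + j ≤ Y.rowLen i + (Y.colLen 0 - 1 - i) := by omega
    rw [hk] at hhe
    have hbeq : Y.rowLen i + (Y.colLen 0 - 1 - i) = (Y.colLen 0 - Y.colLen j + j) + t * k := by
      omega
    have hchain : ∀ r, r ≤ k →
        (Y.rowLen i + (Y.colLen 0 - 1 - i)) - r * t ∈ betaSet Y := by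
      intro r
      induction r with
      | zero => intro _; simp only [Nat.zero_mul, Nat.sub_zero]
                exact mem_betaSet.mpr ⟨i, by omega, rfl⟩
      | succ r ih =>
        intro hr
        have hb' := ih (by omega)
        have hge : t ≤ (Y.rowLen i + (Y.colLen 0 - 1 - i)) - r * t := by
          have : (r + 1) * t ≤ t * k := by
            calc (r+1) * t ≤ k * t := Nat.mul_le_mul_right t hr
            _ = t * k := Nat.mul_comm _ _
          have h2 : (r + 1) * t = r * t + t := by ring
          omega
        have := hcl _ hb' hge
        have harr : (Y.rowLen i + (Y.colLen 0 - 1 - i)) - r * t - t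
            = (Y.rowLen i + (Y.colLen 0 - 1 - i)) - (r + 1) * t := by
          have h2 : (r + 1) * t = r * t + t := by ring
          omega
        rwa [harr] at this
    have := hchain k le_rfl
    have hxj : (Y.rowLen i + (Y.colLen 0 - 1 - i)) - k * t = Y.colLen 0 - Y.colLen j + j := by
      have : t * k = k * t := Nat.mul_comm _ _
      omega
    rw [hxj] at this
    exact xnotin j this

lemma beta_strict {i k : ℕ} (hik : i < k) (hk : k < Y.colLen 0) :
    Y.rowLen k + (Y.colLen 0 - 1 - k) < Y.rowLen i + (Y.colLen 0 - 1 - i) := by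
  have := Y.rowLen_anti i k (le_of_lt hik)
  have hpos : 0 < Y.rowLen k := by
    rw [← YoungDiagram.mem_iff_lt_rowLen, YoungDiagram.mem_iff_lt_colLen]
    exact hk
  omega

lemma distinct_iff :
    DistinctParts Y ↔ ∀ b ∈ betaSet Y, b + 1 ∉ betaSet Y := by
  constructor
  · intro hd b hb hb1
    rw [mem_betaSet] at hb hb1
    obtain ⟨k, hk, hbk⟩ := hb
    obtain ⟨i, hi, hbi⟩ := hb1
    have hik : i < k := by
      by_contra h
      rcases Nat.lt_or_ge k i with h' | h'
      · have := beta_strict (Y := Y) h' hi; omega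
      · have hik2 : i = k := by omega
        subst hik2
        omega
    have hk1 : k = i + 1 := by
      by_contra h
      have h1 := beta_strict (Y := Y) (show i < i + 1 by omega) (by omega)
      have h2 := beta_strict (Y := Y) (show i + 1 < k by omega) hk
      omega
    subst hk1
    have hpos : 0 < Y.rowLen (i + 1) := by
      rw [← YoungDiagram.mem_iff_lt_rowLen, YoungDiagram.mem_iff_lt_colLen]
      exact hk
    have := hd i hpos
    omega
  · intro h i hpos
    have hi1 : i + 1 < Y.colLen 0 := by
      rw [← YoungDiagram.mem_iff_lt_colLen, YoungDiagram.mem_iff_lt_rowLen]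
      exact hpos
    have hle := Y.rowLen_anti i (i + 1) (by omega)
    rcases Nat.lt_or_ge (Y.rowLen (i+1)) (Y.rowLen i) with h' | h'
    · exact h'
    exfalso
    have heq : Y.rowLen (i + 1) = Y.rowLen i := by omega
    apply h (Y.rowLen (i+1) + (Y.colLen 0 - 1 - (i+1))) (mem_betaSet.mpr ⟨i+1, hi1, rfl⟩)
    exact mem_betaSet.mpr ⟨i, by omega, by omega⟩

lemma no_mult (hS : 0 ∉ S) (hn : 1 ≤ n) (cl : ∀ b ∈ S, n ≤ b → b - n ∈ S) :
    ∀ x ∈ S, ¬ (n ∣ x) := by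
  intro x
  induction x using Nat.strong_induction_on with
  | _ x ih =>
    intro hx hdvd
    have hx0 : x ≠ 0 := fun h => hS (h ▸ hx)
    have hxn : n ≤ x := Nat.le_of_dvd (by omega) hdvd
    have hmem := cl x hx hxn
    exact ih (x - n) (by omega) hmem (Nat.dvd_sub hdvd dvd_rfl)

lemma chain (cl : ∀ b ∈ S, n ≤ b → b - n ∈ S) :
    ∀ k x, x ∈ S → k * n ≤ x → x - k * n ∈ S := by
  intro k
  induction k with
  | zero => intro x hx _; simpa using hx
  | succ k ih =>
    intro x hx hkx
    have h1 : (k + 1) * n = k * n + n := by ring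
    have h2 := ih x hx (by omega)
    have h3 := cl _ h2 (by omega)
    have h4 : x - k * n - n = x - (k + 1) * n := by omega
    rwa [h4] at h3

lemma forward_iv (hS : 0 ∉ S) (hn : 2 ≤ n) (hd : 1 ≤ d)
    (gap : ∀ b ∈ S, b + 1 ∉ S)
    (cln : ∀ b ∈ S, n ≤ b → b - n ∈ S)
    (clm : ∀ b ∈ S, d * n - 1 ≤ b → b - (d * n - 1) ∈ S) :
    ∀ x ∈ S, (∃ i j : ℕ, 1 ≤ i ∧ i ≤ d ∧ 1 ≤ j ∧ j ≤ n - 2 ∧ x = (i - 1) * n + j) ∨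
      (∃ i : ℕ, 1 ≤ i ∧ i ≤ d - 1 ∧ x = i * n - 1) := by
  obtain ⟨d', rfl⟩ : ∃ d', d = d' + 1 := ⟨d - 1, by omega⟩
  intro x hx
  have hnm := no_mult hS (by omega) cln x hx
  obtain ⟨q, j, hrep, hjn⟩ : ∃ q j, q * n + j = x ∧ j < n :=
    ⟨x / n, x % n, by rw [Nat.mul_comm]; exact Nat.div_add_mod x n, Nat.mod_lt x (by omega)⟩
  have hj0 : j ≠ 0 := by
    rintro rfl
    exact hnm ⟨q, by rw [Nat.mul_comm]; omega⟩
  have edn : (d' + 1) * n = d' * n + n := by ring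
  rcases Nat.lt_or_ge j (n - 1) with hcase | hcase
  · -- j ≤ n - 2
    left
    have hqd : q ≤ d' := by
      by_contra hqd
      obtain ⟨q', rfl⟩ : ∃ q', q = d' + 1 + q' := ⟨q - (d' + 1), by omega⟩
      have e1 : (d' + 1 + q') * n = (d' + 1) * n + q' * n := by ring
      have hxm : (d' + 1) * n - 1 ≤ x := by omega
      have h1 := clm x hx hxm
      have h2 : x - ((d' + 1) * n - 1) = q' * n + j + 1 := by omega
      rw [h2] at h1
      have h3 := chain cln (d' + 1) x hx (by omega)
      have h4 : x - (d' + 1) * n = q' * n + j := by omega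
      rw [h4] at h3
      exact gap _ h3 h1
    exact ⟨q + 1, j, by omega, by omega, by omega, by omega, by simp; omega⟩
  · -- j = n - 1
    have hjeq : j = n - 1 := by omega
    right
    have hqd : q + 1 ≤ d' := by
      by_contra hqd
      obtain ⟨q'', rfl⟩ : ∃ q'', q = d' + q'' := ⟨q - d', by omega⟩
      have e1 : (d' + q'') * n = d' * n + q'' * n := by ring
      have hxm : (d' + 1) * n - 1 ≤ x := by omega
      have h1 := clm x hx hxm
      have h2 : x - ((d' + 1) * n - 1) = q'' * n := by omega
      rw [h2] at h1
      rcases Nat.eq_zero_or_pos q'' with rfl | hq''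
      · simp at h1; exact hS h1
      · exact no_mult hS (by omega) cln _ h1 ⟨q'', Nat.mul_comm _ _⟩
    refine ⟨q + 1, by omega, by omega, ?_⟩
    have e2 : (q + 1) * n = q * n + n := by ring
    omega

lemma back_res (hn : 2 ≤ n)
    (hiv : ∀ x ∈ S, (∃ i j : ℕ, 1 ≤ i ∧ i ≤ d ∧ 1 ≤ j ∧ j ≤ n - 2 ∧ x = (i - 1) * n + j) ∨
      (∃ i : ℕ, 1 ≤ i ∧ i ≤ d - 1 ∧ x = i * n - 1)) :
    ∀ x ∈ S, ∃ q jj, 1 ≤ jj ∧ jj ≤ n - 1 ∧ x = q * n + jj := by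
  intro x hx
  rcases hiv x hx with ⟨i, j, hi1, hid, hj1, hj2, rfl⟩ | ⟨i, hi1, hid, rfl⟩
  · exact ⟨i - 1, j, by omega, by omega, rfl⟩
  · obtain ⟨i', rfl⟩ : ∃ i', i = i' + 1 := ⟨i - 1, by omega⟩
    have e : (i' + 1) * n = i' * n + n := by ring
    exact ⟨i', n - 1, by omega, by omega, by omega⟩

lemma back_base (hn : 2 ≤ n)
    (hv : ∀ i j : ℕ, 1 ≤ i → 1 ≤ j → j ≤ n - 1 → i * n + j ∈ S → (i - 1) * n + j ∈ S) :
    ∀ q jj, 1 ≤ jj → jj ≤ n - 1 → q * n + jj ∈ S → jj ∈ S := by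
  intro q
  induction q with
  | zero => intro jj _ _ h; simpa using h
  | succ q ih =>
    intro jj h1 h2 h3
    have := hv (q + 1) jj (by omega) h1 h2 h3
    simp only [Nat.add_sub_cancel] at this
    exact ih jj h1 h2 this

lemma back_gap (hn : 2 ≤ n)
    (hiv : ∀ x ∈ S, (∃ i j : ℕ, 1 ≤ i ∧ i ≤ d ∧ 1 ≤ j ∧ j ≤ n - 2 ∧ x = (i - 1) * n + j) ∨
      (∃ i : ℕ, 1 ≤ i ∧ i ≤ d - 1 ∧ x = i * n - 1))
    (hv : ∀ i j : ℕ, 1 ≤ i → 1 ≤ j → j ≤ n - 1 → i * n + j ∈ S → (i - 1) * n + j ∈ S)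
    (hvi : ∀ j : ℕ, 1 ≤ j → j ≤ n - 2 → j ∈ S → j + 1 ∉ S) :
    ∀ b ∈ S, b + 1 ∉ S := by
  intro b hb hb1
  obtain ⟨q, jj, hjj1, hjj2, rfl⟩ := back_res hn hiv b hb
  obtain ⟨q', jj', hjj1', hjj2', he⟩ := back_res hn hiv _ hb1
  have hm1 : (q * n + jj) % n = jj := by
    rw [Nat.mul_comm, Nat.mul_add_mod]; exact Nat.mod_eq_of_lt (by omega)
  have hm2 : (q' * n + jj') % n = jj' := by
    rw [Nat.mul_comm, Nat.mul_add_mod]; exact Nat.mod_eq_of_lt (by omega)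
  have hjlt : jj + 1 ≤ n - 1 := by
    by_contra h
    have hjeq : jj + 1 = n := by omega
    have : (q * n + jj + 1) % n = 0 := by
      have : q * n + jj + 1 = (q + 1) * n := by rw [Nat.add_mul]; omega
      rw [this, Nat.mul_comm, Nat.mul_mod_right]
    rw [← he] at hm2
    omega
  have hj' : jj' = jj + 1 := by
    have h1 : (q * n + jj + 1) % n = jj + 1 := by
      have e : q * n + jj + 1 = q * n + (jj + 1) := by omega
      rw [e, Nat.mul_comm, Nat.mul_add_mod]
      exact Nat.mod_eq_of_lt (by omega)
    rw [← he] at hm2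
    omega
  have hj1 := back_base hn hv q jj hjj1 hjj2 hb
  have hj2 := back_base hn hv q' jj' hjj1' hjj2' (he ▸ hb1)
  rw [hj'] at hj2
  exact hvi jj hjj1 (by omega) hj1 hj2

lemma back_cln (hn : 2 ≤ n)
    (hiv : ∀ x ∈ S, (∃ i j : ℕ, 1 ≤ i ∧ i ≤ d ∧ 1 ≤ j ∧ j ≤ n - 2 ∧ x = (i - 1) * n + j) ∨
      (∃ i : ℕ, 1 ≤ i ∧ i ≤ d - 1 ∧ x = i * n - 1))
    (hv : ∀ i j : ℕ, 1 ≤ i → 1 ≤ j → j ≤ n - 1 → i * n + j ∈ S → (i - 1) * n + j ∈ S) :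
    ∀ b ∈ S, n ≤ b → b - n ∈ S := by
  intro b hb hnb
  obtain ⟨q, jj, hjj1, hjj2, rfl⟩ := back_res hn hiv b hb
  have hq1 : 1 ≤ q := by
    by_contra h
    have : q = 0 := by omega
    subst this
    simp at hb hnb ⊢
    omega
  have := hv q jj hq1 hjj1 hjj2 hb
  obtain ⟨q', rfl⟩ : ∃ q', q = q' + 1 := ⟨q - 1, by omega⟩
  simp only [Nat.add_sub_cancel] at this
  have e : (q' + 1) * n = q' * n + n := by ring
  have e2 : q' * n + jj = (q' + 1) * n + jj - n := by omega
  rwa [e2] at this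

lemma back_clm (hn : 2 ≤ n) (hd : 1 ≤ d)
    (hiv : ∀ x ∈ S, (∃ i j : ℕ, 1 ≤ i ∧ i ≤ d ∧ 1 ≤ j ∧ j ≤ n - 2 ∧ x = (i - 1) * n + j) ∨
      (∃ i : ℕ, 1 ≤ i ∧ i ≤ d - 1 ∧ x = i * n - 1)) :
    ∀ b ∈ S, d * n - 1 ≤ b → b - (d * n - 1) ∈ S := by
  intro b hb hmb
  exfalso
  obtain ⟨d', rfl⟩ : ∃ d', d = d' + 1 := ⟨d - 1, by omega⟩
  have edn : (d' + 1) * n = d' * n + n := by ring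
  rcases hiv b hb with ⟨i, j, hi1, hid, hj1, hj2, rfl⟩ | ⟨i, hi1, hid, rfl⟩
  · have h1 : (i - 1) * n ≤ d' * n := Nat.mul_le_mul_right n (by omega)
    omega
  · have h1 : i * n ≤ d' * n := Nat.mul_le_mul_right n (by omega)
    have h2 : 1 ≤ i * n := by
      have : 1 * 1 ≤ i * n := Nat.mul_le_mul hi1 (by omega)
      omega
    omega

lemma exists_Y (S : Finset ℕ) (hS : 0 ∉ S) : ∃ Y : YoungDiagram, betaSet Y = S := by
  classical
  set ℓ := S.card with hℓ
  set f : Fin ℓ ↪o ℕ := S.orderEmbOfFin rfl with hf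
  have hfmem : ∀ m : Fin ℓ, f m ∈ S := fun m => S.orderEmbOfFin_mem rfl m
  have hfm : ∀ m (h : m < ℓ), m + 1 ≤ f ⟨m, h⟩ := by
    intro m
    induction m with
    | zero => intro h
              have := hfmem ⟨0, h⟩
              rcases Nat.eq_zero_or_pos (f ⟨0, h⟩) with h0 | h0
              · rw [h0] at this; exact absurd this hS
              · omega
    | succ m ih =>
      intro h
      have h1 : m < ℓ := by omega
      have h2 : f ⟨m, h1⟩ < f ⟨m + 1, h⟩ := f.strictMono (by simp)
      have := ih h1
      omega
  have hstep : ∀ (a b : ℕ) (ha : a < ℓ) (hb : b < ℓ), a ≤ b →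
      f ⟨a, ha⟩ + (b - a) ≤ f ⟨b, hb⟩ := by
    intro a b
    induction b with
    | zero => intro ha hb hab
              have : a = 0 := by omega
              subst this; simp
    | succ b ih =>
      intro ha hb hab
      rcases Nat.eq_or_lt_of_le hab with he | hlt
      · subst he; simp
      · have hb' : b < ℓ := by omega
        have := ih ha hb' (by omega)
        have h2 : f ⟨b, hb'⟩ < f ⟨b + 1, hb⟩ := f.strictMono (by simp)
        omega
  set g : ℕ → ℕ := fun i => if h : i < ℓ then f ⟨ℓ - 1 - i, by omega⟩ - (ℓ - 1 - i) else 0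
    with hg
  have hg_pos : ∀ i, i < ℓ → 0 < g i := by
    intro i hi
    simp only [hg, dif_pos hi]
    have := hfm (ℓ - 1 - i) (by omega)
    omega
  have hg_anti : ∀ i i', i ≤ i' → g i' ≤ g i := by
    intro i i' hii
    by_cases hi' : i' < ℓ
    · have hi : i < ℓ := by omega
      simp only [hg, dif_pos hi', dif_pos hi]
      have := hstep (ℓ - 1 - i') (ℓ - 1 - i) (by omega) (by omega) (by omega)
      have h1 := hfm (ℓ - 1 - i') (by omega)
      omega
    · simp only [hg, dif_neg hi']
      omega
  set cells : Finset (ℕ × ℕ) :=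
    (Finset.range ℓ ×ˢ Finset.range (g 0)).filter (fun c => c.2 < g c.1) with hcells
  have hmemc : ∀ i j : ℕ, ((i, j) ∈ cells) ↔ i < ℓ ∧ j < g i := by
    intro i j
    simp only [hcells, Finset.mem_filter, Finset.mem_product, Finset.mem_range]
    constructor
    · rintro ⟨⟨h1, h2⟩, h3⟩; exact ⟨h1, h3⟩
    · rintro ⟨h1, h2⟩
      exact ⟨⟨h1, lt_of_lt_of_le h2 (hg_anti 0 i (Nat.zero_le _))⟩, h2⟩
  set Y : YoungDiagram := ⟨cells, by
    rintro ⟨i1, j1⟩ ⟨i2, j2⟩ ⟨hle1, hle2⟩ hmem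
    rw [Finset.mem_coe, hmemc] at hmem ⊢
    obtain ⟨h1, h2⟩ := hmem
    exact ⟨by omega, lt_of_lt_of_le (lt_of_le_of_lt hle2 h2) (hg_anti i2 i1 hle1)⟩⟩ with hY
  have hYmem : ∀ i j : ℕ, ((i, j) ∈ Y) ↔ i < ℓ ∧ j < g i := by
    intro i j
    rw [← YoungDiagram.mem_cells]
    exact hmemc i j
  have hrow : ∀ i, Y.rowLen i = g i := by
    intro i
    have hiff : ∀ jj : ℕ, jj < Y.rowLen i ↔ (i < ℓ ∧ jj < g i) := by
      intro jj
      rw [← YoungDiagram.mem_iff_lt_rowLen]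
      exact hYmem i jj
    by_cases hi : i < ℓ
    · have h1 : ¬ (g i < Y.rowLen i) := fun h => by
        have := (hiff (g i)).mp h; omega
      have h2 : ¬ (Y.rowLen i < g i) := fun h => by
        have := (hiff (Y.rowLen i)).mpr ⟨hi, h⟩; omega
      omega
    · have hgz : g i = 0 := by simp [hg, dif_neg hi]
      have h1 : ¬ (0 < Y.rowLen i) := fun h => by
        have := (hiff 0).mp h; omega
      omega
  have hcol : Y.colLen 0 = ℓ := by
    have hiff : ∀ ii : ℕ, ii < Y.colLen 0 ↔ ii < ℓ := by
      intro ii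
      rw [← YoungDiagram.mem_iff_lt_colLen]
      rw [hYmem ii 0]
      constructor
      · rintro ⟨h1, _⟩; exact h1
      · intro h1; exact ⟨h1, hg_pos ii h1⟩
    have h1 := hiff ℓ
    have h2 := hiff (Y.colLen 0)
    omega
  refine ⟨Y, ?_⟩
  ext b
  rw [mem_betaSet, hcol]
  constructor
  · rintro ⟨i, hi, rfl⟩
    rw [hrow]
    have hgi : g i = f ⟨ℓ - 1 - i, by omega⟩ - (ℓ - 1 - i) := by simp [hg, dif_pos hi]
    have hfge := hfm (ℓ - 1 - i) (by omega)
    have : g i + (ℓ - 1 - i) = f ⟨ℓ - 1 - i, by omega⟩ := by omega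
    rw [this]
    exact hfmem _
  · intro hb
    have : b ∈ Set.range f := by rw [Finset.range_orderEmbOfFin]; exact hb
    obtain ⟨⟨m, hm⟩, rfl⟩ := this
    refine ⟨ℓ - 1 - m, by omega, ?_⟩
    rw [hrow]
    have hi : ℓ - 1 - m < ℓ := by omega
    have hgi : g (ℓ - 1 - m) = f ⟨ℓ - 1 - (ℓ - 1 - m), by omega⟩ - (ℓ - 1 - (ℓ - 1 - m)) := by
      simp [hg, dif_pos hi]
    have hmm : ℓ - 1 - (ℓ - 1 - m) = m := by omega
    have hfeq : f ⟨ℓ - 1 - (ℓ - 1 - m), by omega⟩ = f ⟨m, hm⟩ := congrArg f (Fin.ext hmm)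
    rw [hfeq] at hgi
    have hfge := hfm m hm
    omega

end BetaAux

open BetaAux

theorem stmt10 (n d : ℕ) (hn : 2 ≤ n) (hd : 1 ≤ d) (S : Finset ℕ) (hS : 0 ∉ S) :
    (∃ Y : YoungDiagram, DistinctParts Y ∧ IsCore Y n ∧ IsCore Y (d * n - 1) ∧
        betaSet Y = S) ↔
      ((∀ x ∈ S, (∃ i j : ℕ, 1 ≤ i ∧ i ≤ d ∧ 1 ≤ j ∧ j ≤ n - 2 ∧ x = (i - 1) * n + j) ∨
          (∃ i : ℕ, 1 ≤ i ∧ i ≤ d - 1 ∧ x = i * n - 1)) ∧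
       (∀ i j : ℕ, 1 ≤ i → 1 ≤ j → j ≤ n - 1 → i * n + j ∈ S → (i - 1) * n + j ∈ S) ∧
       (∀ j : ℕ, 1 ≤ j → j ≤ n - 2 → j ∈ S → j + 1 ∉ S)) := by
  have hmn : 2 ≤ d * n := le_trans hn (Nat.le_mul_of_pos_left n hd)
  constructor
  · rintro ⟨Y, hdist, hcn, hcm, rfl⟩
    have gap := distinct_iff.mp hdist
    have cln := (isCore_iff (Y := Y) (t := n) (by omega)).mp hcn
    have clm := (isCore_iff (Y := Y) (t := d * n - 1) (by omega)).mp hcm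
    refine ⟨forward_iv hS hn hd gap cln clm, ?_, fun j _ h2 h3 => gap j h3⟩
    intro i j hi hj1 hj2 hmem
    have hin : 1 * n ≤ i * n := Nat.mul_le_mul_right n hi
    have h := cln _ hmem (by omega)
    obtain ⟨i', rfl⟩ : ∃ i', i = i' + 1 := ⟨i - 1, by omega⟩
    have e : (i' + 1) * n = i' * n + n := by ring
    have e2 : (i' + 1) * n + j - n = i' * n + j := by omega
    rw [e2] at h
    simpa using h
  · rintro ⟨hiv, hv, hvi⟩
    obtain ⟨Y, hbeta⟩ := exists_Y S hS
    subst hbeta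
    exact ⟨Y, distinct_iff.mpr (back_gap hn hiv hv hvi),
      (isCore_iff (by omega)).mpr (back_cln hn hiv hv),
      (isCore_iff (by omega)).mpr (back_clm hn hd hiv), rfl⟩
end

section
/- The generating function of the number of nice subsets of A(d,n) equals (dq+1)/(1-q-dq^2); that is, the sum over n ≥ 0 of |B(d,n)| q^n = (dq+1)/(1-q-dq^2), where B(d,n) is the set of nice subsets of the d × n grid. -/
def gridA (d n : ℕ) : Finset (ℕ × ℕ) := Finset.Icc 1 d ×ˢ Finset.Icc 1 n

def Nice (d n : ℕ) (I : Finset (ℕ × ℕ)) : Prop :=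
  I ⊆ gridA d n ∧
  (∀ i j : ℕ, 1 ≤ i → (i + 1, j) ∈ I → (i, j) ∈ I) ∧
  (∀ j : ℕ, 1 ≤ j → j ≤ n - 1 → (1, j) ∈ I → (1, j + 1) ∉ I)

noncomputable def Gcount (d n : ℕ) : ℕ := {I : Finset (ℕ × ℕ) | Nice d n I}.ncard

open Classical in
noncomputable def niceFinset (d n : ℕ) : Finset (Finset (ℕ × ℕ)) :=
  (gridA d n).powerset.filter (fun I => Nice d n I)

lemma mem_niceFinset {d n : ℕ} {I : Finset (ℕ × ℕ)} :
    I ∈ niceFinset d n ↔ Nice d n I := by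
  classical
  simp only [niceFinset, Finset.mem_filter, Finset.mem_powerset]
  exact ⟨fun h => h.2, fun h => ⟨h.1, h⟩⟩

lemma Gcount_eq (d n : ℕ) : Gcount d n = (niceFinset d n).card := by
  rw [Gcount, ← Set.ncard_coe_finset]
  congr 1
  ext I
  simp [mem_niceFinset]

lemma mem_grid {d n : ℕ} {I : Finset (ℕ × ℕ)} (h : Nice d n I) {i j : ℕ}
    (hij : (i, j) ∈ I) : 1 ≤ i ∧ i ≤ d ∧ 1 ≤ j ∧ j ≤ n := by
  have := h.1 hij
  simp only [gridA, Finset.mem_product, Finset.mem_Icc] at this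
  exact ⟨this.1.1, this.1.2, this.2.1, this.2.2⟩

lemma prefix_mem {d n : ℕ} {I : Finset (ℕ × ℕ)} (h : Nice d n I) {i j k : ℕ}
    (hij : (i, j) ∈ I) (hk1 : 1 ≤ k) (hki : k ≤ i) : (k, j) ∈ I := by
  induction i with
  | zero => omega
  | succ i ih =>
    rcases eq_or_lt_of_le hki with rfl | hlt
    · exact hij
    · have hi1 : 1 ≤ i := by omega
      exact ih (h.2.1 i j hi1 hij) (by omega)

/-- If column `c` of a nice set is nonempty, it equals `[1, k]` for some `1 ≤ k ≤ d`. -/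
lemma column_eq {d n : ℕ} {I : Finset (ℕ × ℕ)} (h : Nice d n I) (c : ℕ)
    (hne : ∃ i, (i, c) ∈ I) :
    ∃ k, 1 ≤ k ∧ k ≤ d ∧ ∀ i, ((i, c) ∈ I ↔ 1 ≤ i ∧ i ≤ k) := by
  classical
  obtain ⟨i₀, hi₀⟩ := hne
  set T : Finset ℕ := (I.filter (fun p => p.2 = c)).image Prod.fst with hT
  have hTmem : ∀ i, i ∈ T ↔ (i, c) ∈ I := by
    intro i
    simp only [hT, Finset.mem_image, Finset.mem_filter]
    constructor
    · rintro ⟨⟨a, b⟩, ⟨hab, hb⟩, rfl⟩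
      simp only at hb; subst hb; exact hab
    · intro hi; exact ⟨(i, c), ⟨hi, rfl⟩, rfl⟩
  have hTne : T.Nonempty := ⟨i₀, (hTmem i₀).2 hi₀⟩
  refine ⟨T.max' hTne, ?_, ?_, ?_⟩
  · have := (hTmem _).1 (T.max'_mem hTne)
    exact (mem_grid h this).1
  · have := (hTmem _).1 (T.max'_mem hTne)
    exact (mem_grid h this).2.1
  · intro i
    constructor
    · intro hi
      exact ⟨(mem_grid h hi).1, T.le_max' i ((hTmem i).2 hi)⟩
    · rintro ⟨h1, h2⟩
      exact prefix_mem h ((hTmem _).1 (T.max'_mem hTne)) h1 h2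

lemma Gcount_zero (d : ℕ) : Gcount d 0 = 1 := by
  rw [Gcount_eq]
  have : niceFinset d 0 = {∅} := by
    ext I
    simp only [mem_niceFinset, Finset.mem_singleton]
    constructor
    · intro h
      have hsub := h.1
      have : gridA d 0 = ∅ := by simp [gridA]
      rw [this, Finset.subset_empty] at hsub
      exact hsub
    · rintro rfl
      exact ⟨by simp, fun i j _ hij => absurd hij (by simp), fun j _ _ hj => absurd hj (by simp)⟩
  rw [this]; rfl

lemma Gcount_one (d : ℕ) : Gcount d 1 = d + 1 := by
  classical
  rw [Gcount_eq]
  have himg : niceFinset d 1 =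
      (Finset.Icc 0 d).image (fun k => Finset.Icc 1 k ×ˢ ({1} : Finset ℕ)) := by
    ext I
    simp only [mem_niceFinset, Finset.mem_image, Finset.mem_Icc]
    constructor
    · intro h
      by_cases hne : ∃ i, (i, 1) ∈ I
      · obtain ⟨k, hk1, hkd, hcol⟩ := column_eq h 1 hne
        refine ⟨k, ⟨Nat.zero_le _, hkd⟩, ?_⟩
        ext ⟨i, j⟩
        simp only [Finset.mem_product, Finset.mem_Icc, Finset.mem_singleton]
        constructor
        · rintro ⟨hi, rfl⟩
          exact (hcol i).2 hi
        · intro hij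
          have hg := mem_grid h hij
          have hj1 : j = 1 := by omega
          subst hj1
          exact ⟨(hcol i).1 hij, rfl⟩
      · refine ⟨0, ⟨le_refl _, Nat.zero_le _⟩, ?_⟩
        push_neg at hne
        ext ⟨i, j⟩
        simp only [Finset.mem_product, Finset.mem_Icc, Finset.mem_singleton]
        constructor
        · rintro ⟨hi, rfl⟩; omega
        · intro hij
          have hg := mem_grid h hij
          have hj1 : j = 1 := by omega
          subst hj1
          exact absurd hij (hne i)
    · rintro ⟨k, ⟨-, hkd⟩, rfl⟩
      refine ⟨?_, ?_, ?_⟩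
      · intro ⟨i, j⟩ hij
        simp only [Finset.mem_product, Finset.mem_Icc, Finset.mem_singleton] at hij
        simp only [gridA, Finset.mem_product, Finset.mem_Icc]
        omega
      · intro i j hi hij
        simp only [Finset.mem_product, Finset.mem_Icc, Finset.mem_singleton] at hij ⊢
        omega
      · intro j hj1 hj0
        omega
  have hc : ∀ k : ℕ, (Finset.Icc 1 k ×ˢ ({1} : Finset ℕ)).card = k := fun k => by
    rw [Finset.card_product]; simp
  have hinj : Set.InjOn (fun k => Finset.Icc 1 k ×ˢ ({1} : Finset ℕ)) ↑(Finset.Icc 0 d) := by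
    intro a _ b _ hab
    have := congrArg Finset.card hab
    simpa [hc] using this
  rw [himg, Finset.card_image_of_injOn hinj, Nat.card_Icc]
  omega

lemma nice_succ_of_nice {d n : ℕ} {I : Finset (ℕ × ℕ)} (h : Nice d n I) :
    Nice d (n + 1) I := by
  obtain ⟨hsub, h2, h3⟩ := h
  refine ⟨?_, h2, ?_⟩
  · intro p hp
    have := hsub hp
    simp only [gridA, Finset.mem_product, Finset.mem_Icc] at this ⊢
    omega
  · intro j hj1 hj hmem
    by_cases hjn : j ≤ n - 1
    · exact h3 j hj1 hjn hmem
    · -- j = n, so (1, n+1) ∉ I since I ⊆ gridA d n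
      intro hcon
      have := mem_grid ⟨hsub, h2, h3⟩ hcon
      omega

lemma Gcount_rec (d n : ℕ) :
    Gcount d (n + 2) = Gcount d (n + 1) + d * Gcount d n := by
  classical
  -- split nice sets of A(d, n+2) by whether column n+2 is empty
  have hsplit : niceFinset d (n + 2) =
      (niceFinset d (n + 2)).filter (fun I => ∀ i, (i, n + 2) ∉ I) ∪
      (niceFinset d (n + 2)).filter (fun I => ∃ i, (i, n + 2) ∈ I) := by
    rw [← Finset.filter_or]
    rw [Finset.filter_true_of_mem]
    intro I _
    by_cases h : ∃ i, (i, n + 2) ∈ I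
    · exact Or.inr h
    · push_neg at h; exact Or.inl h
  have hdisj : Disjoint
      ((niceFinset d (n + 2)).filter (fun I => ∀ i, (i, n + 2) ∉ I))
      ((niceFinset d (n + 2)).filter (fun I => ∃ i, (i, n + 2) ∈ I)) := by
    rw [Finset.disjoint_left]
    intro I h1 h2
    simp only [Finset.mem_filter] at h1 h2
    obtain ⟨i, hi⟩ := h2.2
    exact h1.2 i hi
  -- the empty-last-column part is niceFinset d (n+1)
  have hA : (niceFinset d (n + 2)).filter (fun I => ∀ i, (i, n + 2) ∉ I) =
      niceFinset d (n + 1) := by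
    ext I
    simp only [Finset.mem_filter, mem_niceFinset]
    constructor
    · rintro ⟨⟨hsub, h2, h3⟩, hemp⟩
      refine ⟨?_, h2, ?_⟩
      · intro ⟨i, j⟩ hij
        have hg := mem_grid ⟨hsub, h2, h3⟩ hij
        have hjne : j ≠ n + 2 := fun hj => hemp i (hj ▸ hij)
        simp only [gridA, Finset.mem_product, Finset.mem_Icc]
        omega
      · intro j hj1 hj hmem
        exact h3 j hj1 (by omega) hmem
    · intro h
      refine ⟨nice_succ_of_nice h, fun i hi => ?_⟩
      have := mem_grid h hi
      omega
  -- the nonempty-last-column part is in bijection with Icc 1 d ×ˢ niceFinset d n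
  have hB : (niceFinset d (n + 2)).filter (fun I => ∃ i, (i, n + 2) ∈ I) =
      (Finset.Icc 1 d ×ˢ niceFinset d n).image
        (fun p => p.2 ∪ Finset.Icc 1 p.1 ×ˢ ({n + 2} : Finset ℕ)) := by
    ext I
    simp only [Finset.mem_filter, mem_niceFinset, Finset.mem_image, Finset.mem_product,
      Finset.mem_Icc]
    constructor
    · rintro ⟨h, hne⟩
      obtain ⟨k, hk1, hkd, hcol⟩ := column_eq h (n + 2) hne
      -- column n+1 is empty
      have h1top : (1, n + 2) ∈ I := (hcol 1).2 ⟨le_refl _, hk1⟩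
      have hmid : ∀ i, (i, n + 1) ∉ I := by
        intro i hi
        have h1 : (1, n + 1) ∈ I := prefix_mem h hi le_rfl (mem_grid h hi).1
        exact h.2.2 (n + 1) (by omega) (by omega) h1 h1top
      set J := I.filter (fun p => p.2 ≠ n + 2) with hJ
      have hJsub : J ⊆ gridA d n := by
        intro ⟨i, j⟩ hij
        simp only [hJ, Finset.mem_filter] at hij
        have hg := mem_grid h hij.1
        have hne2 : j ≠ n + 2 := hij.2
        have hne1 : j ≠ n + 1 := fun hc => hmid i (hc ▸ hij.1)
        simp only [gridA, Finset.mem_product, Finset.mem_Icc]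
        omega
      have hJnice : Nice d n J := by
        refine ⟨hJsub, ?_, ?_⟩
        · intro i j hi hij
          simp only [hJ, Finset.mem_filter] at hij ⊢
          exact ⟨h.2.1 i j hi hij.1, hij.2⟩
        · intro j hj1 hj hmem hcon
          simp only [hJ, Finset.mem_filter] at hmem hcon
          exact h.2.2 j hj1 (by omega) hmem.1 hcon.1
      refine ⟨⟨k, J⟩, ⟨⟨hk1, hkd⟩, hJnice⟩, ?_⟩
      -- show J ∪ Icc 1 k × {n+2} = I
      ext ⟨i, j⟩
      simp only [Finset.mem_union, hJ, Finset.mem_filter, Finset.mem_product,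
        Finset.mem_Icc, Finset.mem_singleton]
      constructor
      · rintro (⟨hij, -⟩ | ⟨hik, rfl⟩)
        · exact hij
        · exact (hcol i).2 hik
      · intro hij
        by_cases hjc : j = n + 2
        · subst hjc
          exact Or.inr ⟨(hcol i).1 hij, rfl⟩
        · exact Or.inl ⟨hij, hjc⟩
    · rintro ⟨⟨k, J⟩, ⟨⟨hk1, hkd⟩, hJ⟩, rfl⟩
      dsimp only at hJ hk1 hkd ⊢
      have hnice : Nice d (n + 2) (J ∪ Finset.Icc 1 k ×ˢ ({n + 2} : Finset ℕ)) := by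
        refine ⟨?_, ?_, ?_⟩
        · intro ⟨i, j⟩ hij
          simp only [Finset.mem_union, Finset.mem_product, Finset.mem_Icc,
            Finset.mem_singleton] at hij
          simp only [gridA, Finset.mem_product, Finset.mem_Icc]
          rcases hij with hij | ⟨hik, rfl⟩
          · have := mem_grid hJ hij; omega
          · omega
        · intro i j hi hij
          simp only [Finset.mem_union, Finset.mem_product, Finset.mem_Icc,
            Finset.mem_singleton] at hij ⊢
          rcases hij with hij | ⟨hik, rfl⟩
          · exact Or.inl (hJ.2.1 i j hi hij)
          · exact Or.inr ⟨by omega, rfl⟩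
        · intro j hj1 hj hmem hcon
          simp only [Finset.mem_union, Finset.mem_product, Finset.mem_Icc,
            Finset.mem_singleton] at hmem hcon
          rcases hmem with hmem | ⟨-, hje⟩
          · have hgj := mem_grid hJ hmem
            rcases hcon with hcon | ⟨-, hje⟩
            · have := mem_grid hJ hcon
              by_cases hjn : j ≤ n - 1
              · exact hJ.2.2 j hj1 hjn hmem hcon
              · omega
            · omega
          · omega
      refine ⟨hnice, ⟨1, ?_⟩⟩
      simp only [Finset.mem_union, Finset.mem_product, Finset.mem_Icc, Finset.mem_singleton]
      exact Or.inr ⟨⟨le_rfl, hk1⟩, trivial⟩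
  have hinj : Set.InjOn (fun p : ℕ × Finset (ℕ × ℕ) =>
      p.2 ∪ Finset.Icc 1 p.1 ×ˢ ({n + 2} : Finset ℕ))
      ↑(Finset.Icc 1 d ×ˢ niceFinset d n) := by
    rintro ⟨k, J⟩ hkJ ⟨k', J'⟩ hkJ' hab
    simp only [Finset.coe_product, Set.mem_prod, Finset.mem_coe, Finset.mem_Icc,
      mem_niceFinset] at hkJ hkJ'
    simp only at hab
    obtain ⟨⟨hk1, hkd⟩, hJn⟩ := hkJ
    obtain ⟨⟨hk1', hkd'⟩, hJn'⟩ := hkJ'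
    have hnot : ∀ {K : Finset (ℕ × ℕ)}, Nice d n K → ∀ i, (i, n + 2) ∉ K := by
      intro K hK i hi
      have := mem_grid hK hi
      omega
    have hmm : ∀ i j, ((i, j) ∈ J ∪ Finset.Icc 1 k ×ˢ ({n + 2} : Finset ℕ) ↔
        (i, j) ∈ J' ∪ Finset.Icc 1 k' ×ˢ ({n + 2} : Finset ℕ)) := fun i j => by rw [hab]
    have hkk : k = k' := by
      have h1 := hmm k (n + 2)
      have h2 := hmm k' (n + 2)
      simp only [Finset.mem_union, Finset.mem_product, Finset.mem_Icc,
        Finset.mem_singleton] at h1 h2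
      have e1 := h1.1 (Or.inr ⟨⟨hk1, le_rfl⟩, trivial⟩)
      have e2 := h2.2 (Or.inr ⟨⟨hk1', le_rfl⟩, trivial⟩)
      rcases e1 with e1 | ⟨⟨-, e1⟩, -⟩
      · exact absurd e1 (hnot hJn' k)
      rcases e2 with e2 | ⟨⟨-, e2⟩, -⟩
      · exact absurd e2 (hnot hJn k')
      omega
    subst hkk
    have hJJ : J = J' := by
      ext ⟨i, j⟩
      have h1 := hmm i j
      simp only [Finset.mem_union, Finset.mem_product, Finset.mem_Icc,
        Finset.mem_singleton] at h1
      constructor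
      · intro hij
        have hg := mem_grid hJn hij
        rcases h1.1 (Or.inl hij) with h | ⟨-, h⟩
        · exact h
        · omega
      · intro hij
        have hg := mem_grid hJn' hij
        rcases h1.2 (Or.inl hij) with h | ⟨-, h⟩
        · exact h
        · omega
    rw [hJJ]
  rw [Gcount_eq, Gcount_eq, Gcount_eq, hsplit, Finset.card_union_of_disjoint hdisj, hA, hB,
    Finset.card_image_of_injOn hinj, Finset.card_product, Nat.card_Icc]
  congr 2


theorem stmt12 (d : ℕ) (hd : 1 ≤ d) :
    PowerSeries.mk (fun n => (Gcount d n : ℚ)) =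
      ((d : PowerSeries ℚ) * PowerSeries.X + 1) *
        (1 - PowerSeries.X - (d : PowerSeries ℚ) * PowerSeries.X ^ 2)⁻¹ := by
  have hC : (d : PowerSeries ℚ) = PowerSeries.C (d : ℚ) := by push_cast; rfl
  rw [hC]
  have hu : PowerSeries.constantCoeff
      (1 - PowerSeries.X - PowerSeries.C (d : ℚ) * PowerSeries.X ^ 2) ≠ 0 := by
    simp
  rw [PowerSeries.eq_mul_inv_iff_mul_eq hu]
  set F := PowerSeries.mk (fun n => (Gcount d n : ℚ)) with hF
  have hexp : F * (1 - PowerSeries.X - PowerSeries.C (d : ℚ) * PowerSeries.X ^ 2) =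
      F - F * PowerSeries.X - PowerSeries.C (d : ℚ) * (F * PowerSeries.X ^ 2) := by ring
  rw [hexp]
  ext n
  rcases n with _ | _ | n
  · simp only [map_sub, PowerSeries.coeff_C_mul, PowerSeries.coeff_mul_X_pow',
      PowerSeries.coeff_zero_eq_constantCoeff, map_add, map_mul, map_one]
    simp [hF, Gcount_zero]
  · simp only [map_sub, map_add, PowerSeries.coeff_C_mul, PowerSeries.coeff_succ_mul_X,
      PowerSeries.coeff_mul_X_pow', PowerSeries.coeff_one, PowerSeries.coeff_X, hF,
      PowerSeries.coeff_mk]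
    norm_num [Gcount_zero, Gcount_one]
  · have hR : (PowerSeries.coeff (n + 2)) ((PowerSeries.C (d : ℚ)) * PowerSeries.X + 1)
        = 0 := by
      simp [PowerSeries.coeff_one, PowerSeries.coeff_X, PowerSeries.coeff_C_mul]
      rw [hC, PowerSeries.coeff_C]
      simp
    rw [show n + 1 + 1 = n + 2 from rfl, hR]
    simp only [map_sub, PowerSeries.coeff_C_mul]
    rw [show n + 2 = (n + 1) + 1 from rfl, PowerSeries.coeff_succ_mul_X,
      show (n + 1) + 1 = n + 2 from rfl, PowerSeries.coeff_mul_X_pow]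
    simp only [hF, PowerSeries.coeff_mk]
    rw [Gcount_rec]
    push_cast
    ring
end

section
/- For positive integers d and k, the formal power series 1/(1-q-dq^2)^k equals the sum over i from 1 to k of [binom(2k-1-i, k-1) d^{k-i} / (1+4d)^{(2k-i)/2}] times the sum over n ≥ 0 of binom(n+i-1, i-1)(x_d^{n+i} + (-1)^i y_d^{n+i}) q^n, where x_d = (1+√(1+4d))/2 and y_d = (1-√(1+4d))/2. -/
open Finset PowerSeries

open Finset

lemma Tstep {R : Type*} [CommRing R] (p q : R) (h : p + q = 1) (k : ℕ) (hk : 1 ≤ k) :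
    p * ∑ j ∈ range (k+1), ((k+j).choose j : R) * p^(k+1) * q^j =
    p * (∑ j ∈ range k, ((k-1+j).choose j : R) * p^k * q^j
      + ((2*k-1).choose k : R) * p^k * q^k - ((2*k).choose k : R) * p^k * q^(k+1)) := by
  have hS : (∑ j ∈ range (k+1), ((k+j).choose j : R) * q^j) * p =
      ∑ j ∈ range k, ((k-1+j).choose j : R) * q^j
        + ((2*k-1).choose k : R) * q^k - ((2*k).choose k : R) * q^(k+1) := by
    have peel : ∑ j ∈ range (k+1), ((k+j).choose j : R) * q^j
        = 1 + ∑ j ∈ range k, ((k+1+j).choose (j+1) : R) * q^(j+1) := by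
      conv_lhs => rw [Finset.sum_range_succ']
      rw [add_comm]
      congr 1
      · simp
      · apply Finset.sum_congr rfl; intro j hj
        have e : k + (j+1) = k+1+j := by omega
        rw [e]
    have pascal : ∀ j : ℕ, ((k+1+j).choose (j+1) : R)
        = ((k+j).choose (j+1) : R) + ((k+j).choose j : R) := by
      intro j
      have h2 : (k+1+j).choose (j+1) = (k+j).choose (j+1) + (k+j).choose j := by
        rw [show k+1+j = (k+j)+1 from by omega, Nat.choose_succ_succ]; exact Nat.add_comm _ _
      rw [h2]; push_cast; ring
    have split : ∑ j ∈ range (k+1), ((k+j).choose j : R) * q^j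
        = (1 + ∑ j ∈ range k, ((k+j).choose (j+1) : R) * q^(j+1))
          + q * ∑ j ∈ range k, ((k+j).choose j : R) * q^j := by
      rw [peel, Finset.mul_sum, add_assoc, ← Finset.sum_add_distrib]
      congr 1; apply Finset.sum_congr rfl; intro j hj
      rw [pascal]; ring
    have reidx : (1 : R) + ∑ j ∈ range k, ((k+j).choose (j+1) : R) * q^(j+1)
        = ∑ j ∈ range (k+1), ((k-1+j).choose j : R) * q^j := by
      conv_rhs => rw [Finset.sum_range_succ', add_comm]
      congr 1
      · simp
      · apply Finset.sum_congr rfl; intro j hj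
        have e : k - 1 + (j+1) = k+j := by omega
        rw [e]
    have tailA : ∑ j ∈ range (k+1), ((k-1+j).choose j : R) * q^j
        = ∑ j ∈ range k, ((k-1+j).choose j : R) * q^j + ((2*k-1).choose k : R) * q^k := by
      rw [Finset.sum_range_succ]
      have e : k - 1 + k = 2*k - 1 := by omega
      rw [e]
    have aux : ∑ j ∈ range (k+1), ((k+j).choose j : R) * q^j
        = ∑ j ∈ range k, ((k+j).choose j : R) * q^j + ((2*k).choose k : R) * q^k := by
      rw [Finset.sum_range_succ]; congr 3; ring
    have key := split
    rw [reidx, tailA] at key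
    have hp : p = 1 - q := by rw [← h]; ring
    rw [hp]
    linear_combination key - q * aux
  have e0 : ∑ j ∈ range (k+1), ((k+j).choose j : R) * p^(k+1) * q^j
      = p^(k+1) * ∑ j ∈ range (k+1), ((k+j).choose j : R) * q^j := by
    rw [Finset.mul_sum]; exact Finset.sum_congr rfl fun j _ => by ring
  have e1 : p * (∑ j ∈ range k, ((k-1+j).choose j : R) * p^k * q^j)
      = p^(k+1) * ∑ j ∈ range k, ((k-1+j).choose j : R) * q^j := by
    rw [Finset.mul_sum, Finset.mul_sum]; exact Finset.sum_congr rfl fun j _ => by ring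
  linear_combination p * e0 + p^(k+1) * hS - e1

lemma nb {R : Type*} [CommRing R] [IsDomain R] (p q : R) (hp : p ≠ 0) (hq : q ≠ 0)
    (h : p + q = 1) : ∀ k : ℕ, 1 ≤ k →
    ∑ j ∈ range k, ((k-1+j).choose j : R) * (p^k * q^j + q^k * p^j) = 1 := by
  intro k
  induction k with
  | zero => omega
  | succ k ih =>
    intro _
    rcases Nat.eq_or_lt_of_le (Nat.one_le_iff_ne_zero.mpr (Nat.succ_ne_zero k)) with h1 | h1
    · -- k+1 = 1
      have : k = 0 := by omega
      subst this
      simpa using h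
    · have hk : 1 ≤ k := by omega
      have Tp : ∑ j ∈ range (k+1), ((k+j).choose j : R) * p^(k+1) * q^j =
          ∑ j ∈ range k, ((k-1+j).choose j : R) * p^k * q^j
            + ((2*k-1).choose k : R) * p^k * q^k - ((2*k).choose k : R) * p^k * q^(k+1) :=
        mul_left_cancel₀ hp (Tstep p q h k hk)
      have Tq : ∑ j ∈ range (k+1), ((k+j).choose j : R) * q^(k+1) * p^j =
          ∑ j ∈ range k, ((k-1+j).choose j : R) * q^k * p^j
            + ((2*k-1).choose k : R) * q^k * p^k - ((2*k).choose k : R) * q^k * p^(k+1) :=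
        mul_left_cancel₀ hq (Tstep q p (by rw [← h]; ring) k hk)
      have hcent : ((2*k).choose k : R) = 2 * ((2*k-1).choose k : R) := by
        have e1 : (2*k).choose k = (2*k-1).choose (k-1) + (2*k-1).choose k := by
          rw [show 2*k = (2*k-1)+1 from by omega, show k = (k-1)+1 from by omega,
            Nat.choose_succ_succ]
          congr 2 <;> omega
        have e2 : (2*k-1).choose (k-1) = (2*k-1).choose k := by
          rw [← Nat.choose_symm (by omega : k - 1 ≤ 2*k-1)]
          congr 1; omega
        rw [e1, e2]; push_cast; ring
      have hsplit : ∀ (a b : R) (m : ℕ),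
          ∑ j ∈ range m, ((m-1+j).choose j : R) * (a^m * b^j + b^m * a^j)
            = ∑ j ∈ range m, ((m-1+j).choose j : R) * a^m * b^j
              + ∑ j ∈ range m, ((m-1+j).choose j : R) * b^m * a^j := by
        intro a b m
        rw [← Finset.sum_add_distrib]
        exact Finset.sum_congr rfl fun j _ => by ring
      have split2 : ∑ j ∈ range (k+1), ((k+j).choose j : R) * (p^(k+1) * q^j + q^(k+1) * p^j)
          = ∑ j ∈ range (k+1), ((k+j).choose j : R) * p^(k+1) * q^j
            + ∑ j ∈ range (k+1), ((k+j).choose j : R) * q^(k+1) * p^j := by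
        rw [← Finset.sum_add_distrib]
        exact Finset.sum_congr rfl fun j _ => by ring
      have hAB := (hsplit p q k).symm.trans (ih hk)
      simp only [Nat.add_sub_cancel]
      rw [split2, Tp, Tq]
      linear_combination hAB - p^k*q^k*hcent - ((2*k).choose k : R)*p^k*q^k*h

open PowerSeries Finset

noncomputable def NB (a : ℝ) (i : ℕ) : PowerSeries ℝ :=
  PowerSeries.mk (fun n => ((n+i).choose i : ℝ) * a^n)

lemma one_sub_mul_mk (a : ℝ) (f : ℕ → ℝ) :
    (1 - PowerSeries.C (R := ℝ) a * X) * PowerSeries.mk f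
      = PowerSeries.mk (fun n => f n) - PowerSeries.C (R := ℝ) a * (X * PowerSeries.mk f) := by
  ring

lemma coeff_one_sub_mul (a : ℝ) (f : ℕ → ℝ) (n : ℕ) :
    (PowerSeries.coeff (R := ℝ) (n+1)) ((1 - PowerSeries.C (R := ℝ) a * X) * PowerSeries.mk f)
      = f (n+1) - a * f n := by
  rw [one_sub_mul_mk, map_sub, coeff_C_mul, coeff_succ_X_mul, coeff_mk, coeff_mk]

lemma coeff_zero_one_sub_mul (a : ℝ) (f : ℕ → ℝ) :
    (PowerSeries.coeff (R := ℝ) 0) ((1 - PowerSeries.C (R := ℝ) a * X) * PowerSeries.mk f) = f 0 := by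
  rw [one_sub_mul_mk, map_sub, coeff_C_mul]
  simp [PowerSeries.coeff_zero_eq_constantCoeff]

lemma NB_step (a : ℝ) (i : ℕ) :
    (1 - PowerSeries.C (R := ℝ) a * X) * NB a (i+1) = NB a i := by
  unfold NB
  ext n
  cases n with
  | zero =>
    rw [coeff_zero_one_sub_mul]
    simp [NB]
  | succ n =>
    rw [coeff_one_sub_mul]
    simp only [NB, coeff_mk]
    rw [show n+1+i = n+(i+1) from by omega]
    have e : (n+1+(i+1)).choose (i+1) = (n+(i+1)).choose (i+1) + (n+(i+1)).choose i := by
      rw [show n+1+(i+1) = (n+(i+1))+1 from by omega, Nat.choose_succ_succ]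
      exact Nat.add_comm _ _
    rw [e]
    push_cast
    ring

lemma NB_zero_inv (a : ℝ) : (1 - PowerSeries.C (R := ℝ) a * X) * NB a 0 = 1 := by
  unfold NB
  ext n
  cases n with
  | zero => rw [coeff_zero_one_sub_mul]; simp [NB]
  | succ n =>
    rw [coeff_one_sub_mul]
    simp only [PowerSeries.coeff_one, Nat.succ_ne_zero, if_false, Nat.choose_zero_right, Nat.cast_one, one_mul]
    ring

lemma NB_inv (a : ℝ) (i : ℕ) : (1 - PowerSeries.C (R := ℝ) a * X)^(i+1) * NB a i = 1 := by
  induction i with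
  | zero => rw [pow_one]; exact NB_zero_inv a
  | succ i ih =>
    calc (1 - PowerSeries.C (R := ℝ) a * X)^(i+2) * NB a (i+1)
        = (1 - PowerSeries.C (R := ℝ) a * X)^(i+1) * ((1 - PowerSeries.C (R := ℝ) a * X) * NB a (i+1)) := by
          ring
      _ = 1 := by rw [NB_step]; exact ih

lemma scal1 (x y s : ℝ) (hs : s ≠ 0) (χ dd : ℝ) (hdd : dd = -(x*y)) (i j : ℕ) :
    χ * dd^j / s^(i+j+j) * x^i = χ * ((x/s)^(i+j) * (-(y/s))^j) := by
  rw [hdd]; ring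

lemma scal2 (x y s : ℝ) (hs : s ≠ 0) (χ dd : ℝ) (hdd : dd = -(x*y)) (i j : ℕ) :
    χ * dd^j / s^(i+j+j) * ((-1:ℝ)^i * y^i) = χ * ((-(y/s))^(i+j) * (x/s)^j) := by
  rw [hdd]; ring

lemma mk_split (x y : ℝ) (i : ℕ) (hi : 1 ≤ i) :
    PowerSeries.mk (fun n => ((n+i-1).choose (i-1) : ℝ) * (x^(n+i) + (-1:ℝ)^i * y^(n+i)))
      = PowerSeries.C (R := ℝ) (x^i) * NB x (i-1) + PowerSeries.C (R := ℝ) ((-1:ℝ)^i * y^i) * NB y (i-1) := by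
  ext n
  simp only [coeff_mk, map_add, coeff_C_mul, NB]
  rw [show n + (i-1) = n + i - 1 from by omega,
    show x^(n+i) = x^i * x^n from by rw [pow_add]; ring,
    show y^(n+i) = y^i * y^n from by rw [pow_add]; ring]
  ring

lemma reindex {M : Type*} [AddCommMonoid M] (k : ℕ) (F : ℕ → M) :
    ∑ i ∈ Finset.Icc 1 k, F (k - i) = ∑ j ∈ Finset.range k, F j := by
  apply Finset.sum_nbij' (fun i => k - i) (fun j => k - j)
  · intro a ha; simp only [Finset.mem_Icc] at ha; simp only [Finset.mem_range]; omega
  · intro a ha; simp only [Finset.mem_range] at ha; simp only [Finset.mem_Icc]; omega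
  · intro a ha; simp only [Finset.mem_Icc] at ha; omega
  · intro a ha; simp only [Finset.mem_range] at ha; omega
  · intro a _; rfl

theorem stmt13 (d k : ℕ) (hd : 1 ≤ d) (hk : 1 ≤ k) :
    (((1 - PowerSeries.X - (d : PowerSeries ℝ) * PowerSeries.X ^ 2) ^ k))⁻¹ =
      ∑ i ∈ Finset.Icc 1 k,
        PowerSeries.C (R := ℝ)
            ((Nat.choose (2 * k - 1 - i) (k - 1) * (d : ℝ) ^ (k - i)) /
              (Real.sqrt (1 + 4 * d)) ^ (2 * k - i)) *
          PowerSeries.mk (fun n =>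
            (Nat.choose (n + i - 1) (i - 1) : ℝ) *
              (((1 + Real.sqrt (1 + 4 * d)) / 2) ^ (n + i) +
                (-1 : ℝ) ^ i * ((1 - Real.sqrt (1 + 4 * d)) / 2) ^ (n + i))) := by
  set s : ℝ := Real.sqrt (1 + 4 * d) with hs_def
  set x : ℝ := (1 + s) / 2 with hx_def
  set y : ℝ := (1 - s) / 2 with hy_def
  have h4d : (0:ℝ) < 1 + 4 * d := by positivity
  have hs2 : s ^ 2 = 1 + 4 * d := Real.sq_sqrt (le_of_lt h4d)
  have hs1 : 1 < s := by
    nlinarith [Real.sqrt_nonneg (1 + 4 * (d:ℝ)), (by exact_mod_cast hd : (1:ℝ) ≤ d)]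
  have hs0 : s ≠ 0 := by linarith
  have hx0 : x ≠ 0 := by rw [hx_def]; intro hc; nlinarith
  have hy0 : y ≠ 0 := by
    have : y < 0 := by rw [hy_def]; linarith
    linarith
  have hxy : x * y = -(d:ℝ) := by
    rw [hx_def, hy_def]
    linear_combination (-(1:ℝ)/4) * hs2
  have hxsum : x + y = 1 := by rw [hx_def, hy_def]; ring
  have hxmy : x - y = s := by rw [hx_def, hy_def]; ring
  set A : PowerSeries ℝ := 1 - PowerSeries.C (R := ℝ) x * X with hA_def
  set B : PowerSeries ℝ := 1 - PowerSeries.C (R := ℝ) y * X with hB_def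
  have hfac : 1 - X - (d : PowerSeries ℝ) * X ^ 2 = A * B := by
    rw [hA_def, hB_def, ← map_natCast (PowerSeries.C (R := ℝ)) d]
    have h1 : PowerSeries.C (R := ℝ) x + PowerSeries.C (R := ℝ) y = 1 := by
      rw [← map_add, hxsum, map_one]
    have h2 : PowerSeries.C (R := ℝ) x * PowerSeries.C (R := ℝ) y = -(PowerSeries.C (R := ℝ) (d:ℝ)) := by
      rw [← map_mul, hxy, map_neg]
    linear_combination (PowerSeries.X : PowerSeries ℝ) * h1 - (PowerSeries.X : PowerSeries ℝ)^2 * h2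
  have hconst : PowerSeries.constantCoeff (R := ℝ) ((1 - X - (d : PowerSeries ℝ) * X ^ 2) ^ k) ≠ 0 := by
    rw [map_pow]
    simp only [map_sub, map_one, map_mul, constantCoeff_X, map_natCast]
    norm_num
  rw [eq_comm, PowerSeries.eq_inv_iff_mul_eq_one hconst]
  set P : PowerSeries ℝ := PowerSeries.C (R := ℝ) (x/s) * B with hP_def
  set Q : PowerSeries ℝ := PowerSeries.C (R := ℝ) (-(y/s)) * A with hQ_def
  have hPQ : P + Q = 1 := by
    rw [hP_def, hQ_def, hA_def, hB_def]
    have h1 : PowerSeries.C (R := ℝ) (x/s) - PowerSeries.C (R := ℝ) (y/s) = 1 := by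
      rw [← map_sub, show x/s - y/s = 1 from by field_simp; linarith, map_one]
    have h2 : PowerSeries.C (R := ℝ) (x/s) * PowerSeries.C (R := ℝ) y - PowerSeries.C (R := ℝ) (y/s) * PowerSeries.C (R := ℝ) x = 0 := by
      rw [← map_mul, ← map_mul, ← map_sub, show x/s*y - y/s*x = 0 from by ring, map_zero]
    calc PowerSeries.C (R := ℝ) (x/s) * (1 - PowerSeries.C (R := ℝ) y * X)
          + PowerSeries.C (R := ℝ) (-(y/s)) * (1 - PowerSeries.C (R := ℝ) x * X)
        = (PowerSeries.C (R := ℝ) (x/s) - PowerSeries.C (R := ℝ) (y/s))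
          - (PowerSeries.C (R := ℝ) (x/s) * PowerSeries.C (R := ℝ) y
             - PowerSeries.C (R := ℝ) (y/s) * PowerSeries.C (R := ℝ) x) * X := by
          rw [map_neg]; ring
      _ = 1 := by rw [h1, h2]; ring
  have hBc : PowerSeries.constantCoeff (R := ℝ) B = 1 := by
    rw [hB_def]; simp [constantCoeff_X]
  have hAc : PowerSeries.constantCoeff (R := ℝ) A = 1 := by
    rw [hA_def]; simp [constantCoeff_X]
  have hPne : P ≠ 0 := by
    intro hc
    have := congrArg (PowerSeries.constantCoeff (R := ℝ)) hc
    rw [hP_def, map_mul, PowerSeries.constantCoeff_C, hBc, map_zero, mul_one] at this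
    exact (div_ne_zero hx0 hs0) this
  have hQne : Q ≠ 0 := by
    intro hc
    have := congrArg (PowerSeries.constantCoeff (R := ℝ)) hc
    rw [hQ_def, map_mul, PowerSeries.constantCoeff_C, hAc, map_zero, mul_one] at this
    have : y / s = 0 := by linarith [neg_eq_zero.mp this]
    exact (div_ne_zero hy0 hs0) this
  have hnb := nb P Q hPne hQne hPQ k hk
  rw [hfac, mul_pow, Finset.sum_mul]
  refine Eq.trans ?_ hnb
  rw [← reindex k (fun j => ((k-1+j).choose j : PowerSeries ℝ) * (P^k * Q^j + Q^k * P^j))]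
  apply Finset.sum_congr rfl
  intro i hi
  simp only [Finset.mem_Icc] at hi
  obtain ⟨j, rfl⟩ : ∃ j, k = i + j := ⟨k - i, by omega⟩
  rw [show i + j - i = j from by omega]
  rw [mk_split x y i hi.1]
  have hNx := NB_inv x (i-1)
  rw [show i-1+1 = i from by omega] at hNx
  have hNy := NB_inv y (i-1)
  rw [show i-1+1 = i from by omega] at hNy
  have hAk : A ^ (i+j) = A^j * A^i := by rw [← pow_add]; congr 1; omega
  have hBk : B ^ (i+j) = B^j * B^i := by rw [← pow_add]; congr 1; omega
  set c : ℝ := ((2*(i+j)-1-i).choose ((i+j)-1) : ℝ) * (d:ℝ)^j / s^(2*(i+j)-i) with hc_def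
  rw [← hA_def] at hNx
  rw [← hB_def] at hNy
  have hm1 : PowerSeries.C (R := ℝ) (c * x^i) = PowerSeries.C (R := ℝ) c * PowerSeries.C (R := ℝ) (x^i) :=
    map_mul _ _ _
  have hm2 : PowerSeries.C (R := ℝ) (c * ((-1:ℝ)^i * y^i))
      = PowerSeries.C (R := ℝ) c * PowerSeries.C (R := ℝ) ((-1:ℝ)^i * y^i) := map_mul _ _ _
  have step1 : PowerSeries.C (R := ℝ) c *
      (PowerSeries.C (R := ℝ) (x^i) * NB x (i-1) + PowerSeries.C (R := ℝ) ((-1:ℝ)^i * y^i) * NB y (i-1))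
      * (A^(i+j) * B^(i+j))
      = PowerSeries.C (R := ℝ) (c * x^i) * (A^j * B^(i+j))
        + PowerSeries.C (R := ℝ) (c * ((-1:ℝ)^i * y^i)) * (B^j * A^(i+j)) := by
    linear_combination (PowerSeries.C (R := ℝ) c * PowerSeries.C (R := ℝ) (x^i) * (A^j * B^(i+j))) * hNx
      + (PowerSeries.C (R := ℝ) c * PowerSeries.C (R := ℝ) ((-1:ℝ)^i * y^i) * (B^j * A^(i+j))) * hNy
      - (A^j * B^(i+j)) * hm1 - (B^j * A^(i+j)) * hm2
  rw [step1]
  have hPk : P^(i+j) * Q^j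
      = PowerSeries.C (R := ℝ) ((x/s)^(i+j)) * PowerSeries.C (R := ℝ) ((-(y/s))^j) * (B^(i+j) * A^j) := by
    rw [hP_def, hQ_def, mul_pow, mul_pow, ← map_pow, ← map_pow]
    ring
  have hQk : Q^(i+j) * P^j
      = PowerSeries.C (R := ℝ) ((-(y/s))^(i+j)) * PowerSeries.C (R := ℝ) ((x/s)^j) * (A^(i+j) * B^j) := by
    rw [hP_def, hQ_def, mul_pow, mul_pow, ← map_pow, ← map_pow]
    ring
  have hchoose : ((2*(i+j)-1-i).choose ((i+j)-1) : ℝ) = (((i+j)-1+j).choose j : ℝ) := by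
    have e1 : 2*(i+j)-1-i = (i+j)-1+j := by omega
    have e2 : ((i+j)-1+j).choose ((i+j)-1) = ((i+j)-1+j).choose j := by
      rw [← Nat.choose_symm (by omega : j ≤ (i+j)-1+j)]
      congr 1; omega
    rw [e1, e2]
  have hdxy : (d:ℝ) = -(x*y) := by linarith
  have scalar1 : c * x^i = (((i+j)-1+j).choose j : ℝ) * ((x/s)^(i+j) * (-(y/s))^j) := by
    rw [hc_def, hchoose, show 2*(i+j)-i = i+j+j from by omega]
    exact scal1 x y s hs0 _ _ hdxy i j
  have scalar2 : c * ((-1:ℝ)^i * y^i)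
      = (((i+j)-1+j).choose j : ℝ) * ((-(y/s))^(i+j) * (x/s)^j) := by
    rw [hc_def, hchoose, show 2*(i+j)-i = i+j+j from by omega]
    exact scal2 x y s hs0 _ _ hdxy i j
  have hm3 : PowerSeries.C (R := ℝ) ((((i+j)-1+j).choose j : ℝ) * ((x/s)^(i+j) * (-(y/s))^j))
      = PowerSeries.C (R := ℝ) ((((i+j)-1+j).choose j : ℝ)) * (PowerSeries.C (R := ℝ) ((x/s)^(i+j)) * PowerSeries.C (R := ℝ) ((-(y/s))^j)) := by
    rw [map_mul, map_mul]
  have hm4 : PowerSeries.C (R := ℝ) ((((i+j)-1+j).choose j : ℝ) * ((-(y/s))^(i+j) * (x/s)^j))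
      = PowerSeries.C (R := ℝ) ((((i+j)-1+j).choose j : ℝ)) * (PowerSeries.C (R := ℝ) ((-(y/s))^(i+j)) * PowerSeries.C (R := ℝ) ((x/s)^j)) := by
    rw [map_mul, map_mul]
  have hcast : ((((i+j)-1+j).choose j : ℕ) : PowerSeries ℝ)
      = PowerSeries.C (R := ℝ) ((((i+j)-1+j).choose j : ℕ) : ℝ) := (map_natCast _ _).symm
  rw [scalar1, scalar2, hm3, hm4, hPk, hQk, hcast]
  ring
end

section
/- The coefficient of q^n in 1/(1-q-dq^2)^2 equals (1/(4d+1))·((n+1)M_d(n+2) + (n+3)d·M_d(n)), where M_d is defined by M_d(0)=1, M_d(1)=d+1 (equivalently M_d(-1)=0), and M_d(n)=M_d(n-1)+d·M_d(n-2). -/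
open PowerSeries

private lemma coeff_aux (a : ℚ) (f : ℚ⟦X⟧) :
    (∀ k, coeff (k + 2) ((1 - X - C a * X ^ 2) * f)
        = coeff (k + 2) f - coeff (k + 1) f - a * coeff k f)
    ∧ coeff 0 ((1 - X - C a * X ^ 2) * f) = coeff 0 f
    ∧ coeff 1 ((1 - X - C a * X ^ 2) * f) = coeff 1 f - coeff 0 f := by
  have hexp : (1 - X - C a * X ^ 2) * f = f - X * f - C a * (X ^ 2 * f) := by ring
  refine ⟨fun k => ?_, ?_, ?_⟩
  · rw [hexp, map_sub, map_sub, coeff_succ_X_mul, coeff_C_mul, coeff_X_pow_mul]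
  · rw [hexp, map_sub, map_sub, coeff_C_mul]
    simp [coeff_X_pow_mul' f 2 0]
  · rw [hexp, map_sub, map_sub, coeff_C_mul, coeff_succ_X_mul]
    simp [coeff_X_pow_mul' f 2 1]

theorem stmt14 (d : ℕ) (hd : 1 ≤ d) (M : ℕ → ℚ) (hM0 : M 0 = 1) (hM1 : M 1 = 1)
    (hrec : ∀ n : ℕ, M (n + 2) = M (n + 1) + d * M n) (n : ℕ) :
    PowerSeries.coeff n
        ((1 - PowerSeries.X - (d : PowerSeries ℚ) * PowerSeries.X ^ 2) ^ 2)⁻¹ =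
      (1 / (4 * (d : ℚ) + 1)) * (((n : ℚ) + 1) * M (n + 2) + ((n : ℚ) + 3) * d * M n) := by
  have hD : (4 * (d : ℚ) + 1) ≠ 0 := by positivity
  set c : ℕ → ℚ := fun n =>
    (1 / (4 * (d : ℚ) + 1)) * (((n : ℚ) + 1) * M (n + 2) + ((n : ℚ) + 3) * d * M n) with hc
  set P : ℚ⟦X⟧ := 1 - X - C (d : ℚ) * X ^ 2 with hP
  have hPcast : (1 - X - (d : PowerSeries ℚ) * X ^ 2) = P := by
    rw [hP, map_natCast (C (R := ℚ)) d]
  -- Step 1 : P * mk M = 1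
  have h1 : P * PowerSeries.mk M = 1 := by
    ext k
    obtain ⟨hk2, hk0, hk1⟩ := coeff_aux (d : ℚ) (PowerSeries.mk M)
    match k with
    | 0 => rw [hP, hk0]; simp [hM0]
    | 1 => rw [hP, hk1]; simp [hM0, hM1]
    | (k + 2) =>
      rw [hP, hk2]
      simp only [coeff_mk, hrec k, coeff_one]
      ring_nf
      simp
  -- Step 2 : P * mk c = mk M
  have h2 : P * PowerSeries.mk c = PowerSeries.mk M := by
    ext k
    obtain ⟨hk2, hk0, hk1⟩ := coeff_aux (d : ℚ) (PowerSeries.mk c)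
    have hM2 : M 2 = 1 + d := by rw [hrec 0, hM0, hM1]; ring
    have hM3 : M 3 = 1 + 2 * d := by rw [hrec 1, hM1, hM2]; ring
    match k with
    | 0 =>
      rw [hP, hk0, coeff_mk, coeff_mk, hc]
      simp only [hM0, hM2]
      push_cast
      field_simp
      ring
    | 1 =>
      rw [hP, hk1, coeff_mk, coeff_mk, coeff_mk, hc]
      simp only [hM0, hM1, hM2, hM3]
      push_cast
      field_simp
      ring
    | (k + 2) =>
      rw [hP, hk2, coeff_mk, coeff_mk, coeff_mk, coeff_mk, hc]
      have e2 : M (k + 2) = M (k + 1) + d * M k := hrec k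
      have e3 : M (k + 3) = M (k + 2) + d * M (k + 1) := hrec (k + 1)
      have e4 : M (k + 4) = M (k + 3) + d * M (k + 2) := hrec (k + 2)
      have h4 : k + 2 + 2 = k + 4 := by ring
      have h3 : k + 1 + 2 = k + 3 := by ring
      beta_reduce
      rw [h4, h3, e4, e3, e2]
      push_cast
      field_simp
      ring
  -- Step 3 : P ^ 2 * mk c = 1
  have h3 : P ^ 2 * PowerSeries.mk c = 1 := by
    rw [sq, mul_assoc, h2, h1]
  have hconst : constantCoeff (P ^ 2) ≠ 0 := by
    have : constantCoeff (P ^ 2) = 1 := by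
      simp [hP, map_pow]
    rw [this]; exact one_ne_zero
  have h4 : PowerSeries.mk c = (P ^ 2)⁻¹ :=
    (PowerSeries.eq_inv_iff_mul_eq_one hconst).mpr (by rw [mul_comm]; exact h3)
  rw [hPcast, ← h4, coeff_mk]
end

section
/- The coefficient of q^n in 1/(1-q-dq^2)^3 equals (3d(n+1)/(4d+1)^2 + binom(n+2,2)/(4d+1))·M_d(n+2) + (3d^2(n+3)/(4d+1)^2)·M_d(n), where M_d satisfies M_d(-1)=0, M_d(0)=1, M_d(n)=M_d(n-1)+d·M_d(n-2). -/
open PowerSeries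

set_option maxHeartbeats 2000000

private lemma ch2 (k : ℕ) : ((Nat.choose (k + 2) 2 : ℕ) : ℚ) = ((k:ℚ) + 1) * ((k:ℚ) + 2) / 2 := by
  rw [Nat.cast_choose_two]
  push_cast
  ring

theorem stmt15 (d : ℕ) (hd : 1 ≤ d) (M : ℕ → ℚ) (hM0 : M 0 = 1) (hM1 : M 1 = 1)
    (hrec : ∀ n : ℕ, M (n + 2) = M (n + 1) + d * M n) (n : ℕ) :
    PowerSeries.coeff (R := ℚ) n
        ((1 - PowerSeries.X - (d : PowerSeries ℚ) * PowerSeries.X ^ 2) ^ 3)⁻¹ =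
      (3 * (d : ℚ) * ((n : ℚ) + 1) / (4 * (d : ℚ) + 1) ^ 2 +
          (Nat.choose (n + 2) 2 : ℚ) / (4 * (d : ℚ) + 1)) * M (n + 2) +
        (3 * (d : ℚ) ^ 2 * ((n : ℚ) + 3) / (4 * (d : ℚ) + 1) ^ 2) * M n := by
  have hs : (4 * (d : ℚ) + 1) ≠ 0 := by positivity
  set s : ℚ := 4 * (d : ℚ) + 1 with hs_def
  set f : ℕ → ℚ := fun k =>
    (3 * (d : ℚ) * ((k : ℚ) + 1) / s ^ 2 + ((k:ℚ) + 1) * ((k:ℚ) + 2) / 2 / s) * M (k + 2) +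
      (3 * (d : ℚ) ^ 2 * ((k : ℚ) + 3) / s ^ 2) * M k with hf
  set A : PowerSeries ℚ := 1 - PowerSeries.X - (d : PowerSeries ℚ) * PowerSeries.X ^ 2 with hA
  have hC : (d : PowerSeries ℚ) = PowerSeries.C (R := ℚ) (d : ℚ) := (map_natCast (PowerSeries.C (R := ℚ)) d).symm
  have hconst : PowerSeries.constantCoeff (R := ℚ) (A ^ 3) ≠ 0 := by
    rw [hA, hC]
    simp
  have m2 : M 2 = M 1 + (d:ℚ) * M 0 := hrec 0
  have m3 : M 3 = M 2 + (d:ℚ) * M 1 := hrec 1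
  have m4 : M 4 = M 3 + (d:ℚ) * M 2 := hrec 2
  have m5 : M 5 = M 4 + (d:ℚ) * M 3 := hrec 3
  have m6 : M 6 = M 5 + (d:ℚ) * M 4 := hrec 4
  have m7 : M 7 = M 6 + (d:ℚ) * M 5 := hrec 5
  have hmul : PowerSeries.mk f * A ^ 3 = 1 := by
    have hexp : PowerSeries.mk f * A ^ 3 =
        PowerSeries.mk f
          - PowerSeries.C (R := ℚ) 3 * (PowerSeries.mk f * PowerSeries.X ^ 1)
          + PowerSeries.C (R := ℚ) (3 - 3*(d:ℚ)) * (PowerSeries.mk f * PowerSeries.X ^ 2)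
          + PowerSeries.C (R := ℚ) (6*(d:ℚ) - 1) * (PowerSeries.mk f * PowerSeries.X ^ 3)
          + PowerSeries.C (R := ℚ) (3*(d:ℚ)^2 - 3*(d:ℚ)) * (PowerSeries.mk f * PowerSeries.X ^ 4)
          - PowerSeries.C (R := ℚ) (3*(d:ℚ)^2) * (PowerSeries.mk f * PowerSeries.X ^ 5)
          - PowerSeries.C (R := ℚ) ((d:ℚ)^3) * (PowerSeries.mk f * PowerSeries.X ^ 6) := by
      rw [hA, hC]
      simp only [map_sub, map_mul, map_pow, map_one, map_ofNat]
      ring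
    rw [hexp]
    ext N
    simp only [LinearMap.map_sub, LinearMap.map_add, PowerSeries.coeff_C_mul,
      PowerSeries.coeff_mul_X_pow', PowerSeries.coeff_mk, PowerSeries.coeff_one]
    rcases N with _|_|_|_|_|_|m
    · norm_num [hf]
      rw [m2, hM0, hM1]
      field_simp
      ring
    · norm_num [hf]
      simp only [m3, m2, hM0, hM1]
      field_simp
      ring
    · norm_num [hf]
      simp only [m4, m3, m2, hM0, hM1]
      field_simp
      ring
    · norm_num [hf]
      simp only [m5, m4, m3, m2, hM0, hM1]
      field_simp
      ring
    · norm_num [hf]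
      simp only [m6, m5, m4, m3, m2, hM0, hM1]
      field_simp
      ring
    · norm_num [hf]
      simp only [m7, m6, m5, m4, m3, m2, hM0, hM1]
      field_simp
      ring
    · -- N = m + 6
      have e1 : 1 ≤ m + 6 := by omega
      have e2 : 2 ≤ m + 6 := by omega
      have e3 : 3 ≤ m + 6 := by omega
      have e4 : 4 ≤ m + 6 := by omega
      have e5 : 5 ≤ m + 6 := by omega
      have e6 : 6 ≤ m + 6 := by omega
      rw [if_pos e1, if_pos e2, if_pos e3, if_pos e4, if_pos e5, if_pos e6,
        if_neg (by omega : ¬ (m + 6 = 0))]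
      have s1 : m + 6 - 1 = m + 5 := by omega
      have s2 : m + 6 - 2 = m + 4 := by omega
      have s3 : m + 6 - 3 = m + 3 := by omega
      have s4 : m + 6 - 4 = m + 2 := by omega
      have s5 : m + 6 - 5 = m + 1 := by omega
      have s6 : m + 6 - 6 = m := by omega
      rw [s1, s2, s3, s4, s5, s6]
      simp only [hf]
      have i2 : m + 6 + 2 = m + 8 := by omega
      have i3 : m + 5 + 2 = m + 7 := by omega
      have i4 : m + 4 + 2 = m + 6 := by omega
      have i5 : m + 3 + 2 = m + 5 := by omega
      have i6 : m + 2 + 2 = m + 4 := by omega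
      have i7 : m + 1 + 2 = m + 3 := by omega
      rw [i2, i3, i4, i5, i6, i7]
      have h2 := hrec m
      have h3 := hrec (m + 1)
      have h4 := hrec (m + 2)
      have h5 := hrec (m + 3)
      have h6 := hrec (m + 4)
      have h7 := hrec (m + 5)
      have h8 := hrec (m + 6)
      rw [(by omega : m + 1 + 2 = m + 3), (by omega : m + 1 + 1 = m + 2)] at h3
      rw [(by omega : m + 2 + 2 = m + 4), (by omega : m + 2 + 1 = m + 3)] at h4
      rw [(by omega : m + 3 + 2 = m + 5), (by omega : m + 3 + 1 = m + 4)] at h5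
      rw [(by omega : m + 4 + 2 = m + 6), (by omega : m + 4 + 1 = m + 5)] at h6
      rw [(by omega : m + 5 + 2 = m + 7), (by omega : m + 5 + 1 = m + 6)] at h7
      rw [(by omega : m + 6 + 2 = m + 8), (by omega : m + 6 + 1 = m + 7)] at h8
      rw [h8, h7, h6, h5, h4, h3, h2]
      push_cast
      field_simp
      ring
  have hinv : (A ^ 3)⁻¹ = PowerSeries.mk f :=
    ((PowerSeries.eq_inv_iff_mul_eq_one hconst).mpr hmul).symm
  rw [hinv, PowerSeries.coeff_mk, hf, ch2 n]
end

section
/- Let α = (1+√5)/2 and let G(a,b)(n) = Σ_{I nice ⊆ A(1,n)} σ_0(I)^a |I|^b with σ_0(I) = Σ_{(i,j)∈I} j. Then G(a,b)(n) = 2^{-a}·5^{-(a+b+1)/2}·n^{2a+b}·α^{n+2-a-b} + O(n^{2a+b-1}·α^n) as n → ∞. -/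
def sigmaW (m : ℕ) (I : Finset (ℕ × ℕ)) : ℕ := ∑ p ∈ I, ((p.1 - 1) * m + p.2)

open Finset

/-- nice subsets of `{1,…,n}` (no two consecutive) -/
def pathF (n : ℕ) : Finset (Finset ℕ) :=
  (Finset.Icc 1 n).powerset.filter (fun S => ∀ j ∈ S, j + 1 ∉ S)

noncomputable def Gf (a b : ℕ) (n : ℕ) : ℝ :=
  ∑ S ∈ pathF n, (∑ j ∈ S, (j : ℝ)) ^ a * (S.card : ℝ) ^ b

lemma emb_inj : Function.Injective (fun j : ℕ => ((1, j) : ℕ × ℕ)) := by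
  intro x y h; simpa using h

lemma nice_iff (n : ℕ) (I : Finset (ℕ × ℕ)) :
    Nice 1 n I ↔ ∃ S ∈ pathF n, I = S.image (fun j => (1, j)) := by
  constructor
  · rintro ⟨hsub, -, h3⟩
    refine ⟨I.image Prod.snd, ?_, ?_⟩
    · have hmem : ∀ p ∈ I, p.1 = 1 ∧ p.2 ∈ Finset.Icc 1 n := by
        intro p hp
        have := hsub hp
        simp only [gridA, Finset.mem_product, Finset.mem_Icc] at this
        exact ⟨le_antisymm this.1.2 this.1.1, by simp [Finset.mem_Icc, this.2]⟩
      simp only [pathF, Finset.mem_filter, Finset.mem_powerset]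
      constructor
      · intro j hj
        simp only [Finset.mem_image] at hj
        obtain ⟨p, hp, rfl⟩ := hj
        exact (hmem p hp).2
      · intro j hj hj1
        simp only [Finset.mem_image] at hj hj1
        obtain ⟨p, hp, rfl⟩ := hj
        obtain ⟨q, hq, hq2⟩ := hj1
        have hp1 := (hmem p hp).1
        have hq1 := (hmem q hq).1
        have hpI : ((1 : ℕ), p.2) ∈ I := by
          have : p = (1, p.2) := by rw [Prod.ext_iff]; exact ⟨hp1, rfl⟩
          rwa [this] at hp
        have hqI : ((1 : ℕ), p.2 + 1) ∈ I := by
          have : q = (1, p.2 + 1) := by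
            rw [Prod.ext_iff]; exact ⟨hq1, hq2⟩
          rwa [this] at hq
        have h1p : 1 ≤ p.2 := ((Finset.mem_Icc).1 (hmem p hp).2).1
        have h2p : p.2 + 1 ≤ n := by
          have := ((Finset.mem_Icc).1 (hmem q hq).2).2
          omega
        exact h3 p.2 h1p (by omega) hpI hqI
    · ext p
      simp only [Finset.mem_image]
      constructor
      · intro hp
        have := hsub hp
        simp only [gridA, Finset.mem_product, Finset.mem_Icc] at this
        have h1 : p.1 = 1 := le_antisymm this.1.2 this.1.1
        exact ⟨p.2, ⟨p, hp, rfl⟩, by rw [Prod.ext_iff]; exact ⟨h1.symm, rfl⟩⟩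
      · rintro ⟨j, ⟨q, hq, rfl⟩, rfl⟩
        have := hsub hq
        simp only [gridA, Finset.mem_product, Finset.mem_Icc] at this
        have h1 : q.1 = 1 := le_antisymm this.1.2 this.1.1
        rwa [← h1, Prod.mk.eta]
  · rintro ⟨S, hS, rfl⟩
    simp only [pathF, Finset.mem_filter, Finset.mem_powerset] at hS
    obtain ⟨hsub, hnice⟩ := hS
    refine ⟨?_, ?_, ?_⟩
    · intro p hp
      simp only [Finset.mem_image] at hp
      obtain ⟨j, hj, rfl⟩ := hp
      simp only [gridA, Finset.mem_product, Finset.mem_Icc]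
      exact ⟨⟨le_refl 1, le_refl 1⟩, (Finset.mem_Icc).1 (hsub hj)⟩
    · intro i j hi hij
      simp only [Finset.mem_image, Prod.ext_iff] at hij
      obtain ⟨k, -, hk⟩ := hij
      omega
    · intro j _ _ hj hj1
      simp only [Finset.mem_image, Prod.ext_iff] at hj hj1
      obtain ⟨k, hk, hk1, hk2⟩ := hj
      obtain ⟨l, hl, hl1, hl2⟩ := hj1
      subst hk2; subst hl2
      exact hnice k hk hl

lemma finsum_eq_Gf (a b n : ℕ) :
    (∑ᶠ I ∈ {I : Finset (ℕ × ℕ) | Nice 1 n I},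
        ((sigmaW 0 I : ℝ) ^ a * (I.card : ℝ) ^ b)) = Gf a b n := by
  have hset : {I : Finset (ℕ × ℕ) | Nice 1 n I}
      = ↑((pathF n).image (fun S => S.image (fun j => (1, j)))) := by
    ext I
    simp only [Set.mem_setOf_eq, Finset.coe_image, Set.mem_image, Finset.mem_coe]
    rw [nice_iff]
    constructor
    · rintro ⟨S, h1, h2⟩; exact ⟨S, h1, h2.symm⟩
    · rintro ⟨S, h1, h2⟩; exact ⟨S, h1, h2.symm⟩
  rw [hset, finsum_mem_coe_finset, Finset.sum_image (by
    intro x hx y hy h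
    exact Finset.image_injective emb_inj h)]
  apply Finset.sum_congr rfl
  intro S hS
  have hσ : sigmaW 0 (S.image (fun j => (1, j))) = ∑ j ∈ S, j := by
    rw [sigmaW, Finset.sum_image (fun x _ y _ h => emb_inj h)]
    simp
  have hc : (S.image (fun j => (1, j))).card = S.card :=
    Finset.card_image_of_injective _ emb_inj
  rw [hσ, hc]
  push_cast
  ring

lemma pathF_zero : pathF 0 = {∅} := by decide

lemma pathF_one : pathF 1 = {∅, {1}} := by decide

lemma mem_pathF_sub {n : ℕ} {S : Finset ℕ} (h : S ∈ pathF n) : S ⊆ Finset.Icc 1 n :=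
  (Finset.mem_powerset.1 (Finset.mem_filter.1 h).1)

lemma mem_pathF_nice {n : ℕ} {S : Finset ℕ} (h : S ∈ pathF n) : ∀ j ∈ S, j + 1 ∉ S :=
  (Finset.mem_filter.1 h).2

lemma not_mem_pathF {n : ℕ} {S : Finset ℕ} (h : S ∈ pathF n) : n + 2 ∉ S := by
  intro hc
  have := (Finset.mem_Icc).1 (mem_pathF_sub h hc)
  omega

lemma pathF_succ (n : ℕ) :
    pathF (n + 2) = pathF (n + 1) ∪ (pathF n).image (insert (n + 2)) := by
  ext S
  simp only [Finset.mem_union, Finset.mem_image, pathF, Finset.mem_filter,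
    Finset.mem_powerset]
  constructor
  · rintro ⟨hsub, hnice⟩
    by_cases hc : n + 2 ∈ S
    · right
      refine ⟨S.erase (n + 2), ⟨⟨?_, ?_⟩, ?_⟩⟩
      · intro j hj
        have hj' := Finset.mem_of_mem_erase hj
        have hjne := Finset.ne_of_mem_erase hj
        have h1 := (Finset.mem_Icc).1 (hsub hj')
        have : j ≠ n + 1 := by
          intro hje
          exact hnice j hj' (by rw [hje]; exact hc)
        rw [Finset.mem_Icc]; omega
      · intro j hj hj1
        exact hnice j (Finset.mem_of_mem_erase hj) (Finset.mem_of_mem_erase hj1)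
      · rw [Finset.insert_erase hc]
    · left
      refine ⟨fun j hj => ?_, hnice⟩
      have h1 := (Finset.mem_Icc).1 (hsub hj)
      have : j ≠ n + 2 := fun he => hc (he ▸ hj)
      rw [Finset.mem_Icc]; omega
  · rintro (⟨hsub, hnice⟩ | ⟨T, ⟨⟨hsub, hnice⟩, rfl⟩⟩)
    · refine ⟨fun j hj => ?_, hnice⟩
      have := (Finset.mem_Icc).1 (hsub hj); rw [Finset.mem_Icc]; omega
    · have hnT : n + 2 ∉ T := by
        intro hc; have := (Finset.mem_Icc).1 (hsub hc); omega
      constructor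
      · intro j hj
        rcases Finset.mem_insert.1 hj with rfl | hj
        · rw [Finset.mem_Icc]; omega
        · have := (Finset.mem_Icc).1 (hsub hj); rw [Finset.mem_Icc]; omega
      · intro j hj hj1
        rcases Finset.mem_insert.1 hj with rfl | hj
        · rcases Finset.mem_insert.1 hj1 with h | h
          · omega
          · have := (Finset.mem_Icc).1 (hsub h); omega
        · rcases Finset.mem_insert.1 hj1 with h | h
          · have := (Finset.mem_Icc).1 (hsub hj); omega
          · exact hnice j hj h

lemma Gf_rec (a b n : ℕ) :
    Gf a b (n + 2) = Gf a b (n + 1) +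
      ∑ p ∈ Finset.range (a + 1) ×ˢ Finset.range (b + 1),
        (a.choose p.1 * b.choose p.2 : ℝ) * ((n : ℝ) + 2) ^ (a - p.1) * Gf p.1 p.2 n := by
  have hdisj : Disjoint (pathF (n + 1)) ((pathF n).image (insert (n + 2))) := by
    rw [Finset.disjoint_right]
    rintro S hS hS'
    simp only [Finset.mem_image] at hS
    obtain ⟨T, hT, rfl⟩ := hS
    have : n + 2 ∈ insert (n + 2) T := Finset.mem_insert_self _ _
    have := (Finset.mem_Icc).1 (mem_pathF_sub hS' this)
    omega
  have hinj : ∀ x ∈ pathF n, ∀ y ∈ pathF n, insert (n + 2) x = insert (n + 2) y → x = y := by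
    intro x hx y hy h
    have hnx : n + 2 ∉ x := by
      intro hc; have := (Finset.mem_Icc).1 (mem_pathF_sub hx hc); omega
    have hny : n + 2 ∉ y := by
      intro hc; have := (Finset.mem_Icc).1 (mem_pathF_sub hy hc); omega
    have := congrArg (fun s => Finset.erase s (n + 2)) h
    simpa [Finset.erase_insert hnx, Finset.erase_insert hny] using this
  rw [Gf, pathF_succ, Finset.sum_union hdisj, Finset.sum_image hinj]
  congr 1
  have key : ∀ T ∈ pathF n,
      (∑ j ∈ insert (n + 2) T, (j : ℝ)) ^ a * ((insert (n + 2) T).card : ℝ) ^ b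
        = ∑ p ∈ Finset.range (a + 1) ×ˢ Finset.range (b + 1),
            (a.choose p.1 * b.choose p.2 : ℝ) * ((n : ℝ) + 2) ^ (a - p.1) *
              ((∑ j ∈ T, (j : ℝ)) ^ p.1 * (T.card : ℝ) ^ p.2) := by
    intro T hT
    have hnT : n + 2 ∉ T := not_mem_pathF hT
    rw [Finset.sum_insert hnT, Finset.card_insert_of_notMem hnT, Finset.sum_product]
    push_cast
    rw [add_comm ((n : ℝ) + 2) (∑ j ∈ T, (j : ℝ)), add_pow, add_pow, Finset.sum_mul_sum]
    apply Finset.sum_congr rfl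
    intro k _
    apply Finset.sum_congr rfl
    intro l _
    ring
  calc ∑ T ∈ pathF n,
        (∑ j ∈ insert (n + 2) T, (j : ℝ)) ^ a * ((insert (n + 2) T).card : ℝ) ^ b
      = ∑ T ∈ pathF n, ∑ p ∈ Finset.range (a + 1) ×ˢ Finset.range (b + 1),
          (a.choose p.1 * b.choose p.2 : ℝ) * ((n : ℝ) + 2) ^ (a - p.1) *
            ((∑ j ∈ T, (j : ℝ)) ^ p.1 * (T.card : ℝ) ^ p.2) := Finset.sum_congr rfl key
    _ = ∑ p ∈ Finset.range (a + 1) ×ˢ Finset.range (b + 1), ∑ T ∈ pathF n,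
          (a.choose p.1 * b.choose p.2 : ℝ) * ((n : ℝ) + 2) ^ (a - p.1) *
            ((∑ j ∈ T, (j : ℝ)) ^ p.1 * (T.card : ℝ) ^ p.2) := Finset.sum_comm
    _ = ∑ p ∈ Finset.range (a + 1) ×ˢ Finset.range (b + 1),
          (a.choose p.1 * b.choose p.2 : ℝ) * ((n : ℝ) + 2) ^ (a - p.1) * Gf p.1 p.2 n := by
        apply Finset.sum_congr rfl
        intro p _
        rw [← Finset.mul_sum, Gf]

open Polynomial in
noncomputable def Lop (r : ℝ) (P : ℝ[X]) : ℝ[X] :=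
  C (r ^ 2) * P.comp (X + C 2) - C r * P.comp (X + C 1) - P

open Polynomial

lemma Lop_add (r : ℝ) (P Q : ℝ[X]) : Lop r (P + Q) = Lop r P + Lop r Q := by
  simp only [Lop, add_comp]
  ring

lemma Lop_mono (r : ℝ) (hr : r ^ 2 = r + 1) (c : ℝ) (k : ℕ) :
    (Lop r (C c * X ^ (k + 1))).natDegree ≤ k ∧
    (Lop r (C c * X ^ (k + 1))).coeff k = c * (k + 1) * (r * (2 * r - 1)) := by
  have hcoeff : ∀ j, (Lop r (C c * X ^ (k + 1))).coeff j =
      r ^ 2 * (c * (2 ^ (k + 1 - j) * ((k + 1).choose j : ℝ)))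
      - r * (c * (1 ^ (k + 1 - j) * ((k + 1).choose j : ℝ)))
      - c * (if j = k + 1 then 1 else 0) := by
    intro j
    simp only [Lop, mul_comp, C_comp, pow_comp, X_comp, coeff_sub, coeff_C_mul,
      coeff_X_add_C_pow, coeff_X_pow]
  constructor
  · rw [natDegree_le_iff_coeff_eq_zero]
    intro m hm
    rw [hcoeff m]
    rcases eq_or_lt_of_le (Nat.succ_le_of_lt hm) with h | h
    · rw [← h]
      simp only [Nat.sub_self, pow_zero, Nat.choose_self, Nat.cast_one, if_pos rfl]
      norm_num
      linear_combination c * hr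
    · rw [Nat.choose_eq_zero_of_lt h, if_neg (by omega)]
      push_cast
      ring
  · rw [hcoeff k]
    rw [if_neg (by omega), Nat.succ_sub (le_refl k), Nat.sub_self, Nat.choose_succ_self_right]
    push_cast
    ring

lemma solve_poly (r : ℝ) (hr : r ^ 2 = r + 1) (hne : r * (2 * r - 1) ≠ 0) :
    ∀ d : ℕ, ∀ R : ℝ[X], R.natDegree ≤ d →
    ∃ P : ℝ[X], Lop r P = R ∧ P.natDegree ≤ d + 1 ∧
      P.coeff (d + 1) = R.coeff d / (((d : ℝ) + 1) * (r * (2 * r - 1))) := by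
  intro d
  induction d with
  | zero =>
    intro R hR
    set e := R.coeff 0 / (((0 : ℝ) + 1) * (r * (2 * r - 1))) with he
    refine ⟨C e * X ^ 1, ?_, ?_, ?_⟩
    · have hm := Lop_mono r hr e 0
      have h1 : Lop r (C e * X ^ 1) = C ((Lop r (C e * X ^ 1)).coeff 0) :=
        eq_C_of_natDegree_le_zero hm.1
      have h2 : R = C (R.coeff 0) := eq_C_of_natDegree_le_zero hR
      have he2 : e * ((0 : ℕ) + 1 : ℝ) * (r * (2 * r - 1)) = R.coeff 0 := by
        rw [he]; simp only [Nat.cast_zero, zero_add, one_mul, mul_one]; exact div_mul_cancel₀ _ hne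
      rw [h1, hm.2, he2, ← h2]
    · calc (C e * X ^ 1).natDegree ≤ (C e).natDegree + (X ^ 1 : ℝ[X]).natDegree :=
            natDegree_mul_le
        _ ≤ 0 + 1 := by
            gcongr
            · exact (natDegree_C _).le
            · exact natDegree_X_pow_le 1
        _ = 0 + 1 := rfl
    · rw [coeff_C_mul, coeff_X_pow, if_pos rfl, mul_one, he]
      norm_num
  | succ d ih =>
    intro R hR
    set e := R.coeff (d + 1) / (((d : ℝ) + 2) * (r * (2 * r - 1))) with he
    set P₀ := C e * X ^ (d + 2) with hP₀
    have hm := Lop_mono r hr e (d + 1)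
    set R₁ := R - Lop r P₀ with hR₁
    have hcz : R₁.coeff (d + 1) = 0 := by
      rw [hR₁, coeff_sub]
      have : (Lop r P₀).coeff (d + 1) = e * ((d : ℝ) + 2) * (r * (2 * r - 1)) := by
        have := hm.2
        rw [hP₀]
        convert this using 2 <;> push_cast <;> ring
      rw [this, he]
      have hd2 : ((d : ℝ) + 2) ≠ 0 := by positivity
      rw [mul_assoc, div_mul_cancel₀ _ (mul_ne_zero hd2 hne), sub_self]
    have hdeg : R₁.natDegree ≤ d := by
      rw [natDegree_le_iff_coeff_eq_zero]
      intro m hm'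
      rcases eq_or_lt_of_le (Nat.succ_le_of_lt hm') with h | h
      · rw [← h]; exact hcz
      · apply coeff_eq_zero_of_natDegree_lt
        calc R₁.natDegree ≤ max R.natDegree (Lop r P₀).natDegree := natDegree_sub_le _ _
          _ ≤ d + 1 := max_le hR hm.1
          _ < m := h
    obtain ⟨P₁, h1, h2, h3⟩ := ih R₁ hdeg
    refine ⟨P₀ + P₁, ?_, ?_, ?_⟩
    · rw [Lop_add, h1, hR₁]; ring
    · calc (P₀ + P₁).natDegree ≤ max P₀.natDegree P₁.natDegree := natDegree_add_le _ _
        _ ≤ d + 2 := by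
            apply max_le _ (h2.trans (by omega))
            calc P₀.natDegree ≤ (C e).natDegree + (X ^ (d + 2) : ℝ[X]).natDegree :=
                natDegree_mul_le
              _ ≤ 0 + (d + 2) := by
                  gcongr
                  · exact (natDegree_C _).le
                  · exact natDegree_X_pow_le _
              _ = d + 2 := by omega
    · have hp1 : P₁.coeff (d + 2) = 0 :=
        coeff_eq_zero_of_natDegree_lt (lt_of_le_of_lt h2 (by omega))
      rw [coeff_add, hp1, add_zero, hP₀, coeff_C_mul, coeff_X_pow, if_pos rfl, mul_one, he]
      push_cast
      ring_nf

lemma Lop_eval {r : ℝ} {P R : ℝ[X]} (h : Lop r P = R) (x : ℝ) :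
    r ^ 2 * P.eval (x + 2) - r * P.eval (x + 1) - P.eval x = R.eval x := by
  have := congrArg (Polynomial.eval x) h
  simpa [Lop, eval_comp] using this

noncomputable def φr : ℝ := (1 + Real.sqrt 5) / 2
noncomputable def ψr : ℝ := (1 - Real.sqrt 5) / 2

lemma s5sq : Real.sqrt 5 ^ 2 = 5 := Real.sq_sqrt (by norm_num)

lemma s5gt : 2 < Real.sqrt 5 := by
  nlinarith [s5sq, Real.sqrt_nonneg 5]

lemma s5pos : 0 < Real.sqrt 5 := by linarith [s5gt]

lemma φ_sq : φr ^ 2 = φr + 1 := by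
  rw [φr]; nlinarith [s5sq]

lemma ψ_sq : ψr ^ 2 = ψr + 1 := by
  rw [ψr]; nlinarith [s5sq]

lemma φ_gt_one : 1 < φr := by rw [φr]; nlinarith [s5gt]

lemma φ_pos : 0 < φr := lt_trans one_pos φ_gt_one

lemma φ_ne : φr ≠ 0 := ne_of_gt φ_pos

lemma ψ_neg : ψr < 0 := by rw [ψr]; nlinarith [s5gt]

lemma ψ_abs : |ψr| < 1 := by
  rw [abs_lt, ψr]; constructor <;> nlinarith [s5gt, s5sq]

lemma φψ_diff : φr - ψr = Real.sqrt 5 := by rw [φr, ψr]; ring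

lemma two_φ : 2 * φr - 1 = Real.sqrt 5 := by rw [φr]; ring

lemma two_ψ : 2 * ψr - 1 = -Real.sqrt 5 := by rw [ψr]; ring

lemma φ_ne' : φr * (2 * φr - 1) ≠ 0 := by
  rw [two_φ]; exact mul_ne_zero φ_ne (ne_of_gt s5pos)

lemma ψ_ne' : ψr * (2 * ψr - 1) ≠ 0 := by
  rw [two_ψ]
  apply mul_ne_zero (ne_of_lt ψ_neg)
  simp only [ne_eq, neg_eq_zero]
  exact ne_of_gt s5pos

noncomputable def cc (a b : ℕ) : ℝ :=
  (2 : ℝ) ^ (-(a : ℤ)) * (5 : ℝ) ^ (-(((a : ℝ) + (b : ℝ) + 1) / 2)) *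
    φr ^ ((2 : ℤ) - (a : ℤ) - (b : ℤ))

lemma rpow_half : (5 : ℝ) ^ ((1 : ℝ) / 2) = Real.sqrt 5 := by
  rw [Real.sqrt_eq_rpow]

lemma cc_step_a (a b : ℕ) : cc a b = 2 * Real.sqrt 5 * φr * cc (a + 1) b := by
  rw [cc, cc]
  have h2 : (2 : ℝ) ^ (-((a + 1 : ℕ) : ℤ)) = (2 : ℝ) ^ (-(a : ℤ)) * 2⁻¹ := by
    rw [show (-((a + 1 : ℕ) : ℤ)) = (-(a : ℤ)) + (-1 : ℤ) by push_cast; ring,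
      zpow_add₀ (two_ne_zero), zpow_neg_one]
  have hhalf : (5 : ℝ) ^ (-(1 / 2 : ℝ)) = (Real.sqrt 5)⁻¹ := by
    rw [Real.rpow_neg (by norm_num : (0 : ℝ) ≤ 5), rpow_half]
  have h5 : (5 : ℝ) ^ (-(((((a + 1 : ℕ) : ℝ)) + (b : ℝ) + 1) / 2)) =
      (5 : ℝ) ^ (-(((a : ℝ) + (b : ℝ) + 1) / 2)) * (Real.sqrt 5)⁻¹ := by
    rw [show (-(((((a + 1 : ℕ) : ℝ)) + (b : ℝ) + 1) / 2))
        = (-(((a : ℝ) + (b : ℝ) + 1) / 2)) + (-(1 / 2 : ℝ)) by push_cast; ring,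
      Real.rpow_add (by norm_num : (0 : ℝ) < 5), hhalf]
  have hφ : φr ^ ((2 : ℤ) - ((a + 1 : ℕ) : ℤ) - (b : ℤ)) =
      φr ^ ((2 : ℤ) - (a : ℤ) - (b : ℤ)) * φr⁻¹ := by
    rw [show ((2 : ℤ) - ((a + 1 : ℕ) : ℤ) - (b : ℤ))
        = ((2 : ℤ) - (a : ℤ) - (b : ℤ)) + (-1 : ℤ) by push_cast; ring,
      zpow_add₀ φ_ne, zpow_neg_one]
  rw [h2, h5, hφ]
  have hs5 : Real.sqrt 5 ≠ 0 := ne_of_gt s5pos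
  have key : (2 : ℝ) * Real.sqrt 5 * φr * (2⁻¹ * (Real.sqrt 5)⁻¹ * φr⁻¹) = 1 := by
    rw [show (2 : ℝ) * Real.sqrt 5 * φr * (2⁻¹ * (Real.sqrt 5)⁻¹ * φr⁻¹)
        = (2 * 2⁻¹) * (Real.sqrt 5 * (Real.sqrt 5)⁻¹) * (φr * φr⁻¹) by ring]
    simp only [mul_inv_cancel₀ (two_ne_zero : (2 : ℝ) ≠ 0), mul_inv_cancel₀ hs5, mul_inv_cancel₀ φ_ne, mul_one]
  linear_combination (-((2 : ℝ) ^ (-(a : ℤ)) * (5 : ℝ) ^ (-(((a : ℝ) + (b : ℝ) + 1) / 2)) *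
    φr ^ ((2 : ℤ) - (a : ℤ) - (b : ℤ)))) * key

lemma cc_step_b (a b : ℕ) : cc a b = Real.sqrt 5 * φr * cc a (b + 1) := by
  rw [cc, cc]
  have hhalf : (5 : ℝ) ^ (-(1 / 2 : ℝ)) = (Real.sqrt 5)⁻¹ := by
    rw [Real.rpow_neg (by norm_num : (0 : ℝ) ≤ 5), rpow_half]
  have h5 : (5 : ℝ) ^ (-(((a : ℝ) + (((b + 1 : ℕ) : ℝ)) + 1) / 2)) =
      (5 : ℝ) ^ (-(((a : ℝ) + (b : ℝ) + 1) / 2)) * (Real.sqrt 5)⁻¹ := by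
    rw [show (-(((a : ℝ) + (((b + 1 : ℕ) : ℝ)) + 1) / 2))
        = (-(((a : ℝ) + (b : ℝ) + 1) / 2)) + (-(1 / 2 : ℝ)) by push_cast; ring,
      Real.rpow_add (by norm_num : (0 : ℝ) < 5), hhalf]
  have hφ : φr ^ ((2 : ℤ) - (a : ℤ) - ((b + 1 : ℕ) : ℤ)) =
      φr ^ ((2 : ℤ) - (a : ℤ) - (b : ℤ)) * φr⁻¹ := by
    rw [show ((2 : ℤ) - (a : ℤ) - ((b + 1 : ℕ) : ℤ))
        = ((2 : ℤ) - (a : ℤ) - (b : ℤ)) + (-1 : ℤ) by push_cast; ring,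
      zpow_add₀ φ_ne, zpow_neg_one]
  rw [h5, hφ]
  have hs5 : Real.sqrt 5 ≠ 0 := ne_of_gt s5pos
  have key : Real.sqrt 5 * φr * ((Real.sqrt 5)⁻¹ * φr⁻¹) = 1 := by
    rw [show Real.sqrt 5 * φr * ((Real.sqrt 5)⁻¹ * φr⁻¹)
        = (Real.sqrt 5 * (Real.sqrt 5)⁻¹) * (φr * φr⁻¹) by ring]
    simp only [mul_inv_cancel₀ hs5, mul_inv_cancel₀ φ_ne, mul_one]
  linear_combination (-((2 : ℝ) ^ (-(a : ℤ)) * (5 : ℝ) ^ (-(((a : ℝ) + (b : ℝ) + 1) / 2)) *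
    φr ^ ((2 : ℤ) - (a : ℤ) - (b : ℤ)))) * key

lemma cc_main (a b : ℕ) (h : 1 ≤ a + b) :
    (a : ℝ) * cc (a - 1) b + (b : ℝ) * cc a (b - 1) =
      cc a b * ((2 * a + b : ℕ) : ℝ) * (φr * (2 * φr - 1)) := by
  rw [two_φ]
  rcases Nat.eq_zero_or_pos a with rfl | ha
  · obtain ⟨b', rfl⟩ : ∃ b', b = b' + 1 := ⟨b - 1, by omega⟩
    simp only [Nat.cast_zero, zero_mul, zero_add, Nat.add_sub_cancel]
    rw [cc_step_b 0 b']
    push_cast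
    ring
  · obtain ⟨a', rfl⟩ : ∃ a', a = a' + 1 := ⟨a - 1, by omega⟩
    rcases Nat.eq_zero_or_pos b with rfl | hb
    · simp only [Nat.cast_zero, zero_mul, add_zero, Nat.add_sub_cancel]
      rw [cc_step_a a' 0]
      push_cast
      ring
    · obtain ⟨b', rfl⟩ : ∃ b', b = b' + 1 := ⟨b - 1, by omega⟩
      simp only [Nat.add_sub_cancel]
      rw [cc_step_a a' (b' + 1), cc_step_b (a' + 1) b']
      push_cast
      ring

lemma Lop_C (r : ℝ) (hr : r ^ 2 = r + 1) (A : ℝ) : Lop r (C A) = 0 := by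
  simp only [Lop, C_comp]
  rw [← C_mul, ← C_mul, ← C_sub, ← C_sub, show r ^ 2 * A - r * A - A = 0 by
    linear_combination A * hr, C_0]

lemma twoStep (g u v : ℕ → ℝ) (h0 : u 0 = v 0) (h1 : u 1 = v 1)
    (hu : ∀ n, u (n + 2) = u (n + 1) + u n + g n)
    (hv : ∀ n, v (n + 2) = v (n + 1) + v n + g n) : ∀ n, u n = v n := by
  have key : ∀ n, u n = v n ∧ u (n + 1) = v (n + 1) := by
    intro n
    induction n with
    | zero => exact ⟨h0, h1⟩
    | succ m ih => exact ⟨ih.2, by rw [hu, hv, ih.1, ih.2]⟩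
  exact fun n => (key n).1

def ClosedForm (a b : ℕ) : Prop :=
  ∃ P Q : Polynomial ℝ, P.natDegree ≤ 2 * a + b ∧ Q.natDegree ≤ 2 * a + b ∧
    P.coeff (2 * a + b) = cc a b ∧
    ∀ n : ℕ, Gf a b n = P.eval (n : ℝ) * φr ^ n + Q.eval (n : ℝ) * ψr ^ n

lemma rec00 (n : ℕ) : Gf 0 0 (n + 2) = Gf 0 0 (n + 1) + Gf 0 0 n + 0 := by
  rw [Gf_rec 0 0 n]
  rw [show Finset.range (0 + 1) ×ˢ Finset.range (0 + 1) = {((0 : ℕ), (0 : ℕ))} from rfl]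
  simp

lemma cc00 : cc 0 0 = φr ^ 2 / Real.sqrt 5 := by
  have hhalf : (5 : ℝ) ^ (-(1 / 2 : ℝ)) = (Real.sqrt 5)⁻¹ := by
    rw [Real.rpow_neg (by norm_num : (0 : ℝ) ≤ 5), rpow_half]
  rw [cc]
  norm_num
  rw [hhalf]
  ring

lemma closedForm_base : ClosedForm 0 0 := by
  refine ⟨C (cc 0 0), C (-(ψr ^ 2 / Real.sqrt 5)), ?_, ?_, ?_, ?_⟩
  · simpa using natDegree_C_le (a := cc 0 0)
  · simpa using natDegree_C_le (a := -(ψr ^ 2 / Real.sqrt 5))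
  · simp
  · have hs5 : Real.sqrt 5 ≠ 0 := ne_of_gt s5pos
    have key0 : φr ^ 2 - ψr ^ 2 = Real.sqrt 5 := by
      linear_combination φ_sq - ψ_sq + φψ_diff
    have hφ3 : φr ^ 3 = 2 * φr + 1 := by linear_combination (φr + 1) * φ_sq
    have hψ3 : ψr ^ 3 = 2 * ψr + 1 := by linear_combination (ψr + 1) * ψ_sq
    have key1 : φr ^ 3 - ψr ^ 3 = 2 * Real.sqrt 5 := by
      linear_combination hφ3 - hψ3 + 2 * φψ_diff
    apply twoStep (fun _ => 0) (Gf 0 0)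
      (fun n => (C (cc 0 0)).eval (n : ℝ) * φr ^ n + (C (-(ψr ^ 2 / Real.sqrt 5))).eval (n : ℝ) * ψr ^ n)
    · rw [Gf, pathF_zero]
      simp [cc00]
      field_simp
      linear_combination -key0
    · rw [Gf, pathF_one]
      have : (∅ : Finset ℕ) ∉ ({{1}} : Finset (Finset ℕ)) := by decide
      rw [show ({∅, {1}} : Finset (Finset ℕ)) = insert ∅ {({1} : Finset ℕ)} from rfl,
        Finset.sum_insert this]
      simp [cc00]
      field_simp
      linear_combination -key1
    · intro n; exact rec00 n
    · intro n
      simp only [eval_C]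
      linear_combination (cc 0 0 * φr ^ n) * φ_sq + (-(ψr ^ 2 / Real.sqrt 5) * ψr ^ n) * ψ_sq

lemma closedForm_step (a b : ℕ) (hab : 1 ≤ a + b)
    (IH : ∀ a' b', a' + b' < a + b → ClosedForm a' b') : ClosedForm a b := by
  have IH' : ∀ p : ℕ × ℕ, ∃ PQ : Polynomial ℝ × Polynomial ℝ,
      p.1 + p.2 < a + b →
      (PQ.1.natDegree ≤ 2 * p.1 + p.2 ∧ PQ.2.natDegree ≤ 2 * p.1 + p.2 ∧
        PQ.1.coeff (2 * p.1 + p.2) = cc p.1 p.2 ∧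
        ∀ n : ℕ, Gf p.1 p.2 n = PQ.1.eval (n : ℝ) * φr ^ n + PQ.2.eval (n : ℝ) * ψr ^ n) := by
    intro p
    by_cases hp : p.1 + p.2 < a + b
    · obtain ⟨P, Q, h1, h2, h3, h4⟩ := IH p.1 p.2 hp
      exact ⟨(P, Q), fun _ => ⟨h1, h2, h3, h4⟩⟩
    · exact ⟨(0, 0), fun hc => absurd hc hp⟩
  choose PQ hPQ using IH'
  set E := (Finset.range (a + 1) ×ˢ Finset.range (b + 1)).erase (a, b) with hE
  have hEmem : ∀ p ∈ E, p.1 ≤ a ∧ p.2 ≤ b ∧ p.1 + p.2 < a + b := by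
    intro p hp
    simp only [hE, Finset.mem_erase, Finset.mem_product, Finset.mem_range] at hp
    obtain ⟨hne, h1, h2⟩ := hp
    refine ⟨by omega, by omega, ?_⟩
    by_contra hc
    push_neg at hc
    exact hne (Prod.ext (by omega) (by omega))
  have hrec : ∀ n : ℕ, Gf a b (n + 2) = Gf a b (n + 1) + Gf a b n +
      ∑ p ∈ E, (a.choose p.1 * b.choose p.2 : ℝ) * ((n : ℝ) + 2) ^ (a - p.1) * Gf p.1 p.2 n := by
    intro n
    rw [Gf_rec a b n]
    have habm : (a, b) ∈ Finset.range (a + 1) ×ˢ Finset.range (b + 1) := by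
      simp [Finset.mem_product]
    rw [← Finset.sum_erase_add _ _ habm, ← hE]
    simp only [Nat.choose_self, Nat.cast_one, Nat.sub_self, pow_zero, one_mul, mul_one]
    ring
  set R := ∑ p ∈ E, C ((a.choose p.1 * b.choose p.2 : ℝ)) * (X + C 2) ^ (a - p.1) * (PQ p).1
    with hR
  set Sp := ∑ p ∈ E, C ((a.choose p.1 * b.choose p.2 : ℝ)) * (X + C 2) ^ (a - p.1) * (PQ p).2
    with hSp
  have hg : ∀ n : ℕ,
      (∑ p ∈ E, (a.choose p.1 * b.choose p.2 : ℝ) * ((n : ℝ) + 2) ^ (a - p.1) * Gf p.1 p.2 n)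
      = R.eval (n : ℝ) * φr ^ n + Sp.eval (n : ℝ) * ψr ^ n := by
    intro n
    rw [hR, hSp, eval_finset_sum, eval_finset_sum, Finset.sum_mul, Finset.sum_mul,
      ← Finset.sum_add_distrib]
    apply Finset.sum_congr rfl
    intro p hp
    rw [(hPQ p (hEmem p hp).2.2).2.2.2 n]
    simp only [eval_mul, eval_pow, eval_add, eval_X, eval_C]
    ring
  have hterm_deg : ∀ (p : ℕ × ℕ) (W : Polynomial ℝ), W.natDegree ≤ 2 * p.1 + p.2 →
      (C ((a.choose p.1 * b.choose p.2 : ℝ)) * (X + C 2) ^ (a - p.1) * W).natDegree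
        ≤ (a - p.1) + (2 * p.1 + p.2) := by
    intro p W hW
    calc (C ((a.choose p.1 * b.choose p.2 : ℝ)) * (X + C 2) ^ (a - p.1) * W).natDegree
        ≤ (C ((a.choose p.1 * b.choose p.2 : ℝ)) * (X + C 2) ^ (a - p.1)).natDegree
            + W.natDegree := natDegree_mul_le
      _ ≤ ((C ((a.choose p.1 * b.choose p.2 : ℝ))).natDegree
            + ((X + C 2 : Polynomial ℝ) ^ (a - p.1)).natDegree) + W.natDegree := by
          gcongr
          exact natDegree_mul_le
      _ ≤ (0 + (a - p.1) * 1) + (2 * p.1 + p.2) := by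
          gcongr
          · exact (natDegree_C _).le
          · calc ((X + C 2 : Polynomial ℝ) ^ (a - p.1)).natDegree
                ≤ (a - p.1) * (X + C 2 : Polynomial ℝ).natDegree := natDegree_pow_le
              _ ≤ (a - p.1) * 1 := by
                  gcongr
                  exact (natDegree_X_add_C _).le
      _ = (a - p.1) + (2 * p.1 + p.2) := by omega
  have hDR : R.natDegree ≤ 2 * a + b - 1 := by
    rw [hR]
    apply natDegree_sum_le_of_forall_le
    intro p hp
    obtain ⟨h1, h2, h3⟩ := hEmem p hp
    exact (hterm_deg p _ (hPQ p h3).1).trans (by omega)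
  have hDS : Sp.natDegree ≤ 2 * a + b - 1 := by
    rw [hSp]
    apply natDegree_sum_le_of_forall_le
    intro p hp
    obtain ⟨h1, h2, h3⟩ := hEmem p hp
    exact (hterm_deg p _ (hPQ p h3).2.1).trans (by omega)
  have hcoeffR : R.coeff (2 * a + b - 1) = (a : ℝ) * cc (a - 1) b + (b : ℝ) * cc a (b - 1) := by
    rw [hR, finset_sum_coeff]
    have hterm : ∀ p ∈ E,
        (C ((a.choose p.1 * b.choose p.2 : ℝ)) * (X + C 2) ^ (a - p.1) * (PQ p).1).coeff
            (2 * a + b - 1)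
        = if p = (a - 1, b) ∨ p = (a, b - 1)
            then (a.choose p.1 * b.choose p.2 : ℝ) * cc p.1 p.2 else 0 := by
      intro p hp
      obtain ⟨h1, h2, h3⟩ := hEmem p hp
      by_cases hc : p = (a - 1, b) ∨ p = (a, b - 1)
      · rw [if_pos hc]
        have hco : p.1 = a - 1 ∧ p.2 = b ∨ p.1 = a ∧ p.2 = b - 1 := by
          rcases hc with rfl | rfl
          · exact Or.inl ⟨rfl, rfl⟩
          · exact Or.inr ⟨rfl, rfl⟩
        have hsum : (a - p.1) + (2 * p.1 + p.2) = 2 * a + b - 1 := by omega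
        have hdeg1 : (C ((a.choose p.1 * b.choose p.2 : ℝ)) * (X + C 2) ^ (a - p.1)).natDegree
            ≤ a - p.1 := by
          calc (C ((a.choose p.1 * b.choose p.2 : ℝ)) * (X + C 2) ^ (a - p.1)).natDegree
              ≤ (C ((a.choose p.1 * b.choose p.2 : ℝ))).natDegree
                + ((X + C 2 : Polynomial ℝ) ^ (a - p.1)).natDegree := natDegree_mul_le
            _ ≤ 0 + (a - p.1) * 1 := by
                gcongr
                · exact (natDegree_C _).le
                · calc ((X + C 2 : Polynomial ℝ) ^ (a - p.1)).natDegree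
                      ≤ (a - p.1) * (X + C 2 : Polynomial ℝ).natDegree := natDegree_pow_le
                    _ ≤ (a - p.1) * 1 := by gcongr; exact (natDegree_X_add_C _).le
            _ = a - p.1 := by omega
        rw [← hsum, coeff_mul_add_eq_of_natDegree_le hdeg1 (hPQ p h3).1]
        rw [coeff_C_mul, coeff_X_add_C_pow, Nat.sub_self, pow_zero, Nat.choose_self,
          (hPQ p h3).2.2.1]
        push_cast
        ring
      · rw [if_neg hc]
        push_neg at hc
        have hne1 : ¬(p.1 = a - 1 ∧ p.2 = b) := fun ⟨u, v⟩ => hc.1 (Prod.ext u v)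
        have hne2 : ¬(p.1 = a ∧ p.2 = b - 1) := fun ⟨u, v⟩ => hc.2 (Prod.ext u v)
        apply coeff_eq_zero_of_natDegree_lt
        apply lt_of_le_of_lt (hterm_deg p _ (hPQ p h3).1)
        omega
    rw [Finset.sum_congr rfl hterm]
    rcases Nat.eq_zero_or_pos a with rfl | hapos
    · obtain ⟨b', rfl⟩ : ∃ b', b = b' + 1 := ⟨b - 1, by omega⟩
      rw [Finset.sum_eq_single_of_mem ((0 : ℕ), b') ?mem ?rest]
      · rw [if_pos (Or.inr (by simp))]
        simp only [Nat.choose_self, Nat.choose_succ_self_right, Nat.cast_zero, Nat.cast_one,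
          Nat.add_sub_cancel, zero_mul, zero_add]
        push_cast
        ring
      case mem =>
        simp only [hE, Finset.mem_erase, Finset.mem_product, Finset.mem_range]
        refine ⟨by simp [Prod.ext_iff], by omega, by omega⟩
      case rest =>
        intro q hq hqne
        rw [if_neg]
        rintro (rfl | rfl)
        · simp only [hE, Finset.mem_erase] at hq
          exact hq.1 (by simp)
        · exact hqne (by simp)
    · obtain ⟨a', rfl⟩ : ∃ a', a = a' + 1 := ⟨a - 1, by omega⟩
      rcases Nat.eq_zero_or_pos b with rfl | hbpos
      · rw [Finset.sum_eq_single_of_mem ((a' : ℕ), (0 : ℕ)) ?mem ?rest]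
        · rw [if_pos (Or.inl (by simp))]
          simp only [Nat.choose_self, Nat.choose_succ_self_right, Nat.cast_zero, Nat.cast_one,
            Nat.add_sub_cancel, zero_mul, add_zero]
          push_cast
          ring
        case mem =>
          simp only [hE, Finset.mem_erase, Finset.mem_product, Finset.mem_range]
          refine ⟨by simp [Prod.ext_iff], by omega, by omega⟩
        case rest =>
          intro q hq hqne
          rw [if_neg]
          rintro (rfl | rfl)
          · exact hqne (by simp)
          · simp only [hE, Finset.mem_erase] at hq
            exact hq.1 (by simp)
      · obtain ⟨b'', rfl⟩ : ∃ b'', b = b'' + 1 := ⟨b - 1, by omega⟩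
        have hp2 : ((a' + 1 : ℕ), b'') ∈ E := by
          simp only [hE, Finset.mem_erase, Finset.mem_product, Finset.mem_range]
          refine ⟨by simp [Prod.ext_iff], by omega, by omega⟩
        rw [← Finset.sum_erase_add E _ hp2]
        have herase : ∑ p ∈ E.erase ((a' + 1 : ℕ), b''),
            (if p = (a' + 1 - 1, b'' + 1) ∨ p = (a' + 1, b'' + 1 - 1)
              then ((a' + 1).choose p.1 * (b'' + 1).choose p.2 : ℝ) * cc p.1 p.2 else 0)
            = ((a' + 1).choose a' * (b'' + 1).choose (b'' + 1) : ℝ) * cc a' (b'' + 1) := by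
          rw [Finset.sum_eq_single_of_mem ((a' : ℕ), (b'' + 1 : ℕ)) ?mem2 ?rest2]
          · rw [if_pos (Or.inl (by simp))]
          case mem2 =>
            simp only [Finset.mem_erase, hE, Finset.mem_product, Finset.mem_range]
            refine ⟨by simp [Prod.ext_iff], by simp [Prod.ext_iff], by omega, by omega⟩
          case rest2 =>
            intro q hq hqne
            rw [if_neg]
            rintro (rfl | rfl)
            · exact hqne (by simp)
            · simp only [Finset.mem_erase] at hq
              exact hq.1 (by simp)
        rw [herase, if_pos (Or.inr (by simp))]
        simp only [Nat.choose_self, Nat.choose_succ_self_right, Nat.add_sub_cancel]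
        push_cast
        ring
  obtain ⟨P₀, hLP₀, hdegP₀, hcP₀⟩ := solve_poly φr φ_sq φ_ne' (2 * a + b - 1) R hDR
  obtain ⟨Q₀, hLQ₀, hdegQ₀, -⟩ := solve_poly ψr ψ_sq ψ_ne' (2 * a + b - 1) Sp hDS
  have hD1 : 2 * a + b - 1 + 1 = 2 * a + b := by omega
  have hKne : ((2 * a + b : ℕ) : ℝ) ≠ 0 := Nat.cast_ne_zero.mpr (by omega)
  have hcast : ((2 * a + b - 1 : ℕ) : ℝ) + 1 = ((2 * a + b : ℕ) : ℝ) := by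
    rw [Nat.cast_sub (by omega : 1 ≤ 2 * a + b)]
    push_cast
    ring
  have hcoeffP : P₀.coeff (2 * a + b) = cc a b := by
    rw [← hD1, hcP₀, hcoeffR, hcast, cc_main a b hab, mul_assoc,
      mul_div_cancel_right₀ _ (mul_ne_zero hKne φ_ne')]
  set d0 := Gf a b 0 - (P₀.eval (0 : ℝ) + Q₀.eval (0 : ℝ)) with hd0
  set d1 := Gf a b 1 - (P₀.eval (1 : ℝ) * φr + Q₀.eval (1 : ℝ) * ψr) with hd1
  set A := (d1 - ψr * d0) / Real.sqrt 5 with hA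
  set B := (φr * d0 - d1) / Real.sqrt 5 with hB
  have hs5 : Real.sqrt 5 ≠ 0 := ne_of_gt s5pos
  refine ⟨P₀ + C A, Q₀ + C B, ?_, ?_, ?_, ?_⟩
  · exact (natDegree_add_le _ _).trans
      (max_le (hdegP₀.trans_eq hD1) ((natDegree_C _).le.trans (by omega)))
  · exact (natDegree_add_le _ _).trans
      (max_le (hdegQ₀.trans_eq hD1) ((natDegree_C _).le.trans (by omega)))
  · rw [coeff_add, coeff_C, if_neg (by omega : ¬(2 * a + b = 0)), add_zero, hcoeffP]
  · have hLP : Lop φr (P₀ + C A) = R := by rw [Lop_add, hLP₀, Lop_C φr φ_sq, add_zero]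
    have hLQ : Lop ψr (Q₀ + C B) = Sp := by rw [Lop_add, hLQ₀, Lop_C ψr ψ_sq, add_zero]
    have hAB0 : A + B = d0 := by
      rw [hA, hB]
      field_simp
      linear_combination d0 * φψ_diff
    have hAB1 : A * φr + B * ψr = d1 := by
      rw [hA, hB]
      field_simp
      linear_combination d1 * φψ_diff
    apply twoStep (fun n => ∑ p ∈ E,
      (a.choose p.1 * b.choose p.2 : ℝ) * ((n : ℝ) + 2) ^ (a - p.1) * Gf p.1 p.2 n) (Gf a b)
    · simp only [eval_add, eval_C, pow_zero, Nat.cast_zero, mul_one]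
      linear_combination (-1 : ℝ) * hAB0 - hd0
    · simp only [eval_add, eval_C, pow_one, Nat.cast_one]
      linear_combination (-1 : ℝ) * hAB1 - hd1
    · exact hrec
    · intro n
      have e1 := Lop_eval hLP (n : ℝ)
      have e2 := Lop_eval hLQ (n : ℝ)
      rw [hg n]
      push_cast
      linear_combination φr ^ n * e1 + ψr ^ n * e2


lemma closedForm (a b : ℕ) : ClosedForm a b := by
  suffices h : ∀ k a b, a + b ≤ k → ClosedForm a b from h (a + b) a b le_rfl
  intro k
  induction k with
  | zero =>
    intro a b h
    obtain rfl : a = 0 := by omega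
    obtain rfl : b = 0 := by omega
    exact closedForm_base
  | succ k ih =>
    intro a b h
    by_cases h0 : a + b = 0
    · obtain rfl : a = 0 := by omega
      obtain rfl : b = 0 := by omega
      exact closedForm_base
    · exact closedForm_step a b (by omega) (fun a' b' hlt => ih a' b' (by omega))

lemma poly_bound (p : Polynomial ℝ) (m : ℕ) (hm : p.natDegree ≤ m) :
    ∃ C : ℝ, 0 ≤ C ∧ ∀ x : ℝ, 1 ≤ x → |p.eval x| ≤ C * x ^ m := by
  refine ⟨∑ i ∈ Finset.range (p.natDegree + 1), |p.coeff i|, by positivity, ?_⟩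
  intro x hx
  have hx0 : (0 : ℝ) ≤ x := by linarith
  rw [Polynomial.eval_eq_sum_range]
  calc |∑ i ∈ Finset.range (p.natDegree + 1), p.coeff i * x ^ i|
      ≤ ∑ i ∈ Finset.range (p.natDegree + 1), |p.coeff i * x ^ i| :=
        Finset.abs_sum_le_sum_abs _ _
    _ ≤ ∑ i ∈ Finset.range (p.natDegree + 1), |p.coeff i| * x ^ m := by
        apply Finset.sum_le_sum
        intro i hi
        rw [abs_mul, abs_pow, abs_of_nonneg hx0]
        apply mul_le_mul_of_nonneg_left _ (abs_nonneg _)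
        apply pow_le_pow_right₀ hx
        have := Finset.mem_range.1 hi
        omega
    _ = (∑ i ∈ Finset.range (p.natDegree + 1), |p.coeff i|) * x ^ m := by
        rw [Finset.sum_mul]

lemma cc_def (a b : ℕ) : cc a b =
    (2 : ℝ) ^ (-(a : ℤ)) * (5 : ℝ) ^ (-(((a : ℝ) + (b : ℝ) + 1) / 2)) *
      φr ^ ((2 : ℤ) - (a : ℤ) - (b : ℤ)) := rfl

theorem stmt18 (a b : ℕ) :
    (fun n : ℕ =>
        (∑ᶠ I ∈ {I : Finset (ℕ × ℕ) | Nice 1 n I},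
            ((sigmaW 0 I : ℝ) ^ a * (I.card : ℝ) ^ b)) -
          (2 : ℝ) ^ (-(a : ℤ)) * (5 : ℝ) ^ (-(((a : ℝ) + (b : ℝ) + 1) / 2)) *
            (n : ℝ) ^ (2 * a + b) *
            ((1 + Real.sqrt 5) / 2) ^ ((n : ℤ) + 2 - (a : ℤ) - (b : ℤ))) =O[Filter.atTop]
      (fun n : ℕ => (n : ℝ) ^ (2 * (a : ℤ) + (b : ℤ) - 1) * ((1 + Real.sqrt 5) / 2) ^ (n : ℕ)) := by
  obtain ⟨P, Q, hdP, hdQ, hcP, hval⟩ := closedForm a b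
  set d := 2 * a + b with hd
  set P₁ := P - C (cc a b) * X ^ d with hP₁
  have hφdef : (1 + Real.sqrt 5) / 2 = φr := rfl
  have hP₁coeff : P₁.coeff d = 0 := by
    rw [hP₁, coeff_sub, coeff_C_mul, coeff_X_pow, if_pos rfl, mul_one, hcP, sub_self]
  have hP₁deg : P₁.natDegree ≤ d := by
    apply (natDegree_sub_le _ _).trans
    apply max_le hdP
    calc (C (cc a b) * X ^ d).natDegree ≤ (C (cc a b)).natDegree + (X ^ d : ℝ[X]).natDegree :=
        natDegree_mul_le
      _ ≤ 0 + d := by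
          gcongr
          · exact (natDegree_C _).le
          · exact natDegree_X_pow_le _
      _ = d := by omega
  have hLHS : ∀ n : ℕ,
      (∑ᶠ I ∈ {I : Finset (ℕ × ℕ) | Nice 1 n I},
          ((sigmaW 0 I : ℝ) ^ a * (I.card : ℝ) ^ b)) -
        (2 : ℝ) ^ (-(a : ℤ)) * (5 : ℝ) ^ (-(((a : ℝ) + (b : ℝ) + 1) / 2)) *
          (n : ℝ) ^ d *
          ((1 + Real.sqrt 5) / 2) ^ ((n : ℤ) + 2 - (a : ℤ) - (b : ℤ))
      = P₁.eval (n : ℝ) * φr ^ n + Q.eval (n : ℝ) * ψr ^ n := by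
    intro n
    rw [finsum_eq_Gf a b n, hval n, hφdef]
    have hz : φr ^ ((n : ℤ) + 2 - (a : ℤ) - (b : ℤ))
        = φr ^ ((2 : ℤ) - (a : ℤ) - (b : ℤ)) * φr ^ n := by
      rw [show ((n : ℤ) + 2 - (a : ℤ) - (b : ℤ)) = ((2 : ℤ) - (a : ℤ) - (b : ℤ)) + (n : ℤ) by
        ring, zpow_add₀ φ_ne, zpow_natCast]
    rw [hz]
    simp only [hP₁, eval_sub, eval_mul, eval_C, eval_pow, eval_X, cc_def]
    ring
  -- bound for the P₁ part
  have hbound1 : ∃ C1 : ℝ, 0 ≤ C1 ∧ ∀ x : ℝ, 1 ≤ x → |P₁.eval x| * x ≤ C1 * x ^ d := by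
    rcases Nat.eq_zero_or_pos d with hd0 | hdpos
    · have hzero : P₁ = 0 := by
        have h1 : P₁ = C (P₁.coeff 0) := eq_C_of_natDegree_le_zero (by rw [hd0] at hP₁deg; exact hP₁deg)
        have hc0 : P₁.coeff 0 = 0 := by rw [← hd0]; exact hP₁coeff
        rw [h1, hc0, C_0]
      exact ⟨0, le_refl 0, fun x hx => by rw [hzero]; simp⟩
    · have hdeg' : P₁.natDegree ≤ d - 1 := by
        rw [natDegree_le_iff_coeff_eq_zero]
        intro m hm
        rcases eq_or_lt_of_le (Nat.succ_le_of_lt hm) with h | h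
        · have : m = d := by omega
          rw [this]; exact hP₁coeff
        · exact coeff_eq_zero_of_natDegree_lt (lt_of_le_of_lt hP₁deg (by omega))
      obtain ⟨C1, hC1n, hC1⟩ := poly_bound P₁ (d - 1) hdeg'
      refine ⟨C1, hC1n, fun x hx => ?_⟩
      have hx0 : (0 : ℝ) ≤ x := by linarith
      calc |P₁.eval x| * x ≤ (C1 * x ^ (d - 1)) * x := by
            apply mul_le_mul_of_nonneg_right (hC1 x hx) hx0
        _ = C1 * x ^ d := by
            rw [mul_assoc, ← pow_succ]
            congr 2
            omega
  obtain ⟨C1, hC1n, hC1⟩ := hbound1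
  obtain ⟨C2, hC2n, hC2⟩ := poly_bound Q d hdQ
  -- eventual smallness of the ψ part
  have hψne : ψr ≠ 0 := ne_of_lt ψ_neg
  have habs : 0 < |ψr| := abs_pos.mpr hψne
  have hlt : 1 < 1 / |ψr| := by
    rw [lt_div_iff₀ habs]
    linarith [ψ_abs]
  have hsmall : ∀ᶠ n : ℕ in Filter.atTop, ((n : ℝ)) ^ (d + 1) * |ψr| ^ n ≤ 1 := by
    have hlo := isLittleO_pow_const_const_pow_of_one_lt (R := ℝ) (d + 1) hlt
    filter_upwards [hlo.def one_pos] with n h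
    have hnn : (0 : ℝ) ≤ ((n : ℝ)) ^ (d + 1) := by positivity
    have h' : ((n : ℝ)) ^ (d + 1) ≤ (1 / |ψr|) ^ n := by
      calc ((n : ℝ)) ^ (d + 1) = ‖((n : ℝ)) ^ (d + 1)‖ := by
            rw [Real.norm_eq_abs, abs_of_nonneg hnn]
        _ ≤ 1 * ‖(1 / |ψr|) ^ n‖ := h
        _ = (1 / |ψr|) ^ n := by
            rw [one_mul, Real.norm_eq_abs,
              abs_of_nonneg (pow_nonneg (by positivity) n)]
    calc ((n : ℝ)) ^ (d + 1) * |ψr| ^ n ≤ (1 / |ψr|) ^ n * |ψr| ^ n :=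
          mul_le_mul_of_nonneg_right h' (by positivity)
      _ = 1 := by
          rw [← mul_pow, one_div, inv_mul_cancel₀ (ne_of_gt habs), one_pow]
  rw [Asymptotics.isBigO_iff]
  refine ⟨C1 + C2, ?_⟩
  filter_upwards [hsmall, Filter.eventually_ge_atTop 1] with n hn hn1
  simp only [Set.mem_setOf_eq] at hLHS
  rw [hLHS n]
  have h1n : (1 : ℝ) ≤ (n : ℝ) := by exact_mod_cast hn1
  have hnpos : (0 : ℝ) < (n : ℝ) := by linarith
  have hφpow : (0 : ℝ) < φr ^ n := pow_pos φ_pos n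
  have hφ1 : (1 : ℝ) ≤ φr ^ n := by
    calc (1 : ℝ) = 1 ^ n := (one_pow n).symm
    _ ≤ φr ^ n := pow_le_pow_left₀ (by norm_num) (le_of_lt φ_gt_one) n
  have hnd1 : (1 : ℝ) ≤ (n : ℝ) ^ d := by
    calc (1 : ℝ) = 1 ^ d := (one_pow d).symm
    _ ≤ (n : ℝ) ^ d := pow_le_pow_left₀ (by norm_num) h1n d
  have hznorm : ‖(n : ℝ) ^ (2 * (a : ℤ) + (b : ℤ) - 1) * ((1 + Real.sqrt 5) / 2) ^ (n : ℕ)‖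
      = ((n : ℝ) ^ d * φr ^ n) / (n : ℝ) := by
    rw [hφdef, Real.norm_eq_abs, abs_of_pos (mul_pos (zpow_pos hnpos _) hφpow)]
    rw [show (2 * (a : ℤ) + (b : ℤ) - 1) = (d : ℤ) - 1 by rw [hd]; push_cast; ring,
      zpow_sub₀ (ne_of_gt hnpos), zpow_natCast, zpow_one]
    ring
  rw [hznorm, Real.norm_eq_abs,
    show (C1 + C2) * ((n : ℝ) ^ d * φr ^ n / (n : ℝ))
      = ((C1 + C2) * ((n : ℝ) ^ d * φr ^ n)) / (n : ℝ) by ring,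
    le_div_iff₀ hnpos]
  calc |P₁.eval (n : ℝ) * φr ^ n + Q.eval (n : ℝ) * ψr ^ n| * (n : ℝ)
      ≤ (|P₁.eval (n : ℝ)| * φr ^ n + |Q.eval (n : ℝ)| * |ψr| ^ n) * (n : ℝ) := by
        apply mul_le_mul_of_nonneg_right _ (le_of_lt hnpos)
        calc |P₁.eval (n : ℝ) * φr ^ n + Q.eval (n : ℝ) * ψr ^ n|
            ≤ |P₁.eval (n : ℝ) * φr ^ n| + |Q.eval (n : ℝ) * ψr ^ n| := abs_add_le _ _
          _ = |P₁.eval (n : ℝ)| * φr ^ n + |Q.eval (n : ℝ)| * |ψr| ^ n := by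
              rw [abs_mul, abs_mul, abs_of_pos hφpow, abs_pow]
    _ ≤ C1 * ((n : ℝ) ^ d * φr ^ n) + C2 * ((n : ℝ) ^ d * φr ^ n) := by
        rw [add_mul]
        apply add_le_add
        · calc |P₁.eval (n : ℝ)| * φr ^ n * (n : ℝ)
              = (|P₁.eval (n : ℝ)| * (n : ℝ)) * φr ^ n := by ring
            _ ≤ (C1 * (n : ℝ) ^ d) * φr ^ n :=
                mul_le_mul_of_nonneg_right (hC1 n h1n) (le_of_lt hφpow)
            _ = C1 * ((n : ℝ) ^ d * φr ^ n) := by ring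
        · calc |Q.eval (n : ℝ)| * |ψr| ^ n * (n : ℝ)
              ≤ (C2 * (n : ℝ) ^ d) * (|ψr| ^ n * (n : ℝ)) := by
                rw [mul_assoc]
                apply mul_le_mul_of_nonneg_right (hC2 n h1n)
                positivity
            _ = C2 * ((n : ℝ) ^ (d + 1) * |ψr| ^ n) := by ring
            _ ≤ C2 * 1 := mul_le_mul_of_nonneg_left hn hC2n
            _ ≤ C2 * ((n : ℝ) ^ d * φr ^ n) := by
                apply mul_le_mul_of_nonneg_left _ hC2n
                nlinarith [hnd1, hφ1]
    _ = (C1 + C2) * ((n : ℝ) ^ d * φr ^ n) := by ring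
end

section
/- Let X_{n,n+1} be the size of a uniformly random (n, n+1)-core partition with distinct parts. For each fixed positive integer k, the k-th moment satisfies E[X_{n,n+1}^k] = (n^2/10)^k + O(n^{2k-1}) as n → ∞. -/
open Finset

/-- consecutive-free subsets of [1, m] -/
def CF (m : ℕ) : Finset (Finset ℕ) :=
  (Finset.Icc 1 m).powerset.filter (fun S => ∀ x ∈ S, x + 1 ∉ S)

lemma mem_CF {m : ℕ} {S : Finset ℕ} :
    S ∈ CF m ↔ S ⊆ Finset.Icc 1 m ∧ ∀ x ∈ S, x + 1 ∉ S := by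
  simp [CF]

/-- the u-th smallest element of S, as a total function -/
noncomputable def emb1 (S : Finset ℕ) (u : ℕ) : ℕ :=
  if h : u < S.card then S.orderEmbOfFin rfl ⟨u, h⟩ else 0

lemma emb1_mem (S : Finset ℕ) {u : ℕ} (h : u < S.card) : emb1 S u ∈ S := by
  rw [emb1, dif_pos h]; exact S.orderEmbOfFin_mem rfl _

lemma emb1_lt (S : Finset ℕ) {u v : ℕ} (huv : u < v) (h : v < S.card) :
    emb1 S u < emb1 S v := by
  rw [emb1, emb1, dif_pos h, dif_pos (by omega)]
  exact (S.orderEmbOfFin rfl).strictMono (by simp [Fin.lt_def]; omega)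

lemma emb1_step (S : Finset ℕ) : ∀ (v u : ℕ), u ≤ v → v < S.card →
    emb1 S u + (v - u) ≤ emb1 S v := by
  intro v
  induction v with
  | zero => intro u h hv; interval_cases u; simp
  | succ v ih =>
    intro u huv h
    rcases Nat.eq_or_lt_of_le huv with h0 | h0
    · subst h0; simp
    · have h1 := ih u (by omega) (by omega)
      have h2 := emb1_lt S (u := v) (v := v+1) (by omega) h
      omega

lemma emb1_ge (S : Finset ℕ) {u : ℕ} (h : u < S.card) : u ≤ emb1 S u := by
  have := emb1_step S u 0 (by omega) h
  have : emb1 S 0 ≤ emb1 S u := by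
    rcases Nat.eq_zero_or_pos u with h0 | h0
    · subst h0; omega
    · exact le_of_lt (emb1_lt S h0 h)
  omega

lemma emb1_gap {S : Finset ℕ} (hg : ∀ x ∈ S, x + 1 ∉ S) {u v : ℕ} (huv : u < v)
    (h : v < S.card) : emb1 S u + 2 ≤ emb1 S v := by
  have h1 := emb1_lt S huv h
  have h2 : emb1 S u + 1 ≠ emb1 S v := by
    intro heq
    exact hg _ (emb1_mem S (by omega)) (heq ▸ emb1_mem S h)
  omega

/-- with gaps and elements ≥ 1: u-th element is at least 2u+1 -/
lemma emb1_ge_gap {S : Finset ℕ} (h1 : ∀ x ∈ S, 1 ≤ x) (hg : ∀ x ∈ S, x + 1 ∉ S) :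
    ∀ (u : ℕ), u < S.card → 2 * u + 1 ≤ emb1 S u := by
  intro u
  induction u with
  | zero => intro h; exact h1 _ (emb1_mem S h)
  | succ u ih =>
    intro h
    have := ih (by omega)
    have h2 := emb1_gap hg (u := u) (v := u + 1) (by omega) h
    omega

lemma emb1_surj (S : Finset ℕ) {x : ℕ} (hx : x ∈ S) : ∃ u < S.card, emb1 S u = x := by
  have : x ∈ Set.range (S.orderEmbOfFin rfl) := by
    rw [Finset.range_orderEmbOfFin]; exact hx
  obtain ⟨t, ht⟩ := this
  exact ⟨t, t.isLt, by rw [emb1, dif_pos t.isLt]; rw [← ht]⟩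

noncomputable def rowListOf (S : Finset ℕ) : List ℕ :=
  List.ofFn (fun t : Fin S.card => emb1 S (S.card - 1 - t) - (S.card - 1 - t))

lemma rowListOf_sorted (S : Finset ℕ) : (rowListOf S).Pairwise (· ≥ ·) := by
  rw [rowListOf, List.pairwise_ofFn]
  intro t t' htt'
  have ht := t.isLt; have ht' := t'.isLt
  have hlt : (t : ℕ) < (t' : ℕ) := htt'
  have h1 := emb1_step S (S.card - 1 - (t : ℕ)) (S.card - 1 - (t' : ℕ)) (by omega) (by omega)
  have h2 := emb1_ge S (u := S.card - 1 - (t' : ℕ)) (by omega)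
  omega

noncomputable def con (S : Finset ℕ) : YoungDiagram :=
  YoungDiagram.ofRowLens (rowListOf S) (rowListOf_sorted S).sortedGE

lemma rowLen_eq {Y : YoungDiagram} {i r : ℕ} (h : ∀ j, (i, j) ∈ Y ↔ j < r) :
    Y.rowLen i = r := by
  rcases Nat.lt_trichotomy (Y.rowLen i) r with h' | h' | h'
  · have := (h (Y.rowLen i)).2 h'
    rw [YoungDiagram.mem_iff_lt_rowLen] at this; omega
  · exact h'
  · have := (h r).1 (YoungDiagram.mem_iff_lt_rowLen.2 h')
    omega

lemma colLen_eq {Y : YoungDiagram} {j r : ℕ} (h : ∀ i, (i, j) ∈ Y ↔ i < r) :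
    Y.colLen j = r := by
  rcases Nat.lt_trichotomy (Y.colLen j) r with h' | h' | h'
  · have := (h (Y.colLen j)).2 h'
    rw [YoungDiagram.mem_iff_lt_colLen] at this; omega
  · exact h'
  · have := (h r).1 (YoungDiagram.mem_iff_lt_colLen.2 h')
    omega

lemma con_mem {S : Finset ℕ} {i j : ℕ} :
    (i, j) ∈ con S ↔ i < S.card ∧ j < emb1 S (S.card - 1 - i) - (S.card - 1 - i) := by
  rw [con, YoungDiagram.mem_ofRowLens]
  simp only [rowListOf, List.length_ofFn, List.getElem_ofFn]
  constructor
  · rintro ⟨h, hj⟩; exact ⟨h, hj⟩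
  · rintro ⟨h, hj⟩; exact ⟨h, hj⟩

lemma con_rowLen {S : Finset ℕ} {i : ℕ} (h : i < S.card) :
    (con S).rowLen i = emb1 S (S.card - 1 - i) - (S.card - 1 - i) := by
  apply rowLen_eq
  intro j
  rw [con_mem]
  constructor
  · rintro ⟨_, hj⟩; exact hj
  · intro hj; exact ⟨h, hj⟩

lemma con_rowLen_zero {S : Finset ℕ} {i : ℕ} (h : S.card ≤ i) : (con S).rowLen i = 0 := by
  apply rowLen_eq
  intro j
  rw [con_mem]
  constructor
  · rintro ⟨h', _⟩; omega
  · omega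

section ConCF

variable {m : ℕ} {S : Finset ℕ} (hS : S ∈ CF m)

lemma CF_one_le (hS : S ∈ CF m) : ∀ x ∈ S, 1 ≤ x := by
  intro x hx
  have := (mem_CF.1 hS).1 hx
  simp [Finset.mem_Icc] at this; omega

lemma CF_le (hS : S ∈ CF m) : ∀ x ∈ S, x ≤ m := by
  intro x hx
  have := (mem_CF.1 hS).1 hx
  simp [Finset.mem_Icc] at this; omega

lemma CF_gap (hS : S ∈ CF m) : ∀ x ∈ S, x + 1 ∉ S := (mem_CF.1 hS).2

lemma con_rowLen_pos (hS : S ∈ CF m) {i : ℕ} (h : i < S.card) :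
    0 < (con S).rowLen i := by
  rw [con_rowLen h]
  have h1 := emb1_ge_gap (CF_one_le hS) (CF_gap hS) (S.card - 1 - i) (by omega)
  omega

lemma con_colLen_zero (hS : S ∈ CF m) : (con S).colLen 0 = S.card := by
  apply colLen_eq
  intro i
  constructor
  · intro hi
    exact (con_mem.1 hi).1
  · intro hi
    rw [YoungDiagram.mem_iff_lt_rowLen]
    exact con_rowLen_pos hS hi

lemma con_distinct (hS : S ∈ CF m) : DistinctParts (con S) := by
  intro i hpos
  have h1 : i + 1 < S.card := by
    by_contra h
    rw [con_rowLen_zero (by omega)] at hpos; omega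
  rw [con_rowLen h1, con_rowLen (by omega)]
  have h2 := emb1_gap (CF_gap hS) (u := S.card - 1 - (i+1)) (v := S.card - 1 - i)
    (by omega) (by omega)
  have h3 := emb1_ge S (u := S.card - 1 - (i+1)) (by omega)
  omega

lemma betaSet_con (hS : S ∈ CF m) : betaSet (con S) = S := by
  ext x
  rw [betaSet, con_colLen_zero hS]
  simp only [Finset.mem_image, Finset.mem_range]
  constructor
  · rintro ⟨i, hi, rfl⟩
    rw [con_rowLen hi]
    have h1 := emb1_ge S (u := S.card - 1 - i) (by omega)
    have h2 : emb1 S (S.card - 1 - i) - (S.card - 1 - i) + (S.card - 1 - i)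
        = emb1 S (S.card - 1 - i) := by omega
    rw [h2]
    exact emb1_mem S (by omega)
  · intro hx
    obtain ⟨u, hu, hux⟩ := emb1_surj S hx
    refine ⟨S.card - 1 - u, by omega, ?_⟩
    have h3 : S.card - 1 - (S.card - 1 - u) = u := by omega
    rw [con_rowLen (by omega), h3]
    have h1 := emb1_ge S (u := u) hu
    omega

/-- the largest hook of `con S` is `max S`, located at the corner -/
lemma con_hook_le (hS : S ∈ CF m) {i j : ℕ} (hij : (i, j) ∈ con S) :
    1 ≤ hook (con S) i j ∧ hook (con S) i j ≤ m := by
  have hi : i < S.card := (con_mem.1 hij).1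
  have hj : j < (con S).rowLen i := YoungDiagram.mem_iff_lt_rowLen.1 hij
  have hij' : i < (con S).colLen j := YoungDiagram.mem_iff_lt_colLen.1 hij
  have hr0 : (con S).rowLen i ≤ (con S).rowLen 0 := (con S).rowLen_anti 0 i (by omega)
  have hc0 : (con S).colLen j ≤ (con S).colLen 0 := (con S).colLen_anti 0 j (by omega)
  have hcol := con_colLen_zero hS
  have hrow := con_rowLen (S := S) (i := 0) (by omega)
  have h1 := emb1_ge S (u := S.card - 1 - 0) (by omega)
  have h2 := CF_le hS _ (emb1_mem S (u := S.card - 1 - 0) (by omega))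
  rw [hook]
  omega

lemma con_isCore (hS : S ∈ CF m) {t : ℕ} (ht : m < t) : IsCore (con S) t := by
  rintro ⟨i, j⟩ hc hdvd
  rw [YoungDiagram.mem_cells] at hc
  simp only at hdvd
  have h1 := con_hook_le hS hc
  have h2 := Nat.le_of_dvd (by omega) hdvd
  omega

end ConCF

lemma YD_card_eq (Y : YoungDiagram) :
    Y.card = ∑ i ∈ Finset.range (Y.colLen 0), Y.rowLen i := by
  rw [YoungDiagram.card]
  have hcells : Y.cells = (Finset.range (Y.colLen 0)).biUnion
      (fun i => {i} ×ˢ Finset.range (Y.rowLen i)) := by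
    ext ⟨i, j⟩
    simp only [Finset.mem_biUnion, Finset.mem_range, Finset.mem_product,
      Finset.mem_singleton]
    constructor
    · intro hc
      rw [YoungDiagram.mem_cells] at hc
      refine ⟨i, ?_, rfl, YoungDiagram.mem_iff_lt_rowLen.1 hc⟩
      have h1 : i < Y.colLen j := YoungDiagram.mem_iff_lt_colLen.1 hc
      have h2 := Y.colLen_anti 0 j (by omega)
      omega
    · rintro ⟨i', hi', rfl, hj⟩
      rw [YoungDiagram.mem_cells, YoungDiagram.mem_iff_lt_rowLen]
      exact hj
  rw [hcells, Finset.card_biUnion]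
  · apply Finset.sum_congr rfl
    intro i _
    rw [Finset.card_product, Finset.card_singleton, Finset.card_range, one_mul]
  · intro a _ b _ hab
    simp only [Finset.disjoint_left]
    rintro ⟨i, j⟩ h1 h2
    simp only [Finset.mem_product, Finset.mem_singleton] at h1 h2
    exact hab (h1.1.symm.trans h2.1)

/-- the real-valued size statistic on finsets -/
noncomputable def Xr (S : Finset ℕ) : ℝ :=
  (∑ s ∈ S, (s : ℝ)) - (S.card : ℝ) * ((S.card : ℝ) - 1) / 2

lemma con_card {m : ℕ} {S : Finset ℕ} (hS : S ∈ CF m) :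
    ((con S).card : ℝ) = Xr S := by
  rw [YD_card_eq, con_colLen_zero hS]
  have hterm : ∀ i ∈ Finset.range S.card,
      (con S).rowLen i = emb1 S (S.card - 1 - i) - (S.card - 1 - i) := by
    intro i hi
    rw [Finset.mem_range] at hi
    exact con_rowLen hi
  rw [Finset.sum_congr rfl hterm]
  -- reindex i ↦ S.card - 1 - i
  have hre : ∑ i ∈ Finset.range S.card, (emb1 S (S.card - 1 - i) - (S.card - 1 - i))
      = ∑ u ∈ Finset.range S.card, (emb1 S u - u) := by
    apply Finset.sum_nbij' (fun i => S.card - 1 - i) (fun u => S.card - 1 - u)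
    all_goals intro a ha
    all_goals simp only [Finset.mem_range] at *
    all_goals omega
  rw [hre]
  have hsub : ∀ u ∈ Finset.range S.card, (emb1 S u - u : ℕ) = ((emb1 S u : ℤ) - u).toNat := by
    intro u hu
    rw [Finset.mem_range] at hu
    have := emb1_ge S hu
    omega
  -- compute over ℝ
  have hcast : ((∑ u ∈ Finset.range S.card, (emb1 S u - u) : ℕ) : ℝ)
      = (∑ u ∈ Finset.range S.card, ((emb1 S u : ℝ) - u)) := by
    rw [Nat.cast_sum]
    apply Finset.sum_congr rfl
    intro u hu
    rw [Finset.mem_range] at hu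
    have := emb1_ge S hu
    have h2 : (emb1 S u - u : ℕ) = emb1 S u - u := rfl
    push_cast [Nat.cast_sub this]
    ring
  rw [hcast, Finset.sum_sub_distrib]
  have hS1 : ∑ u ∈ Finset.range S.card, (emb1 S u : ℝ) = ∑ s ∈ S, (s : ℝ) := by
    apply Finset.sum_nbij (fun u => emb1 S u)
    · intro u hu
      rw [Finset.mem_range] at hu
      exact emb1_mem S hu
    · intro a ha b hb hab
      simp only [Finset.mem_coe, Finset.mem_range] at *
      by_contra hne
      rcases Nat.lt_or_ge a b with h | h
      · have := emb1_lt S h hb; omega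
      · have := emb1_lt S (u := b) (v := a) (by omega) ha; omega
    · intro x hx
      simp only [Finset.coe_range, Set.mem_image, Set.mem_Iio]
      exact (emb1_surj S (by simpa using hx)).imp (fun u ⟨h1, h2⟩ => ⟨h1, h2⟩)
    · intro u hu; rfl
  have hS2 : ∑ u ∈ Finset.range S.card, (u : ℝ) = (S.card : ℝ) * ((S.card : ℝ) - 1) / 2 := by
    induction S.card with
    | zero => simp
    | succ n ih => rw [Finset.sum_range_succ, ih]; push_cast; ring
  rw [hS1, hS2, Xr]

section Hard

/-- beta numbers of a Young diagram -/
def bY (Y : YoungDiagram) (i : ℕ) : ℕ := Y.rowLen i + (Y.colLen 0 - 1 - i)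

variable {Y : YoungDiagram}

lemma row_pos_iff {i : ℕ} : 0 < Y.rowLen i ↔ i < Y.colLen 0 := by
  rw [← YoungDiagram.mem_iff_lt_rowLen, ← YoungDiagram.mem_iff_lt_colLen]

lemma mem_betaSet {x : ℕ} : x ∈ betaSet Y ↔ ∃ i < Y.colLen 0, bY Y i = x := by
  rw [betaSet]
  simp only [Finset.mem_image, Finset.mem_range]
  rfl

lemma bY_anti {i j : ℕ} (hij : i ≤ j) (hj : j < Y.colLen 0) : bY Y j ≤ bY Y i := by
  have h1 := Y.rowLen_anti i j hij
  have h2 := row_pos_iff.2 hj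
  rw [bY, bY]
  omega

lemma bY_strict_anti {i j : ℕ} (hij : i < j) (hj : j < Y.colLen 0) : bY Y j < bY Y i := by
  have h1 := Y.rowLen_anti i j (by omega)
  have h2 := row_pos_iff.2 hj
  rw [bY, bY]
  omega

lemma bY_gap (hD : DistinctParts Y) {i j : ℕ} (hij : i < j) (hj : j < Y.colLen 0) :
    bY Y j + 2 ≤ bY Y i := by
  have hstep : bY Y (i + 1) + 2 ≤ bY Y i := by
    have hpos : 0 < Y.rowLen (i + 1) := row_pos_iff.2 (by omega)
    have := hD i hpos
    rw [bY, bY]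
    omega
  have : bY Y j ≤ bY Y (i + 1) := bY_anti (by omega) hj
  omega

lemma betaSet_card : (betaSet Y).card = Y.colLen 0 := by
  rw [betaSet, Finset.card_image_of_injOn, Finset.card_range]
  intro i hi j hj hij
  simp only [Finset.mem_coe, Finset.mem_range] at hi hj
  have hij' : bY Y i = bY Y j := hij
  by_contra hne
  rcases Nat.lt_or_ge i j with h | h
  · have := bY_strict_anti h hj
    omega
  · have := bY_strict_anti (i := j) (j := i) (by omega) hi
    omega

lemma betaSet_pos {x : ℕ} (hx : x ∈ betaSet Y) : 1 ≤ x := by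
  obtain ⟨i, hi, rfl⟩ := mem_betaSet.1 hx
  have := row_pos_iff.2 hi
  rw [bY]
  omega

lemma betaSet_le_b0 {x : ℕ} (hx : x ∈ betaSet Y) : x ≤ bY Y 0 := by
  obtain ⟨i, hi, rfl⟩ := mem_betaSet.1 hx
  exact bY_anti (by omega) hi

/-- first-column hooks are the beta numbers -/
lemma hook_col0 {i : ℕ} (hi : i < Y.colLen 0) : hook Y i 0 = bY Y i := by
  have h1 := row_pos_iff.2 hi
  rw [hook, bY]
  omega

/-- row-0 hook existence: any value whose complement is not a beta number is a hook -/
lemma hook_row0 (hpos : 0 < Y.colLen 0) {c : ℕ} (hc : c < bY Y 0)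
    (hcb : c ∉ (betaSet Y).erase (bY Y 0)) :
    ∃ j < Y.rowLen 0, hook Y 0 j = bY Y 0 - c := by
  set ℓ := Y.colLen 0 with hℓ
  have hlam0 : 0 < Y.rowLen 0 := row_pos_iff.2 hpos
  have hcolle : ∀ j, Y.colLen j ≤ ℓ := fun j => Y.colLen_anti 0 j (by omega)
  have hcolpos : ∀ j < Y.rowLen 0, 0 < Y.colLen j := by
    intro j hj
    rw [← YoungDiagram.mem_iff_lt_colLen (i := 0)]
    rw [YoungDiagram.mem_iff_lt_rowLen]
    exact hj
  set ψ : ℕ → ℕ := fun j => j + (ℓ - Y.colLen j) with hψ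
  have hb0 : bY Y 0 = Y.rowLen 0 + (ℓ - 1) := by rw [bY]; omega
  -- ψ is strictly monotone on range (rowLen 0)
  have hmono : ∀ j j', j < j' → j' < Y.rowLen 0 → ψ j < ψ j' := by
    intro j j' h1 h2
    have := Y.colLen_anti j j' (by omega)
    have := hcolle j
    simp only [hψ]
    omega
  -- ψ avoids the beta numbers bY i for 1 ≤ i < ℓ
  have havoid : ∀ j < Y.rowLen 0, ∀ i, 1 ≤ i → i < ℓ → ψ j ≠ bY Y i := by
    intro j hj i hi1 hi2 heq
    have hbi : bY Y i = Y.rowLen i + (ℓ - 1 - i) := rfl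
    rcases Nat.lt_or_ge j (Y.rowLen i) with h | h
    · have hmem : (i, j) ∈ Y := YoungDiagram.mem_iff_lt_rowLen.2 h
      have : i < Y.colLen j := YoungDiagram.mem_iff_lt_colLen.1 hmem
      have := hcolle j
      simp only [hψ] at heq
      omega
    · have hmem : (i, j) ∉ Y := fun hm => by
        have := YoungDiagram.mem_iff_lt_rowLen.1 hm; omega
      have : ¬ i < Y.colLen j := fun hm => hmem (YoungDiagram.mem_iff_lt_colLen.2 hm)
      have hrpos : 0 < Y.rowLen i := row_pos_iff.2 hi2
      simp only [hψ] at heq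
      omega
  -- the image of ψ equals the complement T
  set T : Finset ℕ := (Finset.range (bY Y 0)) \ ((betaSet Y).erase (bY Y 0)) with hT
  have hsubT : (Finset.range (Y.rowLen 0)).image ψ ⊆ T := by
    intro x hx
    obtain ⟨j, hj, rfl⟩ := Finset.mem_image.1 hx
    rw [Finset.mem_range] at hj
    rw [hT, Finset.mem_sdiff, Finset.mem_range]
    constructor
    · have := hcolpos j hj
      have := hcolle j
      simp only [hψ]
      omega
    · intro hmem
      have hne := Finset.ne_of_mem_erase hmem
      obtain ⟨i, hi, hbi⟩ := mem_betaSet.1 (Finset.mem_of_mem_erase hmem)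
      have hi0 : 1 ≤ i := by
        rcases Nat.eq_zero_or_pos i with h0 | h0
        · exfalso; apply hne; rw [← hbi, h0]
        · exact h0
      exact havoid j hj i hi0 hi hbi.symm
  have hcardim : ((Finset.range (Y.rowLen 0)).image ψ).card = Y.rowLen 0 := by
    rw [Finset.card_image_of_injOn, Finset.card_range]
    intro a ha b hb hab
    simp only [Finset.mem_coe, Finset.mem_range] at ha hb
    by_contra hne
    rcases Nat.lt_or_ge a b with h | h
    · have := hmono a b h hb; omega
    · have := hmono b a (by omega) ha; omega
  have hcardT : T.card = Y.rowLen 0 := by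
    rw [hT, Finset.card_sdiff_of_subset]
    · rw [Finset.card_erase_of_mem, betaSet_card, Finset.card_range]
      · omega
      · exact mem_betaSet.2 ⟨0, hpos, rfl⟩
    · intro x hx
      have hne := Finset.ne_of_mem_erase hx
      have hle := betaSet_le_b0 (Finset.mem_of_mem_erase hx)
      rw [Finset.mem_range]
      omega
  have heqT : (Finset.range (Y.rowLen 0)).image ψ = T :=
    Finset.eq_of_subset_of_card_le hsubT (by omega)
  -- conclude
  have hcT : c ∈ T := by
    rw [hT, Finset.mem_sdiff, Finset.mem_range]
    exact ⟨hc, hcb⟩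
  rw [← heqT] at hcT
  obtain ⟨j, hj, hjc⟩ := Finset.mem_image.1 hcT
  rw [Finset.mem_range] at hj
  refine ⟨j, hj, ?_⟩
  have h1 := hcolpos j hj
  have h2 := hcolle j
  rw [hook]
  simp only [hψ] at hjc
  omega

end Hard

section Hard2

variable {Y : YoungDiagram} {n : ℕ}

lemma b0_le (hD : DistinctParts Y) (hc1 : IsCore Y n) (hc2 : IsCore Y (n + 1))
    (hn : 1 ≤ n) (hpos : 0 < Y.colLen 0) : bY Y 0 ≤ n - 1 := by
  by_contra hcon
  have hb0 : n ≤ bY Y 0 := by omega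
  have key : ∀ d, 1 ≤ d → d ≤ bY Y 0 → (∀ j < Y.rowLen 0, hook Y 0 j ≠ d) →
      (bY Y 0 - d) ∈ (betaSet Y).erase (bY Y 0) := by
    intro d hd1 hd2 hhook
    by_contra hne
    obtain ⟨j, hj, hjh⟩ := hook_row0 hpos (c := bY Y 0 - d) (by omega) hne
    exact hhook j hj (by omega)
  have hcore : ∀ d, 1 ≤ d → d ≤ bY Y 0 → (d = n ∨ d = n + 1) →
      (bY Y 0 - d) ∈ betaSet Y := by
    intro d hd1 hd2 hdn
    apply Finset.mem_of_mem_erase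
    apply key d hd1 hd2
    intro j hj heq
    have hcell : (0, j) ∈ Y.cells := by
      rw [YoungDiagram.mem_cells, YoungDiagram.mem_iff_lt_rowLen]
      exact hj
    rcases hdn with rfl | rfl
    · exact hc1 (0, j) hcell (by rw [heq])
    · exact hc2 (0, j) hcell (by rw [heq])
  rcases Nat.eq_or_lt_of_le hb0 with heq | hlt
  · have h0 : (0 : ℕ) ∈ betaSet Y := by
      have := hcore n hn (by omega) (Or.inl rfl)
      have he : bY Y 0 - n = 0 := by omega
      rwa [he] at this
    have := betaSet_pos h0
    omega
  · have hx := hcore n hn (by omega) (Or.inl rfl)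
    have hy := hcore (n + 1) (by omega) (by omega) (Or.inr rfl)
    obtain ⟨i, hi, hbi⟩ := mem_betaSet.1 hx
    obtain ⟨i', hi', hbi'⟩ := mem_betaSet.1 hy
    have hne : i ≠ i' := by
      intro h; rw [h, hbi'] at hbi; omega
    rcases Nat.lt_or_ge i i' with h | h
    · have := bY_gap hD h hi'
      omega
    · have := bY_gap hD (i := i') (j := i) (by omega) hi
      omega

lemma betaSet_mem_CF (hD : DistinctParts Y) (hc1 : IsCore Y n) (hc2 : IsCore Y (n + 1))
    (hn : 1 ≤ n) : betaSet Y ∈ CF (n - 1) := by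
  rw [mem_CF]
  constructor
  · intro x hx
    rw [Finset.mem_Icc]
    refine ⟨betaSet_pos hx, ?_⟩
    have hle := betaSet_le_b0 hx
    have hpos : 0 < Y.colLen 0 := by
      obtain ⟨i, hi, _⟩ := mem_betaSet.1 hx
      omega
    have := b0_le hD hc1 hc2 hn hpos
    omega
  · intro x hx hx1
    obtain ⟨i, hi, hbi⟩ := mem_betaSet.1 hx
    obtain ⟨i', hi', hbi'⟩ := mem_betaSet.1 hx1
    have hne : i ≠ i' := by
      intro h; rw [h, hbi'] at hbi; omega
    rcases Nat.lt_or_ge i i' with h | h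
    · have := bY_gap hD h hi'
      omega
    · have := bY_gap hD (i := i') (j := i) (by omega) hi
      omega

/-- reconstruction: `con (betaSet Y) = Y` -/
lemma con_betaSet (hD : DistinctParts Y) : con (betaSet Y) = Y := by
  set S := betaSet Y with hSdef
  have hcard : S.card = Y.colLen 0 := betaSet_card
  -- the increasing enumeration of S is u ↦ bY (ℓ - 1 - u)
  have hemb : ∀ u, u < S.card → emb1 S u = bY Y (Y.colLen 0 - 1 - u) := by
    have hmono2 : StrictMono (fun t : Fin (Y.colLen 0) => bY Y (Y.colLen 0 - 1 - (t : ℕ))) := by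
      intro t t' htt'
      have ht := t.isLt; have ht' := t'.isLt
      have hlt : (t : ℕ) < (t' : ℕ) := htt'
      exact bY_strict_anti (by omega) (by omega)
    have hmem : ∀ t : Fin (Y.colLen 0),
        (fun t : Fin (Y.colLen 0) => bY Y (Y.colLen 0 - 1 - (t : ℕ))) t ∈ S := by
      intro t
      have ht := t.isLt
      exact mem_betaSet.2 ⟨Y.colLen 0 - 1 - (t : ℕ), by omega, rfl⟩
    have huniq := Finset.orderEmbOfFin_unique hcard hmem hmono2
    intro u hu
    have hu' : u < Y.colLen 0 := by omega
    have := congrFun huniq ⟨u, hu'⟩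
    simp only at this
    rw [emb1, dif_pos hu]
    rw [Finset.orderEmbOfFin_apply] at this ⊢
    exact this.symm
  -- row lengths agree
  have hrow : ∀ i, (con S).rowLen i = Y.rowLen i := by
    intro i
    rcases Nat.lt_or_ge i S.card with h | h
    · rw [con_rowLen h, hemb _ (by omega)]
      have h2 : Y.colLen 0 - 1 - (S.card - 1 - i) = i := by omega
      rw [h2, bY]
      have : 0 < Y.rowLen i := row_pos_iff.2 (by omega)
      omega
    · rw [con_rowLen_zero h]
      have : ¬ 0 < Y.rowLen i := fun hp => by
        have := row_pos_iff.1 hp; omega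
      omega
  ext ⟨i, j⟩
  simp only [YoungDiagram.mem_cells]
  rw [YoungDiagram.mem_iff_lt_rowLen, YoungDiagram.mem_iff_lt_rowLen, hrow]

end Hard2

noncomputable local instance : DecidableEq YoungDiagram := Classical.decEq _

lemma setEq {n : ℕ} (hn : 1 ≤ n) :
    {Y : YoungDiagram | DistinctParts Y ∧ IsCore Y n ∧ IsCore Y (n + 1)} =
      ↑((CF (n - 1)).image con) := by
  ext Y
  simp only [Set.mem_setOf_eq, Finset.coe_image, Set.mem_image, Finset.mem_coe]
  constructor
  · rintro ⟨hD, hc1, hc2⟩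
    exact ⟨betaSet Y, betaSet_mem_CF hD hc1 hc2 hn, con_betaSet hD⟩
  · rintro ⟨S, hS, rfl⟩
    exact ⟨con_distinct hS, con_isCore hS (by omega), con_isCore hS (by omega)⟩

lemma con_injOn {n : ℕ} : Set.InjOn con ↑(CF n) := by
  intro S hS S' hS' h
  rw [Finset.mem_coe] at hS hS'
  rw [← betaSet_con (m := n) hS, ← betaSet_con (m := n) hS', h]

lemma main_sum_eq {n : ℕ} (hn : 1 ≤ n) (g : ℝ → ℝ) :
    (∑ᶠ Y ∈ {Y : YoungDiagram | DistinctParts Y ∧ IsCore Y n ∧ IsCore Y (n + 1)},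
      g ((Y.card : ℝ))) = ∑ S ∈ CF (n - 1), g (Xr S) := by
  rw [setEq hn, finsum_mem_coe_finset, Finset.sum_image (by
    intro S hS S' hS' h
    exact con_injOn (Finset.mem_coe.2 hS) (Finset.mem_coe.2 hS') h)]
  apply Finset.sum_congr rfl
  intro S hS
  rw [con_card hS]

lemma main_ncard_eq {n : ℕ} (hn : 1 ≤ n) :
    {Y : YoungDiagram | DistinctParts Y ∧ IsCore Y n ∧ IsCore Y (n + 1)}.ncard =
      (CF (n - 1)).card := by
  rw [setEq hn, Set.ncard_coe_finset, Finset.card_image_of_injOn (by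
    intro S hS S' hS' h
    exact con_injOn (Finset.mem_coe.2 hS) (Finset.mem_coe.2 hS') h)]

/-! ## Part II: counting -/

lemma CF_zero : CF 0 = {∅} := by
  ext S
  rw [mem_CF]
  simp only [Finset.mem_singleton]
  constructor
  · rintro ⟨h1, _⟩
    have : Finset.Icc 1 0 = (∅ : Finset ℕ) := by simp
    rw [this, Finset.subset_empty] at h1
    exact h1
  · rintro rfl
    simp

lemma CF_one : CF 1 = {∅, {1}} := by
  ext S
  rw [mem_CF]
  simp only [Finset.mem_insert, Finset.mem_singleton]
  constructor
  · rintro ⟨h1, _⟩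
    have hIcc : Finset.Icc 1 1 = ({1} : Finset ℕ) := by rfl
    rw [hIcc, Finset.subset_singleton_iff] at h1
    exact h1
  · rintro (rfl | rfl) <;> simp [Finset.subset_iff]

lemma CF_filter_not {m : ℕ} :
    (CF (m + 2)).filter (fun S => m + 2 ∉ S) = CF (m + 1) := by
  ext S
  rw [Finset.mem_filter, mem_CF, mem_CF]
  constructor
  · rintro ⟨⟨h1, h2⟩, h3⟩
    refine ⟨?_, h2⟩
    intro x hx
    have := h1 hx
    rw [Finset.mem_Icc] at *
    have : x ≠ m + 2 := fun he => h3 (he ▸ hx)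
    omega
  · rintro ⟨h1, h2⟩
    refine ⟨⟨?_, h2⟩, ?_⟩
    · intro x hx
      have := h1 hx
      rw [Finset.mem_Icc] at *
      omega
    · intro hmem
      have := h1 hmem
      rw [Finset.mem_Icc] at this
      omega

lemma CF_filter_mem {m : ℕ} :
    (CF (m + 2)).filter (fun S => m + 2 ∈ S) = (CF m).image (insert (m + 2)) := by
  ext S
  rw [Finset.mem_filter, mem_CF]
  simp only [Finset.mem_image]
  constructor
  · rintro ⟨⟨h1, h2⟩, h3⟩
    refine ⟨S.erase (m + 2), ?_, ?_⟩
    · rw [mem_CF]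
      constructor
      · intro x hx
        have hxS := Finset.mem_of_mem_erase hx
        have hne := Finset.ne_of_mem_erase hx
        have := h1 hxS
        rw [Finset.mem_Icc] at *
        have hne2 : x ≠ m + 1 := by
          rintro rfl
          exact h2 _ hxS h3
        omega
      · intro x hx
        exact fun hc => h2 x (Finset.mem_of_mem_erase hx) (Finset.mem_of_mem_erase hc)
    · rw [Finset.insert_erase h3]
  · rintro ⟨S', hS', rfl⟩
    rw [mem_CF] at hS'
    obtain ⟨h1, h2⟩ := hS'
    have hnotin : m + 2 ∉ S' := fun hc => by
      have := h1 hc; rw [Finset.mem_Icc] at this; omega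
    refine ⟨⟨?_, ?_⟩, Finset.mem_insert_self _ _⟩
    · intro x hx
      rcases Finset.mem_insert.1 hx with rfl | hx'
      · rw [Finset.mem_Icc]; omega
      · have := h1 hx'; rw [Finset.mem_Icc] at *; omega
    · intro x hx hc
      rcases Finset.mem_insert.1 hx with rfl | hx'
      · rcases Finset.mem_insert.1 hc with h | h
        · omega
        · have := h1 h; rw [Finset.mem_Icc] at this; omega
      · rcases Finset.mem_insert.1 hc with h | h
        · have := h1 hx'; rw [Finset.mem_Icc] at this; omega
        · exact h2 x hx' h

lemma CF_not_mem_insert {m : ℕ} {S : Finset ℕ} (hS : S ∈ CF m) : m + 2 ∉ S := by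
  intro hc
  have := CF_le hS _ hc
  omega

lemma CF_rec {m : ℕ} (f : Finset ℕ → ℝ) :
    ∑ S ∈ CF (m + 2), f S =
      (∑ S ∈ CF (m + 1), f S) + ∑ S ∈ CF m, f (insert (m + 2) S) := by
  rw [← Finset.sum_filter_add_sum_filter_not (CF (m+2)) (fun S => m + 2 ∈ S),
    CF_filter_mem, CF_filter_not, Finset.sum_image, add_comm]
  intro S hS S' hS' h
  have h1 := CF_not_mem_insert hS
  have h2 := CF_not_mem_insert hS'
  rw [← Finset.erase_insert h1, ← Finset.erase_insert h2, h]

lemma insert_card_real {m : ℕ} {S : Finset ℕ} (hS : S ∈ CF m) :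
    ((insert (m + 2) S).card : ℝ) = (S.card : ℝ) + 1 := by
  rw [Finset.card_insert_of_notMem (CF_not_mem_insert hS)]
  push_cast
  ring

lemma insert_Xr {m : ℕ} {S : Finset ℕ} (hS : S ∈ CF m) :
    Xr (insert (m + 2) S) = Xr S + (m + 2) - (S.card : ℝ) := by
  rw [Xr, Xr, Finset.sum_insert (CF_not_mem_insert hS), insert_card_real hS]
  push_cast
  ring

noncomputable def fR (i : ℕ) : ℝ := (Nat.fib i : ℝ)

lemma fR_rec (i : ℕ) : fR (i + 2) = fR (i + 1) + fR i := by
  rw [fR, fR, fR, Nat.fib_add_two]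
  push_cast
  ring

/-- the closed forms, with raw sums -/
def ClosedForms (m : ℕ) : Prop :=
  (((CF m).card : ℝ) = fR (m + 2)) ∧
  5 * (∑ S ∈ CF m, (S.card : ℝ)) = (2 * m + 2) * fR (m + 2) - (m + 2) * fR (m + 1) ∧
  25 * (∑ S ∈ CF m, (S.card : ℝ) ^ 2) =
    (5 * m ^ 2 + 13 * m + 8) * fR (m + 2) - (5 * m ^ 2 + 14 * m + 8) * fR (m + 1) ∧
  50 * (∑ S ∈ CF m, Xr S) = (5 * m ^ 2 + 17 * m + 12) * fR (m + 2) - (6 * m + 12) * fR (m + 1) ∧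
  50 * (∑ S ∈ CF m, Xr S * (S.card : ℝ)) = (2 * m ^ 3 + 11 * m ^ 2 + 21 * m + 12) * fR (m + 2)
      - (m ^ 3 + 9 * m ^ 2 + 20 * m + 12) * fR (m + 1) ∧
  1500 * (∑ S ∈ CF m, Xr S ^ 2) =
    (15 * m ^ 4 + 110 * m ^ 3 + 315 * m ^ 2 + 412 * m + 192) * fR (m + 2)
      - (20 * m ^ 3 + 120 * m ^ 2 + 256 * m + 192) * fR (m + 1)

lemma two_step {P : ℕ → Prop} (h0 : P 0) (h1 : P 1) (hstep : ∀ m, P m → P (m + 1) → P (m + 2)) :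
    ∀ m, P m := by
  have key : ∀ m, P m ∧ P (m + 1) := by
    intro m
    induction m with
    | zero => exact ⟨h0, h1⟩
    | succ k ih => exact ⟨ih.2, hstep k ih.1 ih.2⟩
  exact fun m => (key m).1

lemma Xr_empty : Xr ∅ = 0 := by simp [Xr]

lemma Xr_one : Xr {1} = 1 := by simp [Xr]

lemma closed_forms : ∀ m, ClosedForms m := by
  apply two_step
  · -- m = 0
    have h2 : fR 2 = 1 := by norm_num [fR]
    have h1 : fR 1 = 1 := by norm_num [fR]
    refine ⟨?_, ?_, ?_, ?_, ?_, ?_⟩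
    all_goals simp [CF_zero, Xr_empty, h2, h1]
    all_goals norm_num
  · -- m = 1
    have h3 : fR 3 = 2 := by norm_num [fR]
    have h2 : fR 2 = 1 := by norm_num [fR]
    have hne : (∅ : Finset ℕ) ≠ {1} := by
      intro h
      have : (1 : ℕ) ∈ (∅ : Finset ℕ) := h ▸ Finset.mem_singleton_self 1
      simp at this
    refine ⟨?_, ?_, ?_, ?_, ?_, ?_⟩
    all_goals simp [CF_one, Finset.sum_pair hne, Finset.card_pair hne, Xr_empty, Xr_one, h3, h2]
    all_goals norm_num
  · -- step
    rintro m ⟨g0, l0, l20, p0, xl0, q0⟩ ⟨g1, l1, l21, p1, xl1, q1⟩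
    have hf2 : fR (m + 3) = fR (m + 2) + fR (m + 1) := fR_rec (m + 1)
    have hf1 : fR (m + 4) = 2 * fR (m + 2) + fR (m + 1) := by
      have h := fR_rec (m + 2)
      rw [show m + 2 + 2 = m + 4 from rfl, show m + 2 + 1 = m + 3 from rfl] at h
      rw [h, hf2]; ring
    simp only [show m + 1 + 2 = m + 3 from rfl, show m + 1 + 1 = m + 2 from rfl]
      at g1 l1 l21 p1 xl1 q1
    rw [hf2] at g1 l1 l21 p1 xl1 q1
    push_cast at g1 l1 l21 p1 xl1 q1
    have hcard : ∀ S ∈ CF m, ((insert (m + 2) S).card : ℝ) = (S.card : ℝ) + 1 :=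
      fun S hS => insert_card_real hS
    have hXrv : ∀ S ∈ CF m, Xr (insert (m + 2) S) = Xr S + ((m : ℝ) + 2) - (S.card : ℝ) := by
      intro S hS
      rw [insert_Xr hS]
      try push_cast
      try ring
    have hgcard : (((CF (m + 2)).card : ℝ)) = ((CF (m + 1)).card : ℝ) + ((CF m).card : ℝ) := by
      have h := CF_rec (m := m) (fun _ => (1 : ℝ))
      simpa [Finset.sum_const, nsmul_eq_mul] using h
    -- congruence rewrites for inserted sums
    have e1 : ∑ S ∈ CF m, ((insert (m + 2) S).card : ℝ) = ∑ S ∈ CF m, ((S.card : ℝ) + 1) :=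
      Finset.sum_congr rfl hcard
    have e2 : ∑ S ∈ CF m, ((insert (m + 2) S).card : ℝ) ^ 2
        = ∑ S ∈ CF m, ((S.card : ℝ) ^ 2 + 2 * (S.card : ℝ) + 1) :=
      Finset.sum_congr rfl (fun S hS => by rw [hcard S hS]; ring)
    have e3 : ∑ S ∈ CF m, Xr (insert (m + 2) S)
        = ∑ S ∈ CF m, (Xr S + ((m : ℝ) + 2) - (S.card : ℝ)) :=
      Finset.sum_congr rfl hXrv
    have e4 : ∑ S ∈ CF m, Xr (insert (m + 2) S) * ((insert (m + 2) S).card : ℝ)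
        = ∑ S ∈ CF m, (Xr S * (S.card : ℝ) + Xr S + (((m : ℝ) + 1) * (S.card : ℝ)
          + ((m : ℝ) + 2)) - (S.card : ℝ) ^ 2) :=
      Finset.sum_congr rfl (fun S hS => by rw [hcard S hS, hXrv S hS]; ring)
    have e5 : ∑ S ∈ CF m, Xr (insert (m + 2) S) ^ 2
        = ∑ S ∈ CF m, (Xr S ^ 2 + (2 * ((m : ℝ) + 2)) * Xr S + (((m : ℝ) + 2) ^ 2
          + (S.card : ℝ) ^ 2) - ((2 * ((m : ℝ) + 2)) * (S.card : ℝ)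
          + 2 * (Xr S * (S.card : ℝ)))) :=
      Finset.sum_congr rfl (fun S hS => by rw [hXrv S hS]; ring)
    refine ⟨?_, ?_, ?_, ?_, ?_, ?_⟩
    · rw [show m + 2 + 2 = m + 4 from rfl, hgcard, g1, g0, hf1]
      ring
    · rw [show m + 2 + 2 = m + 4 from rfl, show m + 2 + 1 = m + 3 from rfl, hf1, hf2,
        CF_rec, e1]
      simp only [Finset.sum_add_distrib, Finset.sum_const, nsmul_eq_mul, mul_one]
      push_cast
      linear_combination l1 + l0 + 5 * g0
    · rw [show m + 2 + 2 = m + 4 from rfl, show m + 2 + 1 = m + 3 from rfl, hf1, hf2,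
        CF_rec, e2]
      simp only [Finset.sum_add_distrib, ← Finset.mul_sum, Finset.sum_const,
        nsmul_eq_mul, mul_one]
      push_cast
      linear_combination l21 + l20 + 10 * l0 + 25 * g0
    · rw [show m + 2 + 2 = m + 4 from rfl, show m + 2 + 1 = m + 3 from rfl, hf1, hf2,
        CF_rec, e3]
      simp only [Finset.sum_sub_distrib, Finset.sum_add_distrib, Finset.sum_const,
        nsmul_eq_mul, mul_one]
      push_cast
      linear_combination p1 + p0 + 50 * ((m : ℝ) + 2) * g0 - 10 * l0
    · rw [show m + 2 + 2 = m + 4 from rfl, show m + 2 + 1 = m + 3 from rfl, hf1, hf2,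
        CF_rec, e4]
      simp only [Finset.sum_sub_distrib, Finset.sum_add_distrib, ← Finset.mul_sum,
        Finset.sum_const, nsmul_eq_mul, mul_one]
      push_cast
      linear_combination xl1 + xl0 + p0 + 10 * ((m : ℝ) + 1) * l0
        + 50 * ((m : ℝ) + 2) * g0 - 2 * l20
    · rw [show m + 2 + 2 = m + 4 from rfl, show m + 2 + 1 = m + 3 from rfl, hf1, hf2,
        CF_rec, e5]
      simp only [Finset.sum_sub_distrib, Finset.sum_add_distrib, ← Finset.mul_sum,
        Finset.sum_const, nsmul_eq_mul, mul_one]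
      push_cast
      linear_combination q1 + q0 + 60 * ((m : ℝ) + 2) * p0 - 60 * xl0
        + 1500 * ((m : ℝ) + 2) ^ 2 * g0 - 600 * ((m : ℝ) + 2) * l0 + 60 * l20

/-! ## Part III: final estimates -/

lemma abs_pow_sub_pow_le' {M x y : ℝ} (k : ℕ) (hx0 : 0 ≤ x) (hxM : x ≤ M) (hy0 : 0 ≤ y)
    (hyM : y ≤ M) : |x ^ k - y ^ k| ≤ (k : ℝ) * M ^ (k - 1) * |x - y| := by
  have hM0 : 0 ≤ M := le_trans hx0 hxM
  induction k with
  | zero => simp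
  | succ k ih =>
    rcases Nat.eq_zero_or_pos k with rfl | hk
    · simp
    · obtain ⟨j, rfl⟩ : ∃ j, k = j + 1 := ⟨k - 1, by omega⟩
      have hid : x ^ (j + 2) - y ^ (j + 2)
          = x ^ (j + 1) * (x - y) + y * (x ^ (j + 1) - y ^ (j + 1)) := by ring
      rw [hid]
      have hstep : |x ^ (j + 1) * (x - y) + y * (x ^ (j + 1) - y ^ (j + 1))|
          ≤ |x ^ (j + 1) * (x - y)| + |y * (x ^ (j + 1) - y ^ (j + 1))| := abs_add_le _ _
      apply le_trans hstep
      have h2 : |x ^ (j + 1)| ≤ M ^ (j + 1) := by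
        rw [abs_of_nonneg (pow_nonneg hx0 _)]
        exact pow_le_pow_left₀ hx0 hxM _
      have h6 : |x ^ (j + 1) * (x - y)| ≤ M ^ (j + 1) * |x - y| := by
        rw [abs_mul]
        exact mul_le_mul_of_nonneg_right h2 (abs_nonneg _)
      have ihj : |x ^ (j + 1) - y ^ (j + 1)| ≤ ((j : ℝ) + 1) * M ^ j * |x - y| := by
        have := ih
        push_cast at this
        simpa using this
      have h4 : |y * (x ^ (j + 1) - y ^ (j + 1))| ≤ M * (((j : ℝ) + 1) * M ^ j * |x - y|) := by
        rw [abs_mul]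
        apply mul_le_mul (by rw [abs_of_nonneg hy0]; exact hyM) ihj (abs_nonneg _) hM0
      have hfin : M ^ (j + 1) * |x - y| + M * (((j : ℝ) + 1) * M ^ j * |x - y|)
          = ((j : ℝ) + 2) * M ^ (j + 1) * |x - y| := by
        rw [pow_succ]
        ring
      have : ((j + 1 + 1 : ℕ) : ℝ) * M ^ (j + 1 + 1 - 1) * |x - y|
          = ((j : ℝ) + 2) * M ^ (j + 1) * |x - y| := by
        push_cast
        ring
      rw [this, ← hfin]
      exact add_le_add h6 h4

lemma abs_taylor2 {M x y : ℝ} (k : ℕ) (hx0 : 0 ≤ x) (hxM : x ≤ M) (hy0 : 0 ≤ y)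
    (hyM : y ≤ M) :
    |x ^ (k + 2) - y ^ (k + 2) - ((k : ℝ) + 2) * y ^ (k + 1) * (x - y)| ≤
      (((k : ℝ) + 2) * ((k : ℝ) + 1) / 2) * M ^ k * (x - y) ^ 2 := by
  have hM0 : 0 ≤ M := le_trans hx0 hxM
  induction k with
  | zero =>
    rw [show x ^ (0 + 2) - y ^ (0 + 2) - (((0 : ℕ) : ℝ) + 2) * y ^ (0 + 1) * (x - y)
      = (x - y) ^ 2 by push_cast; ring]
    rw [abs_of_nonneg (sq_nonneg _)]
    push_cast
    norm_num
  | succ k ih =>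
    have hid : x ^ (k + 3) - y ^ (k + 3) - ((k : ℝ) + 3) * y ^ (k + 2) * (x - y)
        = x * (x ^ (k + 2) - y ^ (k + 2) - ((k : ℝ) + 2) * y ^ (k + 1) * (x - y))
          + ((k : ℝ) + 2) * y ^ (k + 1) * (x - y) ^ 2 := by ring
    have hgoal : x ^ (k + 1 + 2) - y ^ (k + 1 + 2)
        - (((k + 1 : ℕ) : ℝ) + 2) * y ^ (k + 1 + 1) * (x - y)
        = x * (x ^ (k + 2) - y ^ (k + 2) - ((k : ℝ) + 2) * y ^ (k + 1) * (x - y))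
          + ((k : ℝ) + 2) * y ^ (k + 1) * (x - y) ^ 2 := by
      push_cast
      ring
    rw [hgoal]
    have h1 := abs_add_le (x * (x ^ (k + 2) - y ^ (k + 2) - ((k : ℝ) + 2) * y ^ (k + 1) * (x - y)))
      (((k : ℝ) + 2) * y ^ (k + 1) * (x - y) ^ 2)
    apply le_trans h1
    have h2 : |x * (x ^ (k + 2) - y ^ (k + 2) - ((k : ℝ) + 2) * y ^ (k + 1) * (x - y))|
        ≤ M * ((((k : ℝ) + 2) * ((k : ℝ) + 1) / 2) * M ^ k * (x - y) ^ 2) := by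
      rw [abs_mul]
      apply mul_le_mul (by rw [abs_of_nonneg hx0]; exact hxM) ih (abs_nonneg _) hM0
    have h3 : |((k : ℝ) + 2) * y ^ (k + 1) * (x - y) ^ 2|
        ≤ ((k : ℝ) + 2) * M ^ (k + 1) * (x - y) ^ 2 := by
      rw [abs_mul, abs_mul, abs_of_nonneg (by positivity : (0:ℝ) ≤ (k:ℝ) + 2),
        abs_of_nonneg (pow_nonneg hy0 _), abs_of_nonneg (sq_nonneg _)]
      apply mul_le_mul_of_nonneg_right _ (sq_nonneg _)
      exact mul_le_mul_of_nonneg_left (pow_le_pow_left₀ hy0 hyM (k + 1)) (by positivity)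
    have hfin : M * ((((k : ℝ) + 2) * ((k : ℝ) + 1) / 2) * M ^ k * (x - y) ^ 2)
        + ((k : ℝ) + 2) * M ^ (k + 1) * (x - y) ^ 2
        = ((((k + 1 : ℕ) : ℝ) + 2) * (((k + 1 : ℕ) : ℝ) + 1) / 2) * M ^ (k + 1) * (x - y) ^ 2 := by
      push_cast
      rw [pow_succ]
      ring
    rw [← hfin]
    exact add_le_add h2 h3

lemma CF_card_pos (m : ℕ) : 0 < (CF m).card := by
  apply Finset.card_pos.2
  exact ⟨∅, mem_CF.2 ⟨Finset.empty_subset _, by simp⟩⟩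

lemma Xr_nonneg {m : ℕ} {S : Finset ℕ} (hS : S ∈ CF m) : 0 ≤ Xr S := by
  rw [← con_card hS]
  positivity

lemma Xr_le {m : ℕ} {S : Finset ℕ} (hS : S ∈ CF m) : Xr S ≤ (m : ℝ) ^ 2 := by
  have h1 : 0 ≤ (S.card : ℝ) * ((S.card : ℝ) - 1) / 2 := by
    have : S.card = 0 ∨ 1 ≤ S.card := by omega
    rcases this with h | h
    · rw [h]; norm_num
    · have : (1 : ℝ) ≤ (S.card : ℝ) := by exact_mod_cast h
      nlinarith
  have h2 : ∑ s ∈ S, (s : ℝ) ≤ ∑ s ∈ Finset.Icc 1 m, (s : ℝ) :=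
    Finset.sum_le_sum_of_subset_of_nonneg (mem_CF.1 hS).1 (fun i _ _ => by positivity)
  have h3 : ∑ s ∈ Finset.Icc 1 m, (s : ℝ) ≤ (m : ℝ) * (m : ℝ) := by
    have hb : ∀ x ∈ Finset.Icc 1 m, (x : ℝ) ≤ (m : ℝ) := by
      intro x hx
      rw [Finset.mem_Icc] at hx
      exact_mod_cast hx.2
    calc ∑ s ∈ Finset.Icc 1 m, (s : ℝ) ≤ (Finset.Icc 1 m).card • (m : ℝ) :=
          Finset.sum_le_card_nsmul _ _ _ hb
      _ = (m : ℝ) * (m : ℝ) := by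
          rw [Nat.card_Icc, nsmul_eq_mul]
          push_cast
          ring
  rw [Xr]
  nlinarith

lemma fib_cast_nonneg (i : ℕ) : 0 ≤ fR i := by rw [fR]; positivity

lemma fib_cast_mono (i : ℕ) : fR (i + 1) ≤ fR (i + 2) := by
  rw [fR, fR]
  exact_mod_cast Nat.fib_le_fib_succ

/-- mean estimate -/
lemma mean_est (m : ℕ) :
    |(∑ S ∈ CF m, Xr S) - (m : ℝ) ^ 2 / 10 * ((CF m).card : ℝ)| ≤
      ((m : ℝ) + 1) * ((CF m).card : ℝ) := by
  obtain ⟨g0, _, _, p0, _, _⟩ := closed_forms m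
  rw [g0]
  have hF12 := fib_cast_mono m
  have hF1 := fib_cast_nonneg (m + 1)
  have hF2 := fib_cast_nonneg (m + 2)
  have hm : (0 : ℝ) ≤ (m : ℝ) := Nat.cast_nonneg m
  rw [abs_le]
  constructor
  · nlinarith [mul_nonneg (by nlinarith : (0:ℝ) ≤ 6 * (m:ℝ) + 12) (sub_nonneg.2 hF12)]
  · nlinarith [mul_nonneg (by nlinarith : (0:ℝ) ≤ 6 * (m:ℝ) + 12) hF1]

/-- variance estimate -/
lemma var_est (m : ℕ) :
    (∑ S ∈ CF m, Xr S ^ 2) * ((CF m).card : ℝ) - (∑ S ∈ CF m, Xr S) ^ 2 ≤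
      ((m : ℝ) + 1) ^ 3 * ((CF m).card : ℝ) ^ 2 := by
  obtain ⟨g0, _, _, p0, _, q0⟩ := closed_forms m
  rw [g0]
  set F2 := fR (m + 2)
  set F1 := fR (m + 1)
  have hF12 : F1 ≤ F2 := fib_cast_mono m
  have hF1 : 0 ≤ F1 := fib_cast_nonneg (m + 1)
  have hF2 : 0 ≤ F2 := fib_cast_nonneg (m + 2)
  have hm : (0 : ℝ) ≤ (m : ℝ) := Nat.cast_nonneg m
  set P := ∑ S ∈ CF m, Xr S
  set Q := ∑ S ∈ CF m, Xr S ^ 2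
  have key : 7500 * (Q * F2 - P ^ 2) =
      (40 * (m:ℝ)^3 + 348 * (m:ℝ)^2 + 836 * (m:ℝ) + 528) * F2 ^ 2
      + (80 * (m:ℝ)^3 + 372 * (m:ℝ)^2 + 376 * (m:ℝ) - 96) * (F1 * F2)
      - (108 * (m:ℝ)^2 + 432 * (m:ℝ) + 432) * F1 ^ 2 := by
    linear_combination (5 * F2) * q0
      - 3 * (50 * P + ((5 * (m:ℝ)^2 + 17 * (m:ℝ) + 12) * F2 - (6 * (m:ℝ) + 12) * F1)) * p0
  nlinarith [key,
    mul_nonneg (mul_nonneg hF2 (sub_nonneg.2 hF12))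
      (by nlinarith : (0:ℝ) ≤ 80 * (m:ℝ)^3 + 372 * (m:ℝ)^2 + 376 * (m:ℝ)),
    mul_nonneg hF1 hF2,
    mul_nonneg hF1 hF1,
    mul_nonneg hF2 hF2,
    mul_nonneg (mul_nonneg hm hF2) hF2,
    mul_nonneg (mul_nonneg (mul_nonneg hm hm) hF2) hF2,
    mul_nonneg (mul_nonneg (mul_nonneg (mul_nonneg hm hm) hm) hF2) hF2,
    mul_nonneg (sq_nonneg F1) (by nlinarith : (0:ℝ) ≤ 108 * (m:ℝ)^2 + 432 * (m:ℝ) + 432)]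

set_option maxHeartbeats 2000000 in
lemma moments_est (k n : ℕ) (hk : 1 ≤ k) (hn : 2 ≤ n) :
    |(∑ S ∈ CF (n - 1), Xr S ^ k) / ((CF (n - 1)).card : ℝ) - ((n : ℝ) ^ 2 / 10) ^ k|
      ≤ ((k : ℝ) ^ 2 + 2 * (k : ℝ)) * (n : ℝ) ^ (2 * k - 1) := by
  set m := n - 1 with hm
  have hmn : (m : ℝ) = (n : ℝ) - 1 := by
    rw [hm]
    push_cast [Nat.cast_sub (by omega : 1 ≤ n)]
    ring
  have hn1 : (1 : ℝ) ≤ (n : ℝ) := by exact_mod_cast (by omega : 1 ≤ n)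
  have hn0 : (0 : ℝ) ≤ (n : ℝ) := by linarith
  set G : ℝ := ((CF m).card : ℝ) with hG
  have hGpos : 0 < G := by
    rw [hG]
    exact_mod_cast CF_card_pos m
  set P : ℝ := ∑ S ∈ CF m, Xr S with hP
  set Q : ℝ := ∑ S ∈ CF m, Xr S ^ 2 with hQ
  set Mb : ℝ := (n : ℝ) ^ 2 with hMb
  have hMb0 : 0 ≤ Mb := by rw [hMb]; positivity
  have hXle : ∀ S ∈ CF m, Xr S ≤ Mb := by
    intro S hS
    have h1 := Xr_le hS
    have h2 : (m : ℝ) ^ 2 ≤ Mb := by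
      rw [hMb, hmn]
      nlinarith
    linarith
  have hX0 : ∀ S ∈ CF m, 0 ≤ Xr S := fun S hS => Xr_nonneg hS
  have hP0 : 0 ≤ P := Finset.sum_nonneg hX0
  have hPle : P ≤ G * Mb := by
    rw [hP, hG]
    calc ∑ S ∈ CF m, Xr S ≤ (CF m).card • Mb := Finset.sum_le_card_nsmul _ _ _ hXle
      _ = ((CF m).card : ℝ) * Mb := by rw [nsmul_eq_mul]
  set μ : ℝ := P / G with hμdef
  have hμ0 : 0 ≤ μ := div_nonneg hP0 (le_of_lt hGpos)
  have hμM : μ ≤ Mb := by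
    rw [hμdef, div_le_iff₀ hGpos]
    linarith [hPle, mul_comm G Mb]
  -- mean deviation
  have hmean : |μ - (m : ℝ) ^ 2 / 10| ≤ (m : ℝ) + 1 := by
    have h1 : μ - (m : ℝ) ^ 2 / 10 = (P - (m : ℝ) ^ 2 / 10 * G) / G := by
      rw [hμdef]
      field_simp
    rw [h1, abs_div, abs_of_pos hGpos, div_le_iff₀ hGpos]
    calc |P - (m : ℝ) ^ 2 / 10 * G| ≤ ((m : ℝ) + 1) * G := mean_est m
      _ = ((m : ℝ) + 1) * G := rfl
  set T : ℝ := (n : ℝ) ^ 2 / 10 with hT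
  have hT0 : 0 ≤ T := by rw [hT]; positivity
  have hTM : T ≤ Mb := by rw [hT, hMb]; nlinarith
  have hμT : |μ - T| ≤ 2 * (n : ℝ) := by
    have h2 : |(m : ℝ) ^ 2 / 10 - T| ≤ (n : ℝ) := by
      rw [hT, hmn, abs_le]
      constructor <;> nlinarith
    calc |μ - T| = |(μ - (m : ℝ) ^ 2 / 10) + ((m : ℝ) ^ 2 / 10 - T)| := by
          rw [sub_add_sub_cancel]
      _ ≤ |μ - (m : ℝ) ^ 2 / 10| + |(m : ℝ) ^ 2 / 10 - T| := abs_add_le _ _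
      _ ≤ ((m : ℝ) + 1) + (n : ℝ) := add_le_add hmean h2
      _ ≤ 2 * (n : ℝ) := by rw [hmn]; linarith
  -- second: |μ^k - T^k|
  have hpow : |μ ^ k - T ^ k| ≤ (k : ℝ) * Mb ^ (k - 1) * (2 * (n : ℝ)) := by
    calc |μ ^ k - T ^ k| ≤ (k : ℝ) * Mb ^ (k - 1) * |μ - T| :=
          abs_pow_sub_pow_le' k hμ0 hμM hT0 hTM
      _ ≤ (k : ℝ) * Mb ^ (k - 1) * (2 * (n : ℝ)) := by
          apply mul_le_mul_of_nonneg_left hμT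
          positivity
  rcases Nat.lt_or_ge k 2 with hk2 | hk2
  · -- k = 1
    have hk1 : k = 1 := by omega
    subst hk1
    have hA : (∑ S ∈ CF m, Xr S ^ 1) = P := by
      rw [hP]
      apply Finset.sum_congr rfl
      intro S _
      rw [pow_one]
    rw [hA]
    calc |P / G - T ^ 1| = |μ - T| := by rw [hμdef, pow_one]
      _ ≤ 2 * (n : ℝ) := hμT
      _ ≤ ((1 : ℝ) ^ 2 + 2 * 1) * (n : ℝ) ^ (2 * 1 - 1) := by
          norm_num
          linarith
      _ = (((1 : ℕ) : ℝ) ^ 2 + 2 * ((1 : ℕ) : ℝ)) * (n : ℝ) ^ (2 * 1 - 1) := by norm_num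
  · -- k ≥ 2
    obtain ⟨j, rfl⟩ : ∃ j, k = j + 2 := ⟨k - 2, by omega⟩
    -- centered sum
    have hsumdev : ∑ S ∈ CF m, (Xr S - μ) = 0 := by
      rw [Finset.sum_sub_distrib, Finset.sum_const, nsmul_eq_mul, ← hP, ← hG, hμdef]
      field_simp
      ring
    have hsumsq : ∑ S ∈ CF m, (Xr S - μ) ^ 2 = Q - P ^ 2 / G := by
      have hpt : ∀ S ∈ CF m, (Xr S - μ) ^ 2 = Xr S ^ 2 - (2 * μ) * Xr S + μ ^ 2 :=
        fun S _ => by ring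
      rw [Finset.sum_congr rfl hpt]
      rw [Finset.sum_add_distrib, Finset.sum_sub_distrib, ← Finset.mul_sum,
        Finset.sum_const, nsmul_eq_mul, ← hP, ← hQ, ← hG, hμdef]
      field_simp
      ring
    have hsplit : (∑ S ∈ CF m, Xr S ^ (j + 2)) - G * μ ^ (j + 2)
        = ∑ S ∈ CF m, (Xr S ^ (j + 2) - μ ^ (j + 2)
            - ((j : ℝ) + 2) * μ ^ (j + 1) * (Xr S - μ)) := by
      rw [Finset.sum_sub_distrib, Finset.sum_sub_distrib, ← Finset.mul_sum, hsumdev,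
        Finset.sum_const, nsmul_eq_mul, ← hG]
      ring
    have habs : |(∑ S ∈ CF m, Xr S ^ (j + 2)) - G * μ ^ (j + 2)|
        ≤ (((j : ℝ) + 2) * ((j : ℝ) + 1) / 2) * Mb ^ j * (Q - P ^ 2 / G) := by
      rw [hsplit]
      calc |∑ S ∈ CF m, (Xr S ^ (j + 2) - μ ^ (j + 2)
              - ((j : ℝ) + 2) * μ ^ (j + 1) * (Xr S - μ))|
          ≤ ∑ S ∈ CF m, |Xr S ^ (j + 2) - μ ^ (j + 2)
              - ((j : ℝ) + 2) * μ ^ (j + 1) * (Xr S - μ)| := Finset.abs_sum_le_sum_abs _ _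
        _ ≤ ∑ S ∈ CF m, (((j : ℝ) + 2) * ((j : ℝ) + 1) / 2) * Mb ^ j * (Xr S - μ) ^ 2 := by
            apply Finset.sum_le_sum
            intro S hS
            exact abs_taylor2 j (hX0 S hS) (hXle S hS) hμ0 hμM
        _ = (((j : ℝ) + 2) * ((j : ℝ) + 1) / 2) * Mb ^ j * ∑ S ∈ CF m, (Xr S - μ) ^ 2 := by
            rw [← Finset.mul_sum]
        _ = (((j : ℝ) + 2) * ((j : ℝ) + 1) / 2) * Mb ^ j * (Q - P ^ 2 / G) := by
            rw [hsumsq]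
    have hVarG : Q - P ^ 2 / G ≤ ((n : ℝ)) ^ 3 * G := by
      have h1 := var_est m
      rw [← hP, ← hQ, ← hG] at h1
      have h2 : ((m : ℝ) + 1) ^ 3 = (n : ℝ) ^ 3 := by rw [hmn]; ring
      rw [h2] at h1
      have h3 : Q - P ^ 2 / G = (Q * G - P ^ 2) / G := by
        field_simp
      rw [h3, div_le_iff₀ hGpos]
      nlinarith
    have hAdivG : |(∑ S ∈ CF m, Xr S ^ (j + 2)) / G - μ ^ (j + 2)|
        ≤ (((j : ℝ) + 2) * ((j : ℝ) + 1) / 2) * Mb ^ j * ((n : ℝ)) ^ 3 := by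
      have heq : (∑ S ∈ CF m, Xr S ^ (j + 2)) / G - μ ^ (j + 2)
          = ((∑ S ∈ CF m, Xr S ^ (j + 2)) - G * μ ^ (j + 2)) / G := by
        field_simp
      rw [heq, abs_div, abs_of_pos hGpos, div_le_iff₀ hGpos]
      calc |(∑ S ∈ CF m, Xr S ^ (j + 2)) - G * μ ^ (j + 2)|
          ≤ (((j : ℝ) + 2) * ((j : ℝ) + 1) / 2) * Mb ^ j * (Q - P ^ 2 / G) := habs
        _ ≤ (((j : ℝ) + 2) * ((j : ℝ) + 1) / 2) * Mb ^ j * (((n : ℝ)) ^ 3 * G) := by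
            apply mul_le_mul_of_nonneg_left hVarG
            positivity
        _ = (((j : ℝ) + 2) * ((j : ℝ) + 1) / 2) * Mb ^ j * ((n : ℝ)) ^ 3 * G := by ring
    -- exponent bookkeeping
    have hj21 : j + 2 - 1 = j + 1 := rfl
    have hexp1 : Mb ^ j * (n : ℝ) ^ 3 = (n : ℝ) ^ (2 * (j + 2) - 1) := by
      have h1 : 2 * (j + 2) - 1 = 2 * j + 3 := by omega
      rw [h1, hMb, ← pow_mul, ← pow_add]
    have hexp2 : Mb ^ (j + 1) * (2 * (n : ℝ)) = 2 * (n : ℝ) ^ (2 * (j + 2) - 1) := by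
      have h1 : 2 * (j + 2) - 1 = 2 * (j + 1) + 1 := by omega
      rw [h1, hMb, ← pow_mul, pow_succ]
      ring
    calc |(∑ S ∈ CF m, Xr S ^ (j + 2)) / G - T ^ (j + 2)|
        ≤ |(∑ S ∈ CF m, Xr S ^ (j + 2)) / G - μ ^ (j + 2)| + |μ ^ (j + 2) - T ^ (j + 2)| := by
          have := abs_add_le ((∑ S ∈ CF m, Xr S ^ (j + 2)) / G - μ ^ (j + 2))
            (μ ^ (j + 2) - T ^ (j + 2))
          simpa using this
      _ ≤ (((j : ℝ) + 2) * ((j : ℝ) + 1) / 2) * Mb ^ j * ((n : ℝ)) ^ 3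
          + ((j + 2 : ℕ) : ℝ) * Mb ^ (j + 2 - 1) * (2 * (n : ℝ)) := add_le_add hAdivG hpow
      _ = (((j : ℝ) + 2) * ((j : ℝ) + 1) / 2) * (Mb ^ j * (n : ℝ) ^ 3)
          + ((j : ℝ) + 2) * (Mb ^ (j + 1) * (2 * (n : ℝ))) := by
          simp only [hj21]
          push_cast
          ring
      _ = (((j : ℝ) + 2) * ((j : ℝ) + 1) / 2) * (n : ℝ) ^ (2 * (j + 2) - 1)
          + ((j : ℝ) + 2) * (2 * (n : ℝ) ^ (2 * (j + 2) - 1)) := by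
          rw [hexp1, hexp2]
      _ ≤ (((j + 2 : ℕ) : ℝ) ^ 2 + 2 * ((j + 2 : ℕ) : ℝ)) * (n : ℝ) ^ (2 * (j + 2) - 1) := by
          push_cast
          have hpow_nonneg : 0 ≤ (n : ℝ) ^ (2 * (j + 2) - 1) := by positivity
          nlinarith [hpow_nonneg, sq_nonneg ((j : ℝ)), Nat.cast_nonneg (α := ℝ) j]

lemma main_sum_eq_pow {n k : ℕ} (hn : 1 ≤ n) :
    (∑ᶠ Y ∈ {Y : YoungDiagram | DistinctParts Y ∧ IsCore Y n ∧ IsCore Y (n + 1)},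
      ((Y.card : ℝ)) ^ k) = ∑ S ∈ CF (n - 1), (Xr S) ^ k := by
  rw [setEq hn, finsum_mem_coe_finset, Finset.sum_image (by
    intro S hS S' hS' h
    exact con_injOn (Finset.mem_coe.2 hS) (Finset.mem_coe.2 hS') h)]
  apply Finset.sum_congr rfl
  intro S hS
  rw [con_card hS]

theorem stmt19 (k : ℕ) (hk : 1 ≤ k) :
    (fun n : ℕ =>
        (∑ᶠ Y ∈ {Y : YoungDiagram | DistinctParts Y ∧ IsCore Y n ∧ IsCore Y (n + 1)},
            ((Y.card : ℝ)) ^ k) /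
            (({Y : YoungDiagram | DistinctParts Y ∧ IsCore Y n ∧ IsCore Y (n + 1)}.ncard : ℝ)) -
          ((n : ℝ) ^ 2 / 10) ^ k) =O[Filter.atTop]
      (fun n : ℕ => (n : ℝ) ^ (2 * k - 1)) := by
  rw [Asymptotics.isBigO_iff]
  refine ⟨(k : ℝ) ^ 2 + 2 * (k : ℝ), ?_⟩
  filter_upwards [Filter.eventually_ge_atTop 2] with n hn
  have h1 : 1 ≤ n := by omega
  show ‖(∑ᶠ Y ∈ {Y : YoungDiagram | DistinctParts Y ∧ IsCore Y n ∧ IsCore Y (n + 1)},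
      ((Y.card : ℝ)) ^ k) /
      (({Y : YoungDiagram | DistinctParts Y ∧ IsCore Y n ∧ IsCore Y (n + 1)}.ncard : ℝ)) -
      ((n : ℝ) ^ 2 / 10) ^ k‖ ≤ ((k : ℝ) ^ 2 + 2 * (k : ℝ)) * ‖(n : ℝ) ^ (2 * k - 1)‖
  rw [main_sum_eq_pow h1, main_ncard_eq h1]
  rw [Real.norm_eq_abs, Real.norm_eq_abs]
  have h2 := moments_est k n hk hn
  apply le_trans h2
  rw [abs_of_nonneg (by positivity : (0 : ℝ) ≤ (n : ℝ) ^ (2 * k - 1))]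
end
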